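/- arXiv:2205.14632 — 6 statements merged into one kernel-verified Lean document; each statement's English description precedes it below -/
import Mathlib

section
/- Let (Ω, F, P) be a probability space, let ξ and η be real-valued random variables on it, and let a > 0. Then sup_{z ∈ ℝ} |P(ξ + η ≤ z) − Φ(z)| ≤ sup_{z ∈ ℝ} |P(ξ ≤ z) − Φ(z)| + P(|η| > a) + a/√(2π). -/
open MeasureTheory

/-- The cumulative distribution function of the standard normal distribution. -/
noncomputable def stdNormalCDF (z : ℝ) : ℝ :=
  ∫ x in Set.Iic z, Real.exp (-x ^ 2 / 2) / Real.sqrt (2 * Real.pi)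

lemma stdNormal_density_integrable :
    Integrable (fun x : ℝ => Real.exp (-x ^ 2 / 2) / Real.sqrt (2 * Real.pi)) := by
  have h : Integrable (fun x : ℝ => Real.exp (-(1/2) * x ^ 2)) :=
    integrable_exp_neg_mul_sq (by norm_num)
  exact (h.div_const (Real.sqrt (2 * Real.pi))).congr
    (Filter.Eventually.of_forall fun x => by ring_nf)

lemma stdNormal_density_nonneg (x : ℝ) :
    0 ≤ Real.exp (-x ^ 2 / 2) / Real.sqrt (2 * Real.pi) :=
  div_nonneg (Real.exp_nonneg _) (Real.sqrt_nonneg _)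

lemma stdNormal_density_le (x : ℝ) :
    Real.exp (-x ^ 2 / 2) / Real.sqrt (2 * Real.pi) ≤ 1 / Real.sqrt (2 * Real.pi) := by
  have h1 : Real.exp (-x ^ 2 / 2) ≤ 1 := by
    rw [Real.exp_le_one_iff]
    nlinarith [sq_nonneg x]
  have h2 : (0:ℝ) < Real.sqrt (2 * Real.pi) := Real.sqrt_pos.mpr (by positivity)
  gcongr

lemma stdNormalCDF_nonneg (z : ℝ) : 0 ≤ stdNormalCDF z :=
  setIntegral_nonneg measurableSet_Iic fun x _ => stdNormal_density_nonneg x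

lemma stdNormalCDF_le_one (z : ℝ) : stdNormalCDF z ≤ 1 := by
  have h := setIntegral_le_integral (μ := volume) stdNormal_density_integrable
    (Filter.Eventually.of_forall stdNormal_density_nonneg) (s := Set.Iic z)
  have heq : ∫ x : ℝ, Real.exp (-x ^ 2 / 2) / Real.sqrt (2 * Real.pi) = 1 := by
    rw [integral_div]
    have : ∫ x : ℝ, Real.exp (-x ^ 2 / 2) = ∫ x : ℝ, Real.exp (-(1/2) * x ^ 2) := by
      congr 1; funext x; ring_nf
    rw [this, integral_gaussian]
    rw [div_eq_one_iff_eq (by positivity)]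
    congr 1
    rw [div_div_eq_mul_div, div_one, mul_comm]
  calc stdNormalCDF z ≤ _ := h
    _ = 1 := heq

lemma stdNormalCDF_add_le (z b : ℝ) (hb : 0 ≤ b) :
    stdNormalCDF (z + b) ≤ stdNormalCDF z + b / Real.sqrt (2 * Real.pi) := by
  have hint := stdNormal_density_integrable
  have hdiff : stdNormalCDF (z + b) - stdNormalCDF z
      = ∫ x in z..(z + b), Real.exp (-x ^ 2 / 2) / Real.sqrt (2 * Real.pi) := by
    rw [← intervalIntegral.integral_Iic_sub_Iic hint.integrableOn hint.integrableOn]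
    rfl
  have hbound : |∫ x in z..(z + b), Real.exp (-x ^ 2 / 2) / Real.sqrt (2 * Real.pi)|
      ≤ (1 / Real.sqrt (2 * Real.pi)) * |z + b - z| := by
    have := intervalIntegral.norm_integral_le_of_norm_le_const
      (a := z) (b := z + b) (C := 1 / Real.sqrt (2 * Real.pi))
      (f := fun x => Real.exp (-x ^ 2 / 2) / Real.sqrt (2 * Real.pi))
      (fun x _ => by
        rw [Real.norm_eq_abs, abs_of_nonneg (stdNormal_density_nonneg x)]
        exact stdNormal_density_le x)
    simpa only [Real.norm_eq_abs] using this
  have : stdNormalCDF (z + b) - stdNormalCDF z ≤ b / Real.sqrt (2 * Real.pi) := by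
    rw [hdiff]
    calc _ ≤ |∫ x in z..(z + b), Real.exp (-x ^ 2 / 2) / Real.sqrt (2 * Real.pi)| :=
          le_abs_self _
      _ ≤ (1 / Real.sqrt (2 * Real.pi)) * |z + b - z| := hbound
      _ = b / Real.sqrt (2 * Real.pi) := by
          rw [add_sub_cancel_left, abs_of_nonneg hb]; ring
  linarith

/-- Lemma 2.9 (Chang): Berry–Esséen bound for a sum of two random variables. -/
theorem berry_esseen_sum {Ω : Type*} [MeasurableSpace Ω] (P : Measure Ω)
    [IsProbabilityMeasure P] (ξ η : Ω → ℝ) (hξ : Measurable ξ) (hη : Measurable η)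
    (a : ℝ) (ha : 0 < a) :
    (⨆ z : ℝ, |(P {ω | ξ ω + η ω ≤ z}).toReal - stdNormalCDF z|) ≤
      (⨆ z : ℝ, |(P {ω | ξ ω ≤ z}).toReal - stdNormalCDF z|)
        + (P {ω | a < |η ω|}).toReal + a / Real.sqrt (2 * Real.pi) := by
  set M := ⨆ z : ℝ, |(P {ω | ξ ω ≤ z}).toReal - stdNormalCDF z| with hM
  set ε := (P {ω | a < |η ω|}).toReal with hε
  set δ := a / Real.sqrt (2 * Real.pi) with hδ
  have hPle : ∀ s : Set Ω, (P s).toReal ≤ 1 := fun s => by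
    rw [← ENNReal.toReal_one]
    exact ENNReal.toReal_mono ENNReal.one_ne_top prob_le_one
  have hPnonneg : ∀ s : Set Ω, 0 ≤ (P s).toReal := fun s => ENNReal.toReal_nonneg
  have hbdd : BddAbove (Set.range fun z : ℝ => |(P {ω | ξ ω ≤ z}).toReal - stdNormalCDF z|) := by
    refine ⟨1, ?_⟩
    rintro x ⟨z, rfl⟩
    rw [abs_sub_le_iff]
    constructor
    · linarith [hPle {ω | ξ ω ≤ z}, stdNormalCDF_nonneg z]
    · linarith [hPnonneg {ω | ξ ω ≤ z}, stdNormalCDF_le_one z]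
  have hMle : ∀ z : ℝ, |(P {ω | ξ ω ≤ z}).toReal - stdNormalCDF z| ≤ M :=
    fun z => le_ciSup hbdd z
  -- subadditivity in ℝ
  have hsub : ∀ A B C : Set Ω, A ⊆ B ∪ C → (P A).toReal ≤ (P B).toReal + (P C).toReal := by
    intro A B C hABC
    have h1 : P A ≤ P B + P C := (measure_mono hABC).trans (measure_union_le _ _)
    have h2 := ENNReal.toReal_mono
      (ENNReal.add_ne_top.mpr ⟨measure_ne_top P B, measure_ne_top P C⟩) h1
    rwa [ENNReal.toReal_add (measure_ne_top P B) (measure_ne_top P C)] at h2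
  apply ciSup_le
  intro z
  have hup : (P {ω | ξ ω + η ω ≤ z}).toReal ≤ (P {ω | ξ ω ≤ z + a}).toReal + ε := by
    apply hsub
    intro ω hω
    simp only [Set.mem_setOf_eq, Set.mem_union] at hω ⊢
    by_cases h : a < |η ω|
    · exact Or.inr h
    · push_neg at h
      left
      have := abs_le.mp h
      linarith
  have hdown : (P {ω | ξ ω ≤ z - a}).toReal ≤ (P {ω | ξ ω + η ω ≤ z}).toReal + ε := by
    apply hsub
    intro ω hω
    simp only [Set.mem_setOf_eq, Set.mem_union] at hω ⊢
    by_cases h : a < |η ω|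
    · exact Or.inr h
    · push_neg at h
      left
      have := abs_le.mp h
      linarith
  have hΦup : stdNormalCDF (z + a) ≤ stdNormalCDF z + δ := stdNormalCDF_add_le z a ha.le
  have hΦdown : stdNormalCDF z ≤ stdNormalCDF (z - a) + δ := by
    have h3 := stdNormalCDF_add_le (z - a) a ha.le
    rw [sub_add_cancel] at h3
    exact h3
  have h1 := abs_le.mp (hMle (z + a))
  have h2 := abs_le.mp (hMle (z - a))
  rw [abs_le]
  constructor
  · linarith [h2.1]
  · linarith [h1.2]
end

section
/- For every T > 0 and every bounded measurable symmetric function φ on [0,T]², one has |∥φ∥²_{H^{⊗2}} − ∥φ∥²_{H₁^{⊗2}}| ≤ ∥φ∥²_{H₂^{⊗2}} + 2 C'_β ∥Kφ∥²_{H₁}. -/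
open MeasureTheory Set

lemma absRpow_intervalIntegrable {r : ℝ} (hr : -1 < r) (u v : ℝ) :
    IntervalIntegrable (fun x : ℝ => |x| ^ r) volume u v := by
  have H : ∀ c : ℝ, 0 ≤ c → IntervalIntegrable (fun x : ℝ => |x| ^ r) volume 0 c := by
    intro c hc
    refine (intervalIntegral.intervalIntegrable_rpow' hr (a := 0) (b := c)).congr ?_
    rw [uIoc_of_le hc]
    intro x hx
    simp only [abs_of_pos hx.1]
  have Hall : ∀ c : ℝ, IntervalIntegrable (fun x : ℝ => |x| ^ r) volume 0 c := by
    intro c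
    rcases le_or_gt 0 c with h | h
    · exact H c h
    · have h2 := (IntervalIntegrable.iff_comp_neg (by simp)).mp (H (-c) (by linarith))
      simpa [abs_neg] using h2
  exact (Hall u).symm.trans (Hall v)

lemma subRpow_intervalIntegrable {r : ℝ} (hr : -1 < r) (c u v : ℝ) :
    IntervalIntegrable (fun t : ℝ => |c - t| ^ r) volume u v := by
  have h := (absRpow_intervalIntegrable hr (c - u) (c - v)).comp_sub_left c
  simpa using h

lemma subRpow_integrableOn {r : ℝ} (hr : -1 < r) (c T : ℝ) (hT : 0 ≤ T) :
    IntegrableOn (fun t : ℝ => |c - t| ^ r) (Set.Ioc 0 T) volume :=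
  (intervalIntegrable_iff_integrableOn_Ioc_of_le hT).mp (subRpow_intervalIntegrable hr c 0 T)

lemma rpow_integrableOn {r : ℝ} (hr : -1 < r) (T : ℝ) (hT : 0 ≤ T) :
    IntegrableOn (fun t : ℝ => t ^ r) (Set.Ioc 0 T) volume :=
  (intervalIntegrable_iff_integrableOn_Ioc_of_le hT).mp (intervalIntegral.intervalIntegrable_rpow' hr)

lemma subRpow_integral_le {r T : ℝ} (hr : -1 < r) (hT : 0 < T) {c : ℝ}
    (hc : c ∈ Set.Icc 0 T) :
    ∫ t in Set.Ioc (0:ℝ) T, |c - t| ^ r ≤ 2 * T ^ (r + 1) / (r + 1) := by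
  have hr1 : 0 < r + 1 := by linarith
  rw [← intervalIntegral.integral_of_le hT.le]
  have e0 : ∫ t in (0:ℝ)..T, |c - t| ^ r = ∫ t in (0:ℝ)..T, |t - c| ^ r :=
    intervalIntegral.integral_congr fun x _ => by rw [abs_sub_comm]
  have e1 : ∫ t in (0:ℝ)..T, |t - c| ^ r = ∫ x in (0:ℝ) - c..T - c, |x| ^ r :=
    intervalIntegral.integral_comp_sub_right (fun x : ℝ => |x| ^ r) c
  have e2 : ∫ x in (0:ℝ) - c..T - c, |x| ^ r ≤ ∫ x in (-T)..T, |x| ^ r := by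
    refine intervalIntegral.integral_mono_interval (by simp; linarith [hc.2]) (by linarith [hT.le])
      (by linarith [hc.1]) ?_ (absRpow_intervalIntegrable hr _ _)
    filter_upwards with x
    exact Real.rpow_nonneg (abs_nonneg _) _
  have e3 : ∫ x in (-T)..(0:ℝ), |x| ^ r = ∫ x in (0:ℝ)..T, |x| ^ r := by
    have := intervalIntegral.integral_comp_neg (a := (0:ℝ)) (b := T) (fun x : ℝ => |x| ^ r)
    simp only [abs_neg, neg_zero] at this
    exact this.symm
  have e4 : ∫ x in (-T)..T, |x| ^ r = 2 * ∫ x in (0:ℝ)..T, x ^ r := by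
    rw [← intervalIntegral.integral_add_adjacent_intervals (absRpow_intervalIntegrable hr (-T) 0)
      (absRpow_intervalIntegrable hr 0 T), e3]
    have e5 : ∫ x in (0:ℝ)..T, |x| ^ r = ∫ x in (0:ℝ)..T, x ^ r := by
      refine intervalIntegral.integral_congr fun x hx => ?_
      rw [uIcc_of_le hT.le] at hx
      rw [abs_of_nonneg hx.1]
    rw [e5]; ring
  have e6 : ∫ x in (0:ℝ)..T, x ^ r = T ^ (r + 1) / (r + 1) := by
    rw [integral_rpow (Or.inl hr), Real.zero_rpow hr1.ne']
    ring
  rw [e0, e1]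
  calc ∫ x in (0:ℝ) - c..T - c, |x| ^ r ≤ ∫ x in (-T)..T, |x| ^ r := e2
    _ = 2 * (T ^ (r + 1) / (r + 1)) := by rw [e4, e6]
    _ = 2 * T ^ (r + 1) / (r + 1) := by ring

lemma abs_int_le {α : Type*} [MeasurableSpace α] (μ : Measure α) (f : α → ℝ) :
    |∫ x, f x ∂μ| ≤ ∫ x, |f x| ∂μ := by
  simpa [Real.norm_eq_abs] using norm_integral_le_integral_norm (μ := μ) f

lemma ae_prod_mem {μ ν : Measure ℝ} [SFinite μ] [SFinite ν] {S : Set ℝ}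
    (h1 : ∀ᵐ x ∂μ, x ∈ S) (h2 : ∀ᵐ x ∂ν, x ∈ S) :
    ∀ᵐ w : ℝ × ℝ ∂(μ.prod ν), w.1 ∈ S ∧ w.2 ∈ S := by
  rw [ae_iff] at h1 h2
  have n1 : (μ.prod ν) {w : ℝ × ℝ | w.1 ∉ S} = 0 := by
    have e : {w : ℝ × ℝ | w.1 ∉ S} = {x | x ∉ S} ×ˢ (univ : Set ℝ) := by
      ext w; simp [Set.mem_prod]
    rw [e, Measure.prod_prod, h1, zero_mul]
  have n2 : (μ.prod ν) {w : ℝ × ℝ | w.2 ∉ S} = 0 := by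
    have e : {w : ℝ × ℝ | w.2 ∉ S} = (univ : Set ℝ) ×ˢ {x | x ∉ S} := by
      ext w; simp [Set.mem_prod]
    rw [e, Measure.prod_prod, h2, mul_zero]
  have e1 : ∀ᵐ w : ℝ × ℝ ∂(μ.prod ν), w.1 ∈ S := by rw [ae_iff]; exact n1
  have e2 : ∀ᵐ w : ℝ × ℝ ∂(μ.prod ν), w.2 ∈ S := by rw [ae_iff]; exact n2
  exact e1.and e2

lemma ae_fst_ne {μ ν : Measure ℝ} [SFinite μ] [SFinite ν] (c : ℝ) (h : μ {c} = 0) :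
    ∀ᵐ v : ℝ × ℝ ∂(μ.prod ν), v.1 ≠ c := by
  rw [ae_iff]
  have e : {v : ℝ × ℝ | ¬v.1 ≠ c} = ({c} : Set ℝ) ×ˢ (univ : Set ℝ) := by
    ext v; simp [Set.mem_prod, Prod.ext_iff, eq_comm]
  rw [e, Measure.prod_prod, h, zero_mul]

lemma ae_snd_ne {μ ν : Measure ℝ} [SFinite μ] [SFinite ν] (c : ℝ) (h : ν {c} = 0) :
    ∀ᵐ v : ℝ × ℝ ∂(μ.prod ν), v.2 ≠ c := by
  rw [ae_iff]
  have e : {v : ℝ × ℝ | ¬v.2 ≠ c} = (univ : Set ℝ) ×ˢ ({c} : Set ℝ) := by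
    ext v; simp [Set.mem_prod, Prod.ext_iff, eq_comm]
  rw [e, Measure.prod_prod, h, mul_zero]

lemma pointwise_bound {Cβ Cβ' p q dt ds kt ks pt ps : ℝ}
    (hCβ : 0 ≤ Cβ) (hkt : 0 ≤ kt) (hks : 0 ≤ ks) (hpt : 0 ≤ pt) (hps : 0 ≤ ps)
    (het : |dt - Cβ * kt| ≤ Cβ' * pt) (hes : |ds - Cβ * ks| ≤ Cβ' * ps) :
    |p * q * dt * ds - Cβ ^ 2 * (p * q * kt * ks)|
      ≤ Cβ * Cβ' * (|p * q| * kt * ps) + (Cβ * Cβ' * (|p * q| * pt * ks)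
        + Cβ' ^ 2 * (|p * q| * pt * ps)) := by
  have key : dt * ds - Cβ ^ 2 * (kt * ks)
      = Cβ * kt * (ds - Cβ * ks) + ((dt - Cβ * kt) * (Cβ * ks)
        + (dt - Cβ * kt) * (ds - Cβ * ks)) := by ring
  have t1 : |Cβ * kt * (ds - Cβ * ks)| ≤ Cβ * kt * (Cβ' * ps) := by
    rw [abs_mul, abs_of_nonneg (mul_nonneg hCβ hkt)]
    exact mul_le_mul_of_nonneg_left hes (mul_nonneg hCβ hkt)
  have t2 : |(dt - Cβ * kt) * (Cβ * ks)| ≤ Cβ' * pt * (Cβ * ks) := by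
    rw [abs_mul, abs_of_nonneg (mul_nonneg hCβ hks)]
    exact mul_le_mul_of_nonneg_right het (mul_nonneg hCβ hks)
  have t3 : |(dt - Cβ * kt) * (ds - Cβ * ks)| ≤ Cβ' * pt * (Cβ' * ps) := by
    rw [abs_mul]
    exact mul_le_mul het hes (abs_nonneg _) (le_trans (abs_nonneg _) het)
  have h0 : |dt * ds - Cβ ^ 2 * (kt * ks)|
      ≤ Cβ * kt * (Cβ' * ps) + (Cβ' * pt * (Cβ * ks) + Cβ' * pt * (Cβ' * ps)) := by
    rw [key]
    exact (abs_add_le _ _).trans (add_le_add t1 ((abs_add_le _ _).trans (add_le_add t2 t3)))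
  have e : p * q * dt * ds - Cβ ^ 2 * (p * q * kt * ks)
      = (p * q) * (dt * ds - Cβ ^ 2 * (kt * ks)) := by ring
  calc |p * q * dt * ds - Cβ ^ 2 * (p * q * kt * ks)|
      = |p * q| * |dt * ds - Cβ ^ 2 * (kt * ks)| := by rw [e, abs_mul]
    _ ≤ |p * q| * (Cβ * kt * (Cβ' * ps) + (Cβ' * pt * (Cβ * ks) + Cβ' * pt * (Cβ' * ps))) :=
        mul_le_mul_of_nonneg_left h0 (abs_nonneg _)
    _ = Cβ * Cβ' * (|p * q| * kt * ps) + (Cβ * Cβ' * (|p * q| * pt * ks)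
        + Cβ' ^ 2 * (|p * q| * pt * ps)) := by ring

lemma prod_bound_helper {M C p1 p2 u v X Y : ℝ} (hM : 0 ≤ M) (hC : 1 ≤ C)
    (hp1 : |p1| ≤ M) (hp2 : |p2| ≤ M) (hu : 0 ≤ u) (hv : 0 ≤ v)
    (huX : u ≤ C * X) (hvY : v ≤ C * Y) (hX : 0 ≤ X) (hY : 0 ≤ Y) :
    |p1 * p2| * u * v ≤ M * C * X * (M * C * Y) := by
  have hCX : 0 ≤ C * X := mul_nonneg (zero_le_one.trans hC) hX
  have hCY : 0 ≤ C * Y := mul_nonneg (zero_le_one.trans hC) hY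
  have h1 : |p1 * p2| * u * v ≤ M * M * (C * X) * (C * Y) := by
    rw [abs_mul]
    have s1 : |p1| * |p2| ≤ M * M :=
      mul_le_mul hp1 hp2 (abs_nonneg _) hM
    have s2 : |p1| * |p2| * u ≤ M * M * (C * X) :=
      mul_le_mul s1 huX hu (mul_nonneg hM hM)
    exact mul_le_mul s2 hvY hv (mul_nonneg (mul_nonneg hM hM) hCX)
  exact h1.trans_eq (by ring)
lemma master {μ : Measure ℝ} [IsFiniteMeasure μ] {S : Set ℝ}
    (hae : ∀ᵐ x ∂μ, x ∈ S)
    (hsing : ∀ c : ℝ, μ {c} = 0)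
    {E : ℝ → ℝ → ℝ} {Eb : ℝ → ℝ}
    (hEint : ∀ c ∈ S, Integrable (E c) μ)
    (hEnn : ∀ c ∈ S, ∀ᵐ y ∂μ, 0 ≤ E c y)
    (hEb : ∀ c ∈ S, ∫ y, E c y ∂μ ≤ Eb c)
    (hEbnn : ∀ c ∈ S, 0 ≤ Eb c)
    (hEbint : Integrable Eb μ)
    {f : ℝ → ℝ → ℝ → ℝ → ℝ}
    (hfm : Measurable (fun p : (ℝ × ℝ) × ℝ × ℝ => f p.1.1 p.1.2 p.2.1 p.2.2))
    (hfb : ∀ t₁ ∈ S, ∀ s₁ ∈ S, ∀ t₂ ∈ S, ∀ s₂ ∈ S, t₁ ≠ t₂ → s₁ ≠ s₂ →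
      |f t₁ s₁ t₂ s₂| ≤ E t₁ t₂ * E s₁ s₂) :
    (∀ t₁ ∈ S, ∀ s₁ ∈ S, Integrable (fun v : ℝ × ℝ => f t₁ s₁ v.1 v.2) (μ.prod μ)) ∧
    Integrable (fun w : ℝ × ℝ => ∫ v : ℝ × ℝ, f w.1 w.2 v.1 v.2 ∂(μ.prod μ)) (μ.prod μ) ∧
    (∫ t₁, ∫ s₁, ∫ t₂, ∫ s₂, f t₁ s₁ t₂ s₂ ∂μ ∂μ ∂μ ∂μ
      = ∫ w : ℝ × ℝ, ∫ v : ℝ × ℝ, f w.1 w.2 v.1 v.2 ∂(μ.prod μ) ∂(μ.prod μ)) := by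
  have haeprod : ∀ᵐ w : ℝ × ℝ ∂(μ.prod μ), w.1 ∈ S ∧ w.2 ∈ S := ae_prod_mem hae hae
  have hin : ∀ t₁ ∈ S, ∀ s₁ ∈ S, Integrable (fun v : ℝ × ℝ => f t₁ s₁ v.1 v.2) (μ.prod μ) := by
    intro t₁ ht₁ s₁ hs₁
    have hdom : Integrable (fun v : ℝ × ℝ => E t₁ v.1 * E s₁ v.2) (μ.prod μ) :=
      (hEint t₁ ht₁).mul_prod (hEint s₁ hs₁)
    refine Integrable.mono' hdom ?_ ?_
    · exact (hfm.comp ((measurable_const (a := (t₁, s₁))).prodMk measurable_id)).aestronglyMeasurable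
    · filter_upwards [haeprod, ae_fst_ne t₁ (hsing t₁), ae_snd_ne s₁ (hsing s₁)] with v hv h1 h2
      rw [Real.norm_eq_abs]
      exact hfb t₁ ht₁ s₁ hs₁ v.1 hv.1 v.2 hv.2 (fun h => h1 h.symm) (fun h => h2 h.symm)
  have habs : ∀ t₁ ∈ S, ∀ s₁ ∈ S,
      |∫ v : ℝ × ℝ, f t₁ s₁ v.1 v.2 ∂(μ.prod μ)| ≤ Eb t₁ * Eb s₁ := by
    intro t₁ ht₁ s₁ hs₁
    have hdom : Integrable (fun v : ℝ × ℝ => E t₁ v.1 * E s₁ v.2) (μ.prod μ) :=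
      (hEint t₁ ht₁).mul_prod (hEint s₁ hs₁)
    calc |∫ v : ℝ × ℝ, f t₁ s₁ v.1 v.2 ∂(μ.prod μ)|
        ≤ ∫ v : ℝ × ℝ, |f t₁ s₁ v.1 v.2| ∂(μ.prod μ) := abs_int_le _ _
      _ ≤ ∫ v : ℝ × ℝ, E t₁ v.1 * E s₁ v.2 ∂(μ.prod μ) := by
          refine integral_mono_ae (hin t₁ ht₁ s₁ hs₁).abs hdom ?_
          filter_upwards [haeprod, ae_fst_ne t₁ (hsing t₁), ae_snd_ne s₁ (hsing s₁)]
            with v hv h1 h2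
          exact hfb t₁ ht₁ s₁ hs₁ v.1 hv.1 v.2 hv.2 (fun h => h1 h.symm) (fun h => h2 h.symm)
      _ = (∫ y, E t₁ y ∂μ) * ∫ y, E s₁ y ∂μ := integral_prod_mul (E t₁) (E s₁)
      _ ≤ Eb t₁ * Eb s₁ := by
          refine mul_le_mul (hEb t₁ ht₁) (hEb s₁ hs₁) ?_ (hEbnn t₁ ht₁)
          exact integral_nonneg_of_ae (hEnn s₁ hs₁)
  have hout : Integrable (fun w : ℝ × ℝ => ∫ v : ℝ × ℝ, f w.1 w.2 v.1 v.2 ∂(μ.prod μ))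
      (μ.prod μ) := by
    refine Integrable.mono' (hEbint.mul_prod hEbint) ?_ ?_
    · exact (hfm.stronglyMeasurable.integral_prod_right').aestronglyMeasurable
    · filter_upwards [haeprod] with w hw
      rw [Real.norm_eq_abs]
      exact habs w.1 hw.1 w.2 hw.2
  refine ⟨hin, hout, ?_⟩
  have inner_eq : ∀ᵐ w : ℝ × ℝ ∂(μ.prod μ),
      (∫ t₂, ∫ s₂, f w.1 w.2 t₂ s₂ ∂μ ∂μ) = ∫ v : ℝ × ℝ, f w.1 w.2 v.1 v.2 ∂(μ.prod μ) := by
    filter_upwards [haeprod] with w hw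
    exact integral_integral (hin w.1 hw.1 w.2 hw.2)
  have outer_int : Integrable (fun w : ℝ × ℝ => ∫ t₂, ∫ s₂, f w.1 w.2 t₂ s₂ ∂μ ∂μ)
      (μ.prod μ) := hout.congr (Filter.EventuallyEq.symm inner_eq)
  calc ∫ t₁, ∫ s₁, ∫ t₂, ∫ s₂, f t₁ s₁ t₂ s₂ ∂μ ∂μ ∂μ ∂μ
      = ∫ w : ℝ × ℝ, ∫ t₂, ∫ s₂, f w.1 w.2 t₂ s₂ ∂μ ∂μ ∂(μ.prod μ) :=
        integral_integral outer_int
    _ = ∫ w : ℝ × ℝ, ∫ v : ℝ × ℝ, f w.1 w.2 v.1 v.2 ∂(μ.prod μ) ∂(μ.prod μ) :=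
        integral_congr_ae inner_eq
set_option maxHeartbeats 4000000 in
/-- Proposition 2.3, second inequality:
`|‖φ‖²_{H^{⊗2}} − ‖φ‖²_{H₁^{⊗2}}| ≤ ‖φ‖²_{H₂^{⊗2}} + 2 C'_β ‖Kφ‖²_{H₁}`. -/
theorem norm_H_tensor2_sub_norm_H1_tensor2_le
    (β : ℝ) (hβ : β ∈ Set.Ioo (1/2 : ℝ) 1)
    (Cβ Cβ' : ℝ) (hCβ : 0 < Cβ) (hCβ' : 0 ≤ Cβ')
    (D : ℝ → ℝ → ℝ) (hD : Measurable (Function.uncurry D))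
    (hDbound : ∀ t s : ℝ, 0 < t → 0 < s → t ≠ s →
      |D t s - Cβ * |t - s| ^ (2 * β - 2)| ≤ Cβ' * (t * s) ^ (β - 1))
    (T : ℝ) (hT : 0 < T)
    (φ : ℝ → ℝ → ℝ) (hφ : Measurable (Function.uncurry φ))
    (hφsymm : ∀ t s : ℝ, φ t s = φ s t)
    (M : ℝ) (hφM : ∀ t ∈ Set.Icc (0 : ℝ) T, ∀ s ∈ Set.Icc (0 : ℝ) T, |φ t s| ≤ M) :
    |(∫ t₁ in (0:ℝ)..T, ∫ s₁ in (0:ℝ)..T, ∫ t₂ in (0:ℝ)..T, ∫ s₂ in (0:ℝ)..T,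
        φ t₁ s₁ * φ t₂ s₂ * D t₁ t₂ * D s₁ s₂)
      - Cβ ^ 2 * ∫ t₁ in (0:ℝ)..T, ∫ s₁ in (0:ℝ)..T, ∫ t₂ in (0:ℝ)..T, ∫ s₂ in (0:ℝ)..T,
        φ t₁ s₁ * φ t₂ s₂ * |t₁ - t₂| ^ (2 * β - 2) * |s₁ - s₂| ^ (2 * β - 2)|
    ≤ Cβ' ^ 2 * (∫ t₁ in (0:ℝ)..T, ∫ s₁ in (0:ℝ)..T, ∫ t₂ in (0:ℝ)..T, ∫ s₂ in (0:ℝ)..T,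
        |φ t₁ s₁ * φ t₂ s₂| * (t₁ * t₂) ^ (β - 1) * (s₁ * s₂) ^ (β - 1))
      + 2 * Cβ' * (Cβ * ∫ r₁ in (0:ℝ)..T, ∫ r₂ in (0:ℝ)..T,
          (∫ u in (0:ℝ)..T, |φ r₁ u| * u ^ (β - 1)) * (∫ u in (0:ℝ)..T, |φ r₂ u| * u ^ (β - 1))
            * |r₁ - r₂| ^ (2 * β - 2)) := by
  obtain ⟨hβa, hβb⟩ := hβ
  have ha1 : (-1:ℝ) < 2 * β - 2 := by linarith
  have hb1 : (-1:ℝ) < β - 1 := by linarith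
  have hM : 0 ≤ M := le_trans (abs_nonneg _) (hφM 0 ⟨le_rfl, hT.le⟩ 0 ⟨le_rfl, hT.le⟩)
  simp only [intervalIntegral.integral_of_le hT.le]
  set μ : Measure ℝ := volume.restrict (Set.Ioc (0:ℝ) T) with hμ
  haveI : IsFiniteMeasure μ := by
    constructor
    rw [hμ, Measure.restrict_apply_univ, Real.volume_Ioc]
    exact ENNReal.ofReal_lt_top
  have haeμ : ∀ᵐ x ∂μ, x ∈ Set.Ioc (0:ℝ) T := ae_restrict_mem measurableSet_Ioc
  have hsing : ∀ c : ℝ, μ {c} = 0 := by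
    intro c
    rw [hμ, Measure.restrict_apply (measurableSet_singleton c)]
    exact measure_mono_null Set.inter_subset_left Real.volume_singleton
  have haeprod : ∀ᵐ w : ℝ × ℝ ∂(μ.prod μ),
      w.1 ∈ Set.Ioc (0:ℝ) T ∧ w.2 ∈ Set.Ioc (0:ℝ) T := ae_prod_mem haeμ haeμ
  have int_p : Integrable (fun t : ℝ => t ^ (β - 1)) μ := rpow_integrableOn hb1 T hT.le
  have int_k : ∀ c : ℝ, Integrable (fun t : ℝ => |c - t| ^ (2 * β - 2)) μ := fun c =>
    subRpow_integrableOn ha1 c T hT.le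
  set P : ℝ := ∫ t, t ^ (β - 1) ∂μ with hP
  have hP0 : 0 ≤ P := integral_nonneg_of_ae (by
    filter_upwards [haeμ] with t ht
    exact Real.rpow_nonneg ht.1.le _)
  set κ : ℝ := 2 * T ^ (2 * β - 1) / (2 * β - 1) with hκdef
  have hκ0 : 0 ≤ κ := by
    have h1 : (0:ℝ) ≤ T ^ (2 * β - 1) := Real.rpow_nonneg hT.le _
    apply div_nonneg (by linarith) (by linarith)
  have hκle : ∀ c ∈ Set.Icc (0:ℝ) T, ∫ t, |c - t| ^ (2 * β - 2) ∂μ ≤ κ := by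
    intro c hc
    have h := subRpow_integral_le ha1 hT hc
    have e : (2 * β - 2) + 1 = 2 * β - 1 := by ring
    rw [e] at h
    rw [hμ]
    exact h
  -- the kernel function K
  set Kf : ℝ → ℝ := fun r => ∫ u, |φ r u| * u ^ (β - 1) ∂μ with hKf
  have hKm : Measurable Kf := by
    have h : Measurable (fun p : ℝ × ℝ => |φ p.1 p.2| * p.2 ^ (β - 1)) := by fun_prop
    exact h.stronglyMeasurable.integral_prod_right'.measurable
  have hK0 : ∀ r, 0 ≤ Kf r := fun r => integral_nonneg_of_ae (by
    filter_upwards [haeμ] with u hu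
    exact mul_nonneg (abs_nonneg _) (Real.rpow_nonneg hu.1.le _))
  have hKint : ∀ r ∈ Set.Icc (0:ℝ) T, Integrable (fun u => |φ r u| * u ^ (β - 1)) μ := by
    intro r hr
    refine Integrable.mono' (int_p.const_mul M) ?_ ?_
    · have h : Measurable (fun u : ℝ => |φ r u| * u ^ (β - 1)) := by fun_prop
      exact h.aestronglyMeasurable
    · filter_upwards [haeμ] with u hu
      rw [Real.norm_eq_abs, abs_of_nonneg (mul_nonneg (abs_nonneg _) (Real.rpow_nonneg hu.1.le _))]
      exact mul_le_mul_of_nonneg_right (hφM r hr u ⟨hu.1.le, hu.2⟩) (Real.rpow_nonneg hu.1.le _)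
  have hKle : ∀ r ∈ Set.Icc (0:ℝ) T, Kf r ≤ M * P := by
    intro r hr
    calc Kf r ≤ ∫ u, M * u ^ (β - 1) ∂μ := by
          refine integral_mono_ae (hKint r hr) (int_p.const_mul M) ?_
          filter_upwards [haeμ] with u hu
          exact mul_le_mul_of_nonneg_right (hφM r hr u ⟨hu.1.le, hu.2⟩) (Real.rpow_nonneg hu.1.le _)
      _ = M * P := integral_const_mul M _
  -- the function L
  set L : ℝ → ℝ := fun c => ∫ t, |c - t| ^ (2 * β - 2) * Kf t ∂μ with hL
  have hKLint : ∀ c : ℝ, Integrable (fun t => |c - t| ^ (2 * β - 2) * Kf t) μ := by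
    intro c
    refine Integrable.mono' ((int_k c).mul_const (M * P)) ?_ ?_
    · have h : Measurable (fun t : ℝ => |c - t| ^ (2 * β - 2) * Kf t) := by fun_prop
      exact h.aestronglyMeasurable
    · filter_upwards [haeμ] with t ht
      rw [Real.norm_eq_abs,
        abs_of_nonneg (mul_nonneg (Real.rpow_nonneg (abs_nonneg _) _) (hK0 t))]
      exact mul_le_mul_of_nonneg_left (hKle t ⟨ht.1.le, ht.2⟩)
        (Real.rpow_nonneg (abs_nonneg _) _)
  have hL0 : ∀ c, 0 ≤ L c := fun c => integral_nonneg_of_ae (Filter.Eventually.of_forall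
    fun t => mul_nonneg (Real.rpow_nonneg (abs_nonneg _) _) (hK0 t))
  have hLle : ∀ c ∈ Set.Icc (0:ℝ) T, L c ≤ M * P * κ := by
    intro c hc
    calc L c ≤ ∫ t, |c - t| ^ (2 * β - 2) * (M * P) ∂μ := by
          refine integral_mono_ae (hKLint c) ((int_k c).mul_const _) ?_
          filter_upwards [haeμ] with t ht
          exact mul_le_mul_of_nonneg_left (hKle t ⟨ht.1.le, ht.2⟩)
            (Real.rpow_nonneg (abs_nonneg _) _)
      _ = (∫ t, |c - t| ^ (2 * β - 2) ∂μ) * (M * P) := integral_mul_const _ _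
      _ ≤ κ * (M * P) := mul_le_mul_of_nonneg_right (hκle c hc) (mul_nonneg hM hP0)
      _ = M * P * κ := by ring
  -- constants and dominating kernel
  set C0 : ℝ := Cβ + Cβ' + 1 with hC0
  have hC0_1 : 1 ≤ C0 := by rw [hC0]; linarith
  have hC00 : 0 ≤ C0 := zero_le_one.trans hC0_1
  have hX0 : ∀ x ∈ Set.Ioc (0:ℝ) T, ∀ y ∈ Set.Ioc (0:ℝ) T,
      0 ≤ |x - y| ^ (2 * β - 2) + x ^ (β - 1) * y ^ (β - 1) := fun x hx y hy =>
    add_nonneg (Real.rpow_nonneg (abs_nonneg _) _)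
      (mul_nonneg (Real.rpow_nonneg hx.1.le _) (Real.rpow_nonneg hy.1.le _))
  have hkx : ∀ x ∈ Set.Ioc (0:ℝ) T, ∀ y ∈ Set.Ioc (0:ℝ) T,
      |x - y| ^ (2 * β - 2) ≤ C0 * (|x - y| ^ (2 * β - 2) + x ^ (β - 1) * y ^ (β - 1)) := by
    intro x hx y hy
    have k0 : 0 ≤ |x - y| ^ (2 * β - 2) := Real.rpow_nonneg (abs_nonneg _) _
    have p0 : 0 ≤ x ^ (β - 1) * y ^ (β - 1) :=
      mul_nonneg (Real.rpow_nonneg hx.1.le _) (Real.rpow_nonneg hy.1.le _)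
    rw [hC0]; nlinarith
  have hpx : ∀ x ∈ Set.Ioc (0:ℝ) T, ∀ y ∈ Set.Ioc (0:ℝ) T,
      x ^ (β - 1) * y ^ (β - 1)
        ≤ C0 * (|x - y| ^ (2 * β - 2) + x ^ (β - 1) * y ^ (β - 1)) := by
    intro x hx y hy
    have k0 : 0 ≤ |x - y| ^ (2 * β - 2) := Real.rpow_nonneg (abs_nonneg _) _
    have p0 : 0 ≤ x ^ (β - 1) * y ^ (β - 1) :=
      mul_nonneg (Real.rpow_nonneg hx.1.le _) (Real.rpow_nonneg hy.1.le _)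
    rw [hC0]; nlinarith
  have hDx : ∀ x ∈ Set.Ioc (0:ℝ) T, ∀ y ∈ Set.Ioc (0:ℝ) T, x ≠ y →
      |D x y| ≤ C0 * (|x - y| ^ (2 * β - 2) + x ^ (β - 1) * y ^ (β - 1)) := by
    intro x hx y hy hxy
    have h := hDbound x y hx.1 hy.1 hxy
    have k0 : 0 ≤ |x - y| ^ (2 * β - 2) := Real.rpow_nonneg (abs_nonneg _) _
    have p0 : 0 ≤ x ^ (β - 1) * y ^ (β - 1) :=
      mul_nonneg (Real.rpow_nonneg hx.1.le _) (Real.rpow_nonneg hy.1.le _)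
    have habs : |D x y| ≤ Cβ' * (x * y) ^ (β - 1) + Cβ * |x - y| ^ (2 * β - 2) := by
      have e : D x y = (D x y - Cβ * |x - y| ^ (2 * β - 2)) + Cβ * |x - y| ^ (2 * β - 2) := by
        ring
      rw [e]
      refine (abs_add_le _ _).trans (add_le_add h ?_)
      rw [abs_of_nonneg (mul_nonneg hCβ.le k0)]
    rw [Real.mul_rpow hx.1.le hy.1.le] at habs
    rw [hC0]; nlinarith
  -- integrability data for the dominating kernel
  have hEint : ∀ c ∈ Set.Ioc (0:ℝ) T, Integrable
      (fun y => M * C0 * (|c - y| ^ (2 * β - 2) + c ^ (β - 1) * y ^ (β - 1))) μ :=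
    fun c _ => ((int_k c).add (int_p.const_mul (c ^ (β - 1)))).const_mul (M * C0)
  have hEnn : ∀ c ∈ Set.Ioc (0:ℝ) T, ∀ᵐ y ∂μ,
      0 ≤ M * C0 * (|c - y| ^ (2 * β - 2) + c ^ (β - 1) * y ^ (β - 1)) := by
    intro c hc
    filter_upwards [haeμ] with y hy
    exact mul_nonneg (mul_nonneg hM hC00) (hX0 c hc y hy)
  have hEb : ∀ c ∈ Set.Ioc (0:ℝ) T,
      ∫ y, M * C0 * (|c - y| ^ (2 * β - 2) + c ^ (β - 1) * y ^ (β - 1)) ∂μ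
        ≤ M * C0 * (κ + c ^ (β - 1) * P) := by
    intro c hc
    rw [integral_const_mul, integral_add (int_k c) (int_p.const_mul _), integral_const_mul]
    refine mul_le_mul_of_nonneg_left ?_ (mul_nonneg hM hC00)
    exact add_le_add_left (hκle c ⟨hc.1.le, hc.2⟩) _
  have hEbnn : ∀ c ∈ Set.Ioc (0:ℝ) T, 0 ≤ M * C0 * (κ + c ^ (β - 1) * P) := by
    intro c hc
    exact mul_nonneg (mul_nonneg hM hC00)
      (add_nonneg hκ0 (mul_nonneg (Real.rpow_nonneg hc.1.le _) hP0))
  have hEbint : Integrable (fun c => M * C0 * (κ + c ^ (β - 1) * P)) μ :=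
    ((integrable_const κ).add (int_p.mul_const P)).const_mul (M * C0)

  -- pointwise bounds for the five integrands
  have hfbD : ∀ t₁ ∈ Set.Ioc (0:ℝ) T, ∀ s₁ ∈ Set.Ioc (0:ℝ) T, ∀ t₂ ∈ Set.Ioc (0:ℝ) T,
      ∀ s₂ ∈ Set.Ioc (0:ℝ) T, t₁ ≠ t₂ → s₁ ≠ s₂ →
      |φ t₁ s₁ * φ t₂ s₂ * D t₁ t₂ * D s₁ s₂|
        ≤ (M * C0 * (|t₁ - t₂| ^ (2 * β - 2) + t₁ ^ (β - 1) * t₂ ^ (β - 1)))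
          * (M * C0 * (|s₁ - s₂| ^ (2 * β - 2) + s₁ ^ (β - 1) * s₂ ^ (β - 1))) := by
    intro t₁ ht₁ s₁ hs₁ t₂ ht₂ s₂ hs₂ hne1 hne2
    have e1 := hφM t₁ ⟨ht₁.1.le, ht₁.2⟩ s₁ ⟨hs₁.1.le, hs₁.2⟩
    have e2 := hφM t₂ ⟨ht₂.1.le, ht₂.2⟩ s₂ ⟨hs₂.1.le, hs₂.2⟩
    calc |φ t₁ s₁ * φ t₂ s₂ * D t₁ t₂ * D s₁ s₂|
        = |φ t₁ s₁ * φ t₂ s₂| * |D t₁ t₂| * |D s₁ s₂| := by rw [abs_mul, abs_mul]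
      _ ≤ _ := prod_bound_helper hM hC0_1 e1 e2 (abs_nonneg _) (abs_nonneg _)
          (hDx t₁ ht₁ t₂ ht₂ hne1) (hDx s₁ hs₁ s₂ hs₂ hne2)
          (hX0 t₁ ht₁ t₂ ht₂) (hX0 s₁ hs₁ s₂ hs₂)
  have hfbk : ∀ t₁ ∈ Set.Ioc (0:ℝ) T, ∀ s₁ ∈ Set.Ioc (0:ℝ) T, ∀ t₂ ∈ Set.Ioc (0:ℝ) T,
      ∀ s₂ ∈ Set.Ioc (0:ℝ) T, t₁ ≠ t₂ → s₁ ≠ s₂ →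
      |φ t₁ s₁ * φ t₂ s₂ * |t₁ - t₂| ^ (2 * β - 2) * |s₁ - s₂| ^ (2 * β - 2)|
        ≤ (M * C0 * (|t₁ - t₂| ^ (2 * β - 2) + t₁ ^ (β - 1) * t₂ ^ (β - 1)))
          * (M * C0 * (|s₁ - s₂| ^ (2 * β - 2) + s₁ ^ (β - 1) * s₂ ^ (β - 1))) := by
    intro t₁ ht₁ s₁ hs₁ t₂ ht₂ s₂ hs₂ _ _
    have e1 := hφM t₁ ⟨ht₁.1.le, ht₁.2⟩ s₁ ⟨hs₁.1.le, hs₁.2⟩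
    have e2 := hφM t₂ ⟨ht₂.1.le, ht₂.2⟩ s₂ ⟨hs₂.1.le, hs₂.2⟩
    calc |φ t₁ s₁ * φ t₂ s₂ * |t₁ - t₂| ^ (2 * β - 2) * |s₁ - s₂| ^ (2 * β - 2)|
        = |φ t₁ s₁ * φ t₂ s₂| * |t₁ - t₂| ^ (2 * β - 2) * |s₁ - s₂| ^ (2 * β - 2) := by
          rw [abs_mul, abs_mul, abs_of_nonneg (Real.rpow_nonneg (abs_nonneg (t₁ - t₂)) _),
            abs_of_nonneg (Real.rpow_nonneg (abs_nonneg (s₁ - s₂)) _)]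
      _ ≤ _ := prod_bound_helper hM hC0_1 e1 e2 (Real.rpow_nonneg (abs_nonneg _) _)
          (Real.rpow_nonneg (abs_nonneg _) _) (hkx t₁ ht₁ t₂ ht₂) (hkx s₁ hs₁ s₂ hs₂)
          (hX0 t₁ ht₁ t₂ ht₂) (hX0 s₁ hs₁ s₂ hs₂)
  have hfb1 : ∀ t₁ ∈ Set.Ioc (0:ℝ) T, ∀ s₁ ∈ Set.Ioc (0:ℝ) T, ∀ t₂ ∈ Set.Ioc (0:ℝ) T,
      ∀ s₂ ∈ Set.Ioc (0:ℝ) T, t₁ ≠ t₂ → s₁ ≠ s₂ →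
      |(|φ t₁ s₁ * φ t₂ s₂| * |t₁ - t₂| ^ (2 * β - 2) * (s₁ * s₂) ^ (β - 1))|
        ≤ (M * C0 * (|t₁ - t₂| ^ (2 * β - 2) + t₁ ^ (β - 1) * t₂ ^ (β - 1)))
          * (M * C0 * (|s₁ - s₂| ^ (2 * β - 2) + s₁ ^ (β - 1) * s₂ ^ (β - 1))) := by
    intro t₁ ht₁ s₁ hs₁ t₂ ht₂ s₂ hs₂ _ _
    have e1 := hφM t₁ ⟨ht₁.1.le, ht₁.2⟩ s₁ ⟨hs₁.1.le, hs₁.2⟩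
    have e2 := hφM t₂ ⟨ht₂.1.le, ht₂.2⟩ s₂ ⟨hs₂.1.le, hs₂.2⟩
    have hv : (s₁ * s₂) ^ (β - 1)
        ≤ C0 * (|s₁ - s₂| ^ (2 * β - 2) + s₁ ^ (β - 1) * s₂ ^ (β - 1)) := by
      rw [Real.mul_rpow hs₁.1.le hs₂.1.le]; exact hpx s₁ hs₁ s₂ hs₂
    have h0 : 0 ≤ |φ t₁ s₁ * φ t₂ s₂| * |t₁ - t₂| ^ (2 * β - 2) * (s₁ * s₂) ^ (β - 1) :=
      mul_nonneg (mul_nonneg (abs_nonneg _) (Real.rpow_nonneg (abs_nonneg _) _))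
        (Real.rpow_nonneg (mul_nonneg hs₁.1.le hs₂.1.le) _)
    rw [abs_of_nonneg h0]
    exact prod_bound_helper hM hC0_1 e1 e2 (Real.rpow_nonneg (abs_nonneg _) _)
      (Real.rpow_nonneg (mul_nonneg hs₁.1.le hs₂.1.le) _) (hkx t₁ ht₁ t₂ ht₂) hv
      (hX0 t₁ ht₁ t₂ ht₂) (hX0 s₁ hs₁ s₂ hs₂)
  have hfb2 : ∀ t₁ ∈ Set.Ioc (0:ℝ) T, ∀ s₁ ∈ Set.Ioc (0:ℝ) T, ∀ t₂ ∈ Set.Ioc (0:ℝ) T,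
      ∀ s₂ ∈ Set.Ioc (0:ℝ) T, t₁ ≠ t₂ → s₁ ≠ s₂ →
      |(|φ t₁ s₁ * φ t₂ s₂| * (t₁ * t₂) ^ (β - 1) * |s₁ - s₂| ^ (2 * β - 2))|
        ≤ (M * C0 * (|t₁ - t₂| ^ (2 * β - 2) + t₁ ^ (β - 1) * t₂ ^ (β - 1)))
          * (M * C0 * (|s₁ - s₂| ^ (2 * β - 2) + s₁ ^ (β - 1) * s₂ ^ (β - 1))) := by
    intro t₁ ht₁ s₁ hs₁ t₂ ht₂ s₂ hs₂ _ _
    have e1 := hφM t₁ ⟨ht₁.1.le, ht₁.2⟩ s₁ ⟨hs₁.1.le, hs₁.2⟩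
    have e2 := hφM t₂ ⟨ht₂.1.le, ht₂.2⟩ s₂ ⟨hs₂.1.le, hs₂.2⟩
    have hu : (t₁ * t₂) ^ (β - 1)
        ≤ C0 * (|t₁ - t₂| ^ (2 * β - 2) + t₁ ^ (β - 1) * t₂ ^ (β - 1)) := by
      rw [Real.mul_rpow ht₁.1.le ht₂.1.le]; exact hpx t₁ ht₁ t₂ ht₂
    have h0 : 0 ≤ |φ t₁ s₁ * φ t₂ s₂| * (t₁ * t₂) ^ (β - 1) * |s₁ - s₂| ^ (2 * β - 2) :=
      mul_nonneg (mul_nonneg (abs_nonneg _) (Real.rpow_nonneg (mul_nonneg ht₁.1.le ht₂.1.le) _))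
        (Real.rpow_nonneg (abs_nonneg _) _)
    rw [abs_of_nonneg h0]
    exact prod_bound_helper hM hC0_1 e1 e2
      (Real.rpow_nonneg (mul_nonneg ht₁.1.le ht₂.1.le) _) (Real.rpow_nonneg (abs_nonneg _) _)
      hu (hkx s₁ hs₁ s₂ hs₂) (hX0 t₁ ht₁ t₂ ht₂) (hX0 s₁ hs₁ s₂ hs₂)
  have hfb3 : ∀ t₁ ∈ Set.Ioc (0:ℝ) T, ∀ s₁ ∈ Set.Ioc (0:ℝ) T, ∀ t₂ ∈ Set.Ioc (0:ℝ) T,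
      ∀ s₂ ∈ Set.Ioc (0:ℝ) T, t₁ ≠ t₂ → s₁ ≠ s₂ →
      |(|φ t₁ s₁ * φ t₂ s₂| * (t₁ * t₂) ^ (β - 1) * (s₁ * s₂) ^ (β - 1))|
        ≤ (M * C0 * (|t₁ - t₂| ^ (2 * β - 2) + t₁ ^ (β - 1) * t₂ ^ (β - 1)))
          * (M * C0 * (|s₁ - s₂| ^ (2 * β - 2) + s₁ ^ (β - 1) * s₂ ^ (β - 1))) := by
    intro t₁ ht₁ s₁ hs₁ t₂ ht₂ s₂ hs₂ _ _
    have e1 := hφM t₁ ⟨ht₁.1.le, ht₁.2⟩ s₁ ⟨hs₁.1.le, hs₁.2⟩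
    have e2 := hφM t₂ ⟨ht₂.1.le, ht₂.2⟩ s₂ ⟨hs₂.1.le, hs₂.2⟩
    have hu : (t₁ * t₂) ^ (β - 1)
        ≤ C0 * (|t₁ - t₂| ^ (2 * β - 2) + t₁ ^ (β - 1) * t₂ ^ (β - 1)) := by
      rw [Real.mul_rpow ht₁.1.le ht₂.1.le]; exact hpx t₁ ht₁ t₂ ht₂
    have hv : (s₁ * s₂) ^ (β - 1)
        ≤ C0 * (|s₁ - s₂| ^ (2 * β - 2) + s₁ ^ (β - 1) * s₂ ^ (β - 1)) := by
      rw [Real.mul_rpow hs₁.1.le hs₂.1.le]; exact hpx s₁ hs₁ s₂ hs₂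
    have h0 : 0 ≤ |φ t₁ s₁ * φ t₂ s₂| * (t₁ * t₂) ^ (β - 1) * (s₁ * s₂) ^ (β - 1) :=
      mul_nonneg (mul_nonneg (abs_nonneg _) (Real.rpow_nonneg (mul_nonneg ht₁.1.le ht₂.1.le) _))
        (Real.rpow_nonneg (mul_nonneg hs₁.1.le hs₂.1.le) _)
    rw [abs_of_nonneg h0]
    exact prod_bound_helper hM hC0_1 e1 e2
      (Real.rpow_nonneg (mul_nonneg ht₁.1.le ht₂.1.le) _)
      (Real.rpow_nonneg (mul_nonneg hs₁.1.le hs₂.1.le) _)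
      hu hv (hX0 t₁ ht₁ t₂ ht₂) (hX0 s₁ hs₁ s₂ hs₂)
  -- apply the master lemma to the five integrands
  obtain ⟨hinD, houtD, heqD⟩ := master haeμ hsing hEint hEnn hEb hEbnn hEbint
    (f := fun t₁ s₁ t₂ s₂ => φ t₁ s₁ * φ t₂ s₂ * D t₁ t₂ * D s₁ s₂) (by fun_prop) hfbD
  obtain ⟨hink, houtk, heqk⟩ := master haeμ hsing hEint hEnn hEb hEbnn hEbint
    (f := fun t₁ s₁ t₂ s₂ => φ t₁ s₁ * φ t₂ s₂ * |t₁ - t₂| ^ (2 * β - 2)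
      * |s₁ - s₂| ^ (2 * β - 2)) (by fun_prop) hfbk
  obtain ⟨hin1, hout1, heq1⟩ := master haeμ hsing hEint hEnn hEb hEbnn hEbint
    (f := fun t₁ s₁ t₂ s₂ => |φ t₁ s₁ * φ t₂ s₂| * |t₁ - t₂| ^ (2 * β - 2)
      * (s₁ * s₂) ^ (β - 1)) (by fun_prop) hfb1
  obtain ⟨hin2, hout2, heq2⟩ := master haeμ hsing hEint hEnn hEb hEbnn hEbint
    (f := fun t₁ s₁ t₂ s₂ => |φ t₁ s₁ * φ t₂ s₂| * (t₁ * t₂) ^ (β - 1)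
      * |s₁ - s₂| ^ (2 * β - 2)) (by fun_prop) hfb2
  obtain ⟨hin3, hout3, heq3⟩ := master haeμ hsing hEint hEnn hEb hEbnn hEbint
    (f := fun t₁ s₁ t₂ s₂ => |φ t₁ s₁ * φ t₂ s₂| * (t₁ * t₂) ^ (β - 1)
      * (s₁ * s₂) ^ (β - 1)) (by fun_prop) hfb3

  -- measurability of L
  have hLm : Measurable L := by
    have h : Measurable (fun p : ℝ × ℝ => |p.1 - p.2| ^ (2 * β - 2) * Kf p.2) := by fun_prop
    exact h.stronglyMeasurable.integral_prod_right'.measurable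
  -- restate the master conclusions with beta-reduced types
  have hinD' : ∀ t₁ ∈ Set.Ioc (0:ℝ) T, ∀ s₁ ∈ Set.Ioc (0:ℝ) T, Integrable
      (fun v : ℝ × ℝ => φ t₁ s₁ * φ v.1 v.2 * D t₁ v.1 * D s₁ v.2) (μ.prod μ) := hinD
  have hink' : ∀ t₁ ∈ Set.Ioc (0:ℝ) T, ∀ s₁ ∈ Set.Ioc (0:ℝ) T, Integrable
      (fun v : ℝ × ℝ => φ t₁ s₁ * φ v.1 v.2 * |t₁ - v.1| ^ (2 * β - 2)
        * |s₁ - v.2| ^ (2 * β - 2)) (μ.prod μ) := hink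
  have hin1' : ∀ t₁ ∈ Set.Ioc (0:ℝ) T, ∀ s₁ ∈ Set.Ioc (0:ℝ) T, Integrable
      (fun v : ℝ × ℝ => |φ t₁ s₁ * φ v.1 v.2| * |t₁ - v.1| ^ (2 * β - 2)
        * (s₁ * v.2) ^ (β - 1)) (μ.prod μ) := hin1
  have hin2' : ∀ t₁ ∈ Set.Ioc (0:ℝ) T, ∀ s₁ ∈ Set.Ioc (0:ℝ) T, Integrable
      (fun v : ℝ × ℝ => |φ t₁ s₁ * φ v.1 v.2| * (t₁ * v.1) ^ (β - 1)
        * |s₁ - v.2| ^ (2 * β - 2)) (μ.prod μ) := hin2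
  have hin3' : ∀ t₁ ∈ Set.Ioc (0:ℝ) T, ∀ s₁ ∈ Set.Ioc (0:ℝ) T, Integrable
      (fun v : ℝ × ℝ => |φ t₁ s₁ * φ v.1 v.2| * (t₁ * v.1) ^ (β - 1)
        * (s₁ * v.2) ^ (β - 1)) (μ.prod μ) := hin3
  have houtD' : Integrable (fun w : ℝ × ℝ => ∫ v : ℝ × ℝ,
      φ w.1 w.2 * φ v.1 v.2 * D w.1 v.1 * D w.2 v.2 ∂(μ.prod μ)) (μ.prod μ) := houtD
  have houtk' : Integrable (fun w : ℝ × ℝ => ∫ v : ℝ × ℝ,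
      φ w.1 w.2 * φ v.1 v.2 * |w.1 - v.1| ^ (2 * β - 2) * |w.2 - v.2| ^ (2 * β - 2)
        ∂(μ.prod μ)) (μ.prod μ) := houtk
  have hout1' : Integrable (fun w : ℝ × ℝ => ∫ v : ℝ × ℝ,
      |φ w.1 w.2 * φ v.1 v.2| * |w.1 - v.1| ^ (2 * β - 2) * (w.2 * v.2) ^ (β - 1)
        ∂(μ.prod μ)) (μ.prod μ) := hout1
  have hout2' : Integrable (fun w : ℝ × ℝ => ∫ v : ℝ × ℝ,
      |φ w.1 w.2 * φ v.1 v.2| * (w.1 * v.1) ^ (β - 1) * |w.2 - v.2| ^ (2 * β - 2)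
        ∂(μ.prod μ)) (μ.prod μ) := hout2
  have hout3' : Integrable (fun w : ℝ × ℝ => ∫ v : ℝ × ℝ,
      |φ w.1 w.2 * φ v.1 v.2| * (w.1 * v.1) ^ (β - 1) * (w.2 * v.2) ^ (β - 1)
        ∂(μ.prod μ)) (μ.prod μ) := hout3
  have heqD' : (∫ t₁, ∫ s₁, ∫ t₂, ∫ s₂, φ t₁ s₁ * φ t₂ s₂ * D t₁ t₂ * D s₁ s₂ ∂μ ∂μ ∂μ ∂μ)
      = ∫ w : ℝ × ℝ, ∫ v : ℝ × ℝ, φ w.1 w.2 * φ v.1 v.2 * D w.1 v.1 * D w.2 v.2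
          ∂(μ.prod μ) ∂(μ.prod μ) := heqD
  have heqk' : (∫ t₁, ∫ s₁, ∫ t₂, ∫ s₂, φ t₁ s₁ * φ t₂ s₂ * |t₁ - t₂| ^ (2 * β - 2)
        * |s₁ - s₂| ^ (2 * β - 2) ∂μ ∂μ ∂μ ∂μ)
      = ∫ w : ℝ × ℝ, ∫ v : ℝ × ℝ, φ w.1 w.2 * φ v.1 v.2 * |w.1 - v.1| ^ (2 * β - 2)
          * |w.2 - v.2| ^ (2 * β - 2) ∂(μ.prod μ) ∂(μ.prod μ) := heqk
  have heq3' : (∫ t₁, ∫ s₁, ∫ t₂, ∫ s₂, |φ t₁ s₁ * φ t₂ s₂| * (t₁ * t₂) ^ (β - 1)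
        * (s₁ * s₂) ^ (β - 1) ∂μ ∂μ ∂μ ∂μ)
      = ∫ w : ℝ × ℝ, ∫ v : ℝ × ℝ, |φ w.1 w.2 * φ v.1 v.2| * (w.1 * v.1) ^ (β - 1)
          * (w.2 * v.2) ^ (β - 1) ∂(μ.prod μ) ∂(μ.prod μ) := heq3
  -- auxiliary: inner integral over the first variable gives K by symmetry
  have innerK : ∀ s₂ : ℝ, (∫ t₂, |φ t₂ s₂| * t₂ ^ (β - 1) ∂μ) = Kf s₂ := by
    intro s₂
    have e : (fun t₂ : ℝ => |φ t₂ s₂| * t₂ ^ (β - 1)) = fun u => |φ s₂ u| * u ^ (β - 1) :=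
      funext fun u => by rw [hφsymm u s₂]
    rw [e]
  -- the diagonal-kernel double integral
  have hJJ : (∫ r₁, ∫ r₂, (∫ u, |φ r₁ u| * u ^ (β - 1) ∂μ) * (∫ u, |φ r₂ u| * u ^ (β - 1) ∂μ)
        * |r₁ - r₂| ^ (2 * β - 2) ∂μ ∂μ) = ∫ r, Kf r * L r ∂μ := by
    refine integral_congr_ae (Filter.Eventually.of_forall fun r₁ => ?_)
    calc (∫ r₂, (∫ u, |φ r₁ u| * u ^ (β - 1) ∂μ) * (∫ u, |φ r₂ u| * u ^ (β - 1) ∂μ)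
            * |r₁ - r₂| ^ (2 * β - 2) ∂μ)
        = ∫ r₂, (∫ u, |φ r₁ u| * u ^ (β - 1) ∂μ) * (|r₁ - r₂| ^ (2 * β - 2)
            * (∫ u, |φ r₂ u| * u ^ (β - 1) ∂μ)) ∂μ :=
          integral_congr_ae (Filter.Eventually.of_forall fun r₂ => by ring)
      _ = Kf r₁ * L r₁ := integral_const_mul _ _
  -- evaluation of the first mixed term
  have hJ1 : (∫ w : ℝ × ℝ, ∫ v : ℝ × ℝ, |φ w.1 w.2 * φ v.1 v.2| * |w.1 - v.1| ^ (2 * β - 2)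
        * (w.2 * v.2) ^ (β - 1) ∂(μ.prod μ) ∂(μ.prod μ)) = ∫ r, Kf r * L r ∂μ := by
    have inner1 : ∀ w : ℝ × ℝ, w.1 ∈ Set.Ioc (0:ℝ) T → w.2 ∈ Set.Ioc (0:ℝ) T →
        (∫ v : ℝ × ℝ, |φ w.1 w.2 * φ v.1 v.2| * |w.1 - v.1| ^ (2 * β - 2)
          * (w.2 * v.2) ^ (β - 1) ∂(μ.prod μ)) = |φ w.1 w.2| * w.2 ^ (β - 1) * L w.1 := by
      intro w hw1 hw2
      have hint : Integrable (fun v : ℝ × ℝ =>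
          |w.1 - v.1| ^ (2 * β - 2) * (|φ v.1 v.2| * v.2 ^ (β - 1))) (μ.prod μ) := by
        refine Integrable.mono' ((int_k w.1).mul_prod (int_p.const_mul M)) ?_ ?_
        · have h : Measurable (fun v : ℝ × ℝ =>
              |w.1 - v.1| ^ (2 * β - 2) * (|φ v.1 v.2| * v.2 ^ (β - 1))) := by fun_prop
          exact h.aestronglyMeasurable
        · filter_upwards [haeprod] with v hv
          rw [Real.norm_eq_abs, abs_of_nonneg (mul_nonneg (Real.rpow_nonneg (abs_nonneg _) _)
            (mul_nonneg (abs_nonneg _) (Real.rpow_nonneg hv.2.1.le _)))]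
          exact mul_le_mul_of_nonneg_left (mul_le_mul_of_nonneg_right
            (hφM v.1 ⟨hv.1.1.le, hv.1.2⟩ v.2 ⟨hv.2.1.le, hv.2.2⟩)
            (Real.rpow_nonneg hv.2.1.le _)) (Real.rpow_nonneg (abs_nonneg _) _)
      have hinner_eval : (∫ v : ℝ × ℝ, |w.1 - v.1| ^ (2 * β - 2)
            * (|φ v.1 v.2| * v.2 ^ (β - 1)) ∂(μ.prod μ)) = L w.1 := by
        calc (∫ v : ℝ × ℝ, |w.1 - v.1| ^ (2 * β - 2)
              * (|φ v.1 v.2| * v.2 ^ (β - 1)) ∂(μ.prod μ))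
            = ∫ t₂, ∫ s₂, |w.1 - t₂| ^ (2 * β - 2) * (|φ t₂ s₂| * s₂ ^ (β - 1)) ∂μ ∂μ :=
              integral_prod _ hint
          _ = ∫ t₂, |w.1 - t₂| ^ (2 * β - 2) * Kf t₂ ∂μ :=
              integral_congr_ae (Filter.Eventually.of_forall fun t₂ => integral_const_mul _ _)
          _ = L w.1 := rfl
      calc (∫ v : ℝ × ℝ, |φ w.1 w.2 * φ v.1 v.2| * |w.1 - v.1| ^ (2 * β - 2)
            * (w.2 * v.2) ^ (β - 1) ∂(μ.prod μ))
          = ∫ v : ℝ × ℝ, (|φ w.1 w.2| * w.2 ^ (β - 1))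
              * (|w.1 - v.1| ^ (2 * β - 2) * (|φ v.1 v.2| * v.2 ^ (β - 1))) ∂(μ.prod μ) := by
            refine integral_congr_ae ?_
            filter_upwards [haeprod] with v hv
            rw [abs_mul, Real.mul_rpow hw2.1.le hv.2.1.le]
            ring
        _ = (|φ w.1 w.2| * w.2 ^ (β - 1)) * ∫ v : ℝ × ℝ,
              |w.1 - v.1| ^ (2 * β - 2) * (|φ v.1 v.2| * v.2 ^ (β - 1)) ∂(μ.prod μ) :=
            integral_const_mul _ _
        _ = |φ w.1 w.2| * w.2 ^ (β - 1) * L w.1 := by rw [hinner_eval]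
    have int2 : Integrable (fun w : ℝ × ℝ => |φ w.1 w.2| * w.2 ^ (β - 1) * L w.1)
        (μ.prod μ) := by
      refine Integrable.mono' ((integrable_const (M * (M * P * κ))).mul_prod int_p) ?_ ?_
      · have h : Measurable (fun w : ℝ × ℝ => |φ w.1 w.2| * w.2 ^ (β - 1) * L w.1) := by
          fun_prop
        exact h.aestronglyMeasurable
      · filter_upwards [haeprod] with w hw
        rw [Real.norm_eq_abs, abs_of_nonneg (mul_nonneg (mul_nonneg (abs_nonneg _)
          (Real.rpow_nonneg hw.2.1.le _)) (hL0 w.1))]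
        have h1 : |φ w.1 w.2| * w.2 ^ (β - 1) * L w.1 ≤ M * w.2 ^ (β - 1) * (M * P * κ) :=
          mul_le_mul (mul_le_mul_of_nonneg_right
            (hφM w.1 ⟨hw.1.1.le, hw.1.2⟩ w.2 ⟨hw.2.1.le, hw.2.2⟩)
            (Real.rpow_nonneg hw.2.1.le _)) (hLle w.1 ⟨hw.1.1.le, hw.1.2⟩) (hL0 w.1)
            (mul_nonneg hM (Real.rpow_nonneg hw.2.1.le _))
        exact h1.trans_eq (by ring)
    calc (∫ w : ℝ × ℝ, ∫ v : ℝ × ℝ, |φ w.1 w.2 * φ v.1 v.2| * |w.1 - v.1| ^ (2 * β - 2)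
          * (w.2 * v.2) ^ (β - 1) ∂(μ.prod μ) ∂(μ.prod μ))
        = ∫ w : ℝ × ℝ, |φ w.1 w.2| * w.2 ^ (β - 1) * L w.1 ∂(μ.prod μ) := by
          refine integral_congr_ae ?_
          filter_upwards [haeprod] with w hw
          exact inner1 w hw.1 hw.2
      _ = ∫ t₁, ∫ s₁, |φ t₁ s₁| * s₁ ^ (β - 1) * L t₁ ∂μ ∂μ := integral_prod _ int2
      _ = ∫ r, Kf r * L r ∂μ := by
          refine integral_congr_ae (Filter.Eventually.of_forall fun t₁ => ?_)
          calc (∫ s₁, |φ t₁ s₁| * s₁ ^ (β - 1) * L t₁ ∂μ)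
              = (∫ s₁, |φ t₁ s₁| * s₁ ^ (β - 1) ∂μ) * L t₁ := integral_mul_const _ _
            _ = Kf t₁ * L t₁ := rfl
  -- evaluation of the second mixed term
  have hJ2 : (∫ w : ℝ × ℝ, ∫ v : ℝ × ℝ, |φ w.1 w.2 * φ v.1 v.2| * (w.1 * v.1) ^ (β - 1)
        * |w.2 - v.2| ^ (2 * β - 2) ∂(μ.prod μ) ∂(μ.prod μ)) = ∫ r, Kf r * L r ∂μ := by
    have inner2 : ∀ w : ℝ × ℝ, w.1 ∈ Set.Ioc (0:ℝ) T → w.2 ∈ Set.Ioc (0:ℝ) T →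
        (∫ v : ℝ × ℝ, |φ w.1 w.2 * φ v.1 v.2| * (w.1 * v.1) ^ (β - 1)
          * |w.2 - v.2| ^ (2 * β - 2) ∂(μ.prod μ)) = |φ w.1 w.2| * w.1 ^ (β - 1) * L w.2 := by
      intro w hw1 hw2
      have hint : Integrable (fun v : ℝ × ℝ =>
          (|φ v.1 v.2| * v.1 ^ (β - 1)) * |w.2 - v.2| ^ (2 * β - 2)) (μ.prod μ) := by
        refine Integrable.mono' ((int_p.const_mul M).mul_prod (int_k w.2)) ?_ ?_
        · have h : Measurable (fun v : ℝ × ℝ =>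
              (|φ v.1 v.2| * v.1 ^ (β - 1)) * |w.2 - v.2| ^ (2 * β - 2)) := by fun_prop
          exact h.aestronglyMeasurable
        · filter_upwards [haeprod] with v hv
          rw [Real.norm_eq_abs, abs_of_nonneg (mul_nonneg (mul_nonneg (abs_nonneg _)
            (Real.rpow_nonneg hv.1.1.le _)) (Real.rpow_nonneg (abs_nonneg _) _))]
          exact mul_le_mul_of_nonneg_right (mul_le_mul_of_nonneg_right
            (hφM v.1 ⟨hv.1.1.le, hv.1.2⟩ v.2 ⟨hv.2.1.le, hv.2.2⟩)
            (Real.rpow_nonneg hv.1.1.le _)) (Real.rpow_nonneg (abs_nonneg _) _)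
      have hinner_eval : (∫ v : ℝ × ℝ, (|φ v.1 v.2| * v.1 ^ (β - 1))
            * |w.2 - v.2| ^ (2 * β - 2) ∂(μ.prod μ)) = L w.2 := by
        calc (∫ v : ℝ × ℝ, (|φ v.1 v.2| * v.1 ^ (β - 1))
              * |w.2 - v.2| ^ (2 * β - 2) ∂(μ.prod μ))
            = ∫ s₂, ∫ t₂, (|φ t₂ s₂| * t₂ ^ (β - 1)) * |w.2 - s₂| ^ (2 * β - 2) ∂μ ∂μ :=
              integral_prod_symm _ hint
          _ = ∫ s₂, |w.2 - s₂| ^ (2 * β - 2) * Kf s₂ ∂μ := by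
              refine integral_congr_ae (Filter.Eventually.of_forall fun s₂ => ?_)
              calc (∫ t₂, (|φ t₂ s₂| * t₂ ^ (β - 1)) * |w.2 - s₂| ^ (2 * β - 2) ∂μ)
                  = (∫ t₂, |φ t₂ s₂| * t₂ ^ (β - 1) ∂μ) * |w.2 - s₂| ^ (2 * β - 2) :=
                    integral_mul_const _ _
                _ = |w.2 - s₂| ^ (2 * β - 2) * Kf s₂ := by rw [innerK s₂, mul_comm]
          _ = L w.2 := rfl
      calc (∫ v : ℝ × ℝ, |φ w.1 w.2 * φ v.1 v.2| * (w.1 * v.1) ^ (β - 1)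
            * |w.2 - v.2| ^ (2 * β - 2) ∂(μ.prod μ))
          = ∫ v : ℝ × ℝ, (|φ w.1 w.2| * w.1 ^ (β - 1))
              * ((|φ v.1 v.2| * v.1 ^ (β - 1)) * |w.2 - v.2| ^ (2 * β - 2)) ∂(μ.prod μ) := by
            refine integral_congr_ae ?_
            filter_upwards [haeprod] with v hv
            rw [abs_mul, Real.mul_rpow hw1.1.le hv.1.1.le]
            ring
        _ = (|φ w.1 w.2| * w.1 ^ (β - 1)) * ∫ v : ℝ × ℝ,
              (|φ v.1 v.2| * v.1 ^ (β - 1)) * |w.2 - v.2| ^ (2 * β - 2) ∂(μ.prod μ) :=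
            integral_const_mul _ _
        _ = |φ w.1 w.2| * w.1 ^ (β - 1) * L w.2 := by rw [hinner_eval]
    have int2 : Integrable (fun w : ℝ × ℝ => |φ w.1 w.2| * w.1 ^ (β - 1) * L w.2)
        (μ.prod μ) := by
      refine Integrable.mono' ((int_p.const_mul M).mul_prod
        (integrable_const (M * P * κ))) ?_ ?_
      · have h : Measurable (fun w : ℝ × ℝ => |φ w.1 w.2| * w.1 ^ (β - 1) * L w.2) := by
          fun_prop
        exact h.aestronglyMeasurable
      · filter_upwards [haeprod] with w hw
        rw [Real.norm_eq_abs, abs_of_nonneg (mul_nonneg (mul_nonneg (abs_nonneg _)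
          (Real.rpow_nonneg hw.1.1.le _)) (hL0 w.2))]
        have h1 : |φ w.1 w.2| * w.1 ^ (β - 1) * L w.2 ≤ M * w.1 ^ (β - 1) * (M * P * κ) :=
          mul_le_mul (mul_le_mul_of_nonneg_right
            (hφM w.1 ⟨hw.1.1.le, hw.1.2⟩ w.2 ⟨hw.2.1.le, hw.2.2⟩)
            (Real.rpow_nonneg hw.1.1.le _)) (hLle w.2 ⟨hw.2.1.le, hw.2.2⟩) (hL0 w.2)
            (mul_nonneg hM (Real.rpow_nonneg hw.1.1.le _))
        exact h1.trans_eq (by ring)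
    calc (∫ w : ℝ × ℝ, ∫ v : ℝ × ℝ, |φ w.1 w.2 * φ v.1 v.2| * (w.1 * v.1) ^ (β - 1)
          * |w.2 - v.2| ^ (2 * β - 2) ∂(μ.prod μ) ∂(μ.prod μ))
        = ∫ w : ℝ × ℝ, |φ w.1 w.2| * w.1 ^ (β - 1) * L w.2 ∂(μ.prod μ) := by
          refine integral_congr_ae ?_
          filter_upwards [haeprod] with w hw
          exact inner2 w hw.1 hw.2
      _ = ∫ s₁, ∫ t₁, |φ t₁ s₁| * t₁ ^ (β - 1) * L s₁ ∂μ ∂μ := integral_prod_symm _ int2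
      _ = ∫ r, Kf r * L r ∂μ := by
          refine integral_congr_ae (Filter.Eventually.of_forall fun s₁ => ?_)
          calc (∫ t₁, |φ t₁ s₁| * t₁ ^ (β - 1) * L s₁ ∂μ)
              = (∫ t₁, |φ t₁ s₁| * t₁ ^ (β - 1) ∂μ) * L s₁ := integral_mul_const _ _
            _ = Kf s₁ * L s₁ := by rw [innerK s₁]
  -- the main estimate
  rw [heqD', heqk', heq3']
  have hsub : (∫ w : ℝ × ℝ, ∫ v : ℝ × ℝ,
        φ w.1 w.2 * φ v.1 v.2 * D w.1 v.1 * D w.2 v.2 ∂(μ.prod μ) ∂(μ.prod μ))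
      - Cβ ^ 2 * (∫ w : ℝ × ℝ, ∫ v : ℝ × ℝ, φ w.1 w.2 * φ v.1 v.2
          * |w.1 - v.1| ^ (2 * β - 2) * |w.2 - v.2| ^ (2 * β - 2) ∂(μ.prod μ) ∂(μ.prod μ))
      = ∫ w : ℝ × ℝ, ((∫ v : ℝ × ℝ,
          φ w.1 w.2 * φ v.1 v.2 * D w.1 v.1 * D w.2 v.2 ∂(μ.prod μ))
        - Cβ ^ 2 * (∫ v : ℝ × ℝ, φ w.1 w.2 * φ v.1 v.2
          * |w.1 - v.1| ^ (2 * β - 2) * |w.2 - v.2| ^ (2 * β - 2) ∂(μ.prod μ))) ∂(μ.prod μ) := by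
    rw [integral_sub houtD' (houtk'.const_mul _), integral_const_mul]
  have key_ae : ∀ᵐ w : ℝ × ℝ ∂(μ.prod μ),
      |(∫ v : ℝ × ℝ, φ w.1 w.2 * φ v.1 v.2 * D w.1 v.1 * D w.2 v.2 ∂(μ.prod μ))
        - Cβ ^ 2 * (∫ v : ℝ × ℝ, φ w.1 w.2 * φ v.1 v.2
          * |w.1 - v.1| ^ (2 * β - 2) * |w.2 - v.2| ^ (2 * β - 2) ∂(μ.prod μ))|
      ≤ Cβ * Cβ' * (∫ v : ℝ × ℝ, |φ w.1 w.2 * φ v.1 v.2| * |w.1 - v.1| ^ (2 * β - 2)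
          * (w.2 * v.2) ^ (β - 1) ∂(μ.prod μ))
        + (Cβ * Cβ' * (∫ v : ℝ × ℝ, |φ w.1 w.2 * φ v.1 v.2| * (w.1 * v.1) ^ (β - 1)
          * |w.2 - v.2| ^ (2 * β - 2) ∂(μ.prod μ))
        + Cβ' ^ 2 * (∫ v : ℝ × ℝ, |φ w.1 w.2 * φ v.1 v.2| * (w.1 * v.1) ^ (β - 1)
          * (w.2 * v.2) ^ (β - 1) ∂(μ.prod μ))) := by
    filter_upwards [haeprod] with w hw
    have iD := hinD' w.1 hw.1 w.2 hw.2
    have ik := hink' w.1 hw.1 w.2 hw.2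
    have i1 := hin1' w.1 hw.1 w.2 hw.2
    have i2 := hin2' w.1 hw.1 w.2 hw.2
    have i3 := hin3' w.1 hw.1 w.2 hw.2
    have hsubw : (∫ v : ℝ × ℝ, φ w.1 w.2 * φ v.1 v.2 * D w.1 v.1 * D w.2 v.2 ∂(μ.prod μ))
        - Cβ ^ 2 * (∫ v : ℝ × ℝ, φ w.1 w.2 * φ v.1 v.2
          * |w.1 - v.1| ^ (2 * β - 2) * |w.2 - v.2| ^ (2 * β - 2) ∂(μ.prod μ))
        = ∫ v : ℝ × ℝ, (φ w.1 w.2 * φ v.1 v.2 * D w.1 v.1 * D w.2 v.2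
          - Cβ ^ 2 * (φ w.1 w.2 * φ v.1 v.2
            * |w.1 - v.1| ^ (2 * β - 2) * |w.2 - v.2| ^ (2 * β - 2))) ∂(μ.prod μ) := by
      rw [integral_sub iD (ik.const_mul _), integral_const_mul]
    rw [hsubw]
    calc |∫ v : ℝ × ℝ, (φ w.1 w.2 * φ v.1 v.2 * D w.1 v.1 * D w.2 v.2
          - Cβ ^ 2 * (φ w.1 w.2 * φ v.1 v.2
            * |w.1 - v.1| ^ (2 * β - 2) * |w.2 - v.2| ^ (2 * β - 2))) ∂(μ.prod μ)|
        ≤ ∫ v : ℝ × ℝ, |φ w.1 w.2 * φ v.1 v.2 * D w.1 v.1 * D w.2 v.2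
          - Cβ ^ 2 * (φ w.1 w.2 * φ v.1 v.2
            * |w.1 - v.1| ^ (2 * β - 2) * |w.2 - v.2| ^ (2 * β - 2))| ∂(μ.prod μ) :=
          abs_int_le _ _
      _ ≤ ∫ v : ℝ × ℝ, (Cβ * Cβ' * (|φ w.1 w.2 * φ v.1 v.2| * |w.1 - v.1| ^ (2 * β - 2)
            * (w.2 * v.2) ^ (β - 1))
          + (Cβ * Cβ' * (|φ w.1 w.2 * φ v.1 v.2| * (w.1 * v.1) ^ (β - 1)
            * |w.2 - v.2| ^ (2 * β - 2))
          + Cβ' ^ 2 * (|φ w.1 w.2 * φ v.1 v.2| * (w.1 * v.1) ^ (β - 1)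
            * (w.2 * v.2) ^ (β - 1)))) ∂(μ.prod μ) := by
          refine integral_mono_ae (iD.sub (ik.const_mul _)).abs
            ((i1.const_mul _).add ((i2.const_mul _).add (i3.const_mul _))) ?_
          filter_upwards [haeprod, ae_fst_ne w.1 (hsing w.1), ae_snd_ne w.2 (hsing w.2)]
            with v hv hne1 hne2
          exact pointwise_bound hCβ.le (Real.rpow_nonneg (abs_nonneg _) _)
            (Real.rpow_nonneg (abs_nonneg _) _)
            (Real.rpow_nonneg (mul_nonneg hw.1.1.le hv.1.1.le) _)
            (Real.rpow_nonneg (mul_nonneg hw.2.1.le hv.2.1.le) _)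
            (hDbound w.1 v.1 hw.1.1 hv.1.1 (fun h => hne1 h.symm))
            (hDbound w.2 v.2 hw.2.1 hv.2.1 (fun h => hne2 h.symm))
      _ = Cβ * Cβ' * (∫ v : ℝ × ℝ, |φ w.1 w.2 * φ v.1 v.2| * |w.1 - v.1| ^ (2 * β - 2)
            * (w.2 * v.2) ^ (β - 1) ∂(μ.prod μ))
          + (Cβ * Cβ' * (∫ v : ℝ × ℝ, |φ w.1 w.2 * φ v.1 v.2| * (w.1 * v.1) ^ (β - 1)
            * |w.2 - v.2| ^ (2 * β - 2) ∂(μ.prod μ))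
          + Cβ' ^ 2 * (∫ v : ℝ × ℝ, |φ w.1 w.2 * φ v.1 v.2| * (w.1 * v.1) ^ (β - 1)
            * (w.2 * v.2) ^ (β - 1) ∂(μ.prod μ))) := by
          have iB : Integrable (fun v : ℝ × ℝ =>
              Cβ * Cβ' * (|φ w.1 w.2 * φ v.1 v.2| * (w.1 * v.1) ^ (β - 1)
                * |w.2 - v.2| ^ (2 * β - 2))
              + Cβ' ^ 2 * (|φ w.1 w.2 * φ v.1 v.2| * (w.1 * v.1) ^ (β - 1)
                * (w.2 * v.2) ^ (β - 1))) (μ.prod μ) :=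
            (i2.const_mul _).add (i3.const_mul _)
          rw [integral_add (i1.const_mul _) iB,
            integral_add (i2.const_mul _) (i3.const_mul _),
            integral_const_mul, integral_const_mul, integral_const_mul]
  calc |(∫ w : ℝ × ℝ, ∫ v : ℝ × ℝ,
        φ w.1 w.2 * φ v.1 v.2 * D w.1 v.1 * D w.2 v.2 ∂(μ.prod μ) ∂(μ.prod μ))
      - Cβ ^ 2 * (∫ w : ℝ × ℝ, ∫ v : ℝ × ℝ, φ w.1 w.2 * φ v.1 v.2
          * |w.1 - v.1| ^ (2 * β - 2) * |w.2 - v.2| ^ (2 * β - 2) ∂(μ.prod μ) ∂(μ.prod μ))|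
      = |∫ w : ℝ × ℝ, ((∫ v : ℝ × ℝ,
          φ w.1 w.2 * φ v.1 v.2 * D w.1 v.1 * D w.2 v.2 ∂(μ.prod μ))
        - Cβ ^ 2 * (∫ v : ℝ × ℝ, φ w.1 w.2 * φ v.1 v.2
          * |w.1 - v.1| ^ (2 * β - 2) * |w.2 - v.2| ^ (2 * β - 2) ∂(μ.prod μ))) ∂(μ.prod μ)| := by
        rw [hsub]
    _ ≤ ∫ w : ℝ × ℝ, |(∫ v : ℝ × ℝ,
          φ w.1 w.2 * φ v.1 v.2 * D w.1 v.1 * D w.2 v.2 ∂(μ.prod μ))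
        - Cβ ^ 2 * (∫ v : ℝ × ℝ, φ w.1 w.2 * φ v.1 v.2
          * |w.1 - v.1| ^ (2 * β - 2) * |w.2 - v.2| ^ (2 * β - 2) ∂(μ.prod μ))| ∂(μ.prod μ) :=
        abs_int_le _ _
    _ ≤ ∫ w : ℝ × ℝ, (Cβ * Cβ' * (∫ v : ℝ × ℝ, |φ w.1 w.2 * φ v.1 v.2|
          * |w.1 - v.1| ^ (2 * β - 2) * (w.2 * v.2) ^ (β - 1) ∂(μ.prod μ))
        + (Cβ * Cβ' * (∫ v : ℝ × ℝ, |φ w.1 w.2 * φ v.1 v.2| * (w.1 * v.1) ^ (β - 1)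
          * |w.2 - v.2| ^ (2 * β - 2) ∂(μ.prod μ))
        + Cβ' ^ 2 * (∫ v : ℝ × ℝ, |φ w.1 w.2 * φ v.1 v.2| * (w.1 * v.1) ^ (β - 1)
          * (w.2 * v.2) ^ (β - 1) ∂(μ.prod μ)))) ∂(μ.prod μ) := by
        refine integral_mono_ae ((houtD'.sub (houtk'.const_mul _)).abs)
          ((hout1'.const_mul _).add ((hout2'.const_mul _).add (hout3'.const_mul _))) key_ae
    _ = Cβ * Cβ' * (∫ w : ℝ × ℝ, ∫ v : ℝ × ℝ, |φ w.1 w.2 * φ v.1 v.2|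
          * |w.1 - v.1| ^ (2 * β - 2) * (w.2 * v.2) ^ (β - 1) ∂(μ.prod μ) ∂(μ.prod μ))
        + (Cβ * Cβ' * (∫ w : ℝ × ℝ, ∫ v : ℝ × ℝ, |φ w.1 w.2 * φ v.1 v.2|
          * (w.1 * v.1) ^ (β - 1) * |w.2 - v.2| ^ (2 * β - 2) ∂(μ.prod μ) ∂(μ.prod μ))
        + Cβ' ^ 2 * (∫ w : ℝ × ℝ, ∫ v : ℝ × ℝ, |φ w.1 w.2 * φ v.1 v.2|
          * (w.1 * v.1) ^ (β - 1) * (w.2 * v.2) ^ (β - 1) ∂(μ.prod μ) ∂(μ.prod μ))) := by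
        have iB : Integrable (fun w : ℝ × ℝ =>
            Cβ * Cβ' * (∫ v : ℝ × ℝ, |φ w.1 w.2 * φ v.1 v.2| * (w.1 * v.1) ^ (β - 1)
              * |w.2 - v.2| ^ (2 * β - 2) ∂(μ.prod μ))
            + Cβ' ^ 2 * (∫ v : ℝ × ℝ, |φ w.1 w.2 * φ v.1 v.2| * (w.1 * v.1) ^ (β - 1)
              * (w.2 * v.2) ^ (β - 1) ∂(μ.prod μ))) (μ.prod μ) :=
          (hout2'.const_mul _).add (hout3'.const_mul _)
        rw [integral_add (hout1'.const_mul _) iB,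
          integral_add (hout2'.const_mul _) (hout3'.const_mul _),
          integral_const_mul, integral_const_mul, integral_const_mul]
    _ = Cβ' ^ 2 * (∫ w : ℝ × ℝ, ∫ v : ℝ × ℝ, |φ w.1 w.2 * φ v.1 v.2|
          * (w.1 * v.1) ^ (β - 1) * (w.2 * v.2) ^ (β - 1) ∂(μ.prod μ) ∂(μ.prod μ))
        + 2 * Cβ' * (Cβ * ∫ r₁, ∫ r₂, (∫ u, |φ r₁ u| * u ^ (β - 1) ∂μ)
          * (∫ u, |φ r₂ u| * u ^ (β - 1) ∂μ) * |r₁ - r₂| ^ (2 * β - 2) ∂μ ∂μ) := by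
        rw [hJ1, hJ2, hJJ]; ring
end

section
/- For every T > 0 and all bounded measurable symmetric functions φ, ψ on [0,T]², one has |⟨φ,ψ⟩_{H^{⊗2}} − ⟨φ,ψ⟩_{H₁^{⊗2}}| ≤ ⟨φ,ψ⟩_{H₂^{⊗2}} + 2 C'_β |⟨Kφ, Kψ⟩_{H₁}|. -/
open MeasureTheory Set Real

private noncomputable def kerB (β t u : ℝ) : ℝ := |t - u| ^ (2*β - 2) + |t| ^ (β-1) * |u| ^ (β-1)
private noncomputable def kerW (β : ℝ) (z : (ℝ × ℝ) × ℝ × ℝ) : ℝ :=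
  kerB β z.1.1 z.2.1 * kerB β z.1.2 z.2.2
private noncomputable def kerF (D φ ψ : ℝ → ℝ → ℝ) (z : (ℝ × ℝ) × ℝ × ℝ) : ℝ :=
  φ z.1.1 z.1.2 * ψ z.2.1 z.2.2 * D z.1.1 z.2.1 * D z.1.2 z.2.2
private noncomputable def kerG (β : ℝ) (φ ψ : ℝ → ℝ → ℝ) (z : (ℝ × ℝ) × ℝ × ℝ) : ℝ :=
  φ z.1.1 z.1.2 * ψ z.2.1 z.2.2 * |z.1.1 - z.2.1| ^ (2*β-2) * |z.1.2 - z.2.2| ^ (2*β-2)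
private noncomputable def kerH1 (β : ℝ) (φ ψ : ℝ → ℝ → ℝ) (z : (ℝ × ℝ) × ℝ × ℝ) : ℝ :=
  |φ z.1.1 z.1.2 * ψ z.2.1 z.2.2| * (z.1.1 * z.2.1) ^ (β-1) * (z.1.2 * z.2.2) ^ (β-1)
private noncomputable def kerHa (β : ℝ) (φ ψ : ℝ → ℝ → ℝ) (z : (ℝ × ℝ) × ℝ × ℝ) : ℝ :=
  |φ z.1.1 z.1.2| * |ψ z.2.1 z.2.2| * |z.1.1 - z.2.1| ^ (2*β-2) * (z.1.2 ^ (β-1) * z.2.2 ^ (β-1))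
private noncomputable def kerHb (β : ℝ) (φ ψ : ℝ → ℝ → ℝ) (z : (ℝ × ℝ) × ℝ × ℝ) : ℝ :=
  |φ z.1.1 z.1.2| * |ψ z.2.1 z.2.2| * (z.1.1 ^ (β-1) * z.2.1 ^ (β-1)) * |z.1.2 - z.2.2| ^ (2*β-2)

private lemma absRpowII {r : ℝ} (hr : -1 < r) (a b : ℝ) :
    IntervalIntegrable (fun x => |x| ^ r) volume a b := by
  have h0 : ∀ c : ℝ, 0 ≤ c → IntervalIntegrable (fun x => |x| ^ r) volume 0 c := by
    intro c hc
    have h := intervalIntegral.intervalIntegrable_rpow' (a := 0) (b := c) hr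
    rw [intervalIntegrable_iff, uIoc_of_le hc] at h ⊢
    exact h.congr <| (ae_restrict_iff' measurableSet_Ioc).2 <| Filter.Eventually.of_forall
      fun x hx => by simp only []; rw [abs_of_pos hx.1]
  have h : ∀ c : ℝ, IntervalIntegrable (fun x => |x| ^ r) volume 0 c := by
    intro c
    rcases le_total 0 c with hc | hc
    · exact h0 c hc
    · rw [IntervalIntegrable.iff_comp_neg]
      simp only [abs_neg, neg_zero]
      exact h0 (-c) (by linarith)
  exact (h a).symm.trans (h b)

private lemma kerII {r : ℝ} (hr : -1 < r) (t a b : ℝ) :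
    IntervalIntegrable (fun s => |t - s| ^ r) volume a b := by
  have := (absRpowII hr (t - a) (t - b)).comp_sub_left t
  simpa using this

private lemma Jle {r : ℝ} (hr : -1 < r) {T t : ℝ} (hT : 0 < T) (ht : t ∈ Set.Ioc (0:ℝ) T) :
    (∫ s in Set.Ioc (0:ℝ) T, |t - s| ^ r) ≤ ∫ u in (-T)..T, |u| ^ r := by
  have hsub : Set.Ioc (0:ℝ) T ⊆ Set.Ioc (t - T) (t + T) :=
    Set.Ioc_subset_Ioc (by linarith [ht.2]) (by linarith [ht.1])
  have hint : IntegrableOn (fun s => |t - s| ^ r) (Set.Ioc (t - T) (t + T)) volume := by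
    have := kerII hr t (t - T) (t + T)
    rwa [intervalIntegrable_iff, uIoc_of_le (by linarith)] at this
  have h1 : (∫ s in Set.Ioc (0:ℝ) T, |t - s| ^ r) ≤ ∫ s in Set.Ioc (t-T) (t+T), |t - s| ^ r := by
    refine setIntegral_mono_set hint ?_ (Filter.Eventually.of_forall hsub)
    exact Filter.Eventually.of_forall fun s => Real.rpow_nonneg (abs_nonneg _) _
  have h2 : (∫ s in Set.Ioc (t-T) (t+T), |t - s| ^ r) = ∫ s in (t-T)..(t+T), |t - s| ^ r :=
    (intervalIntegral.integral_of_le (by linarith)).symm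
  have h3 : (∫ s in (t-T)..(t+T), |t - s| ^ r) = ∫ u in (t - (t+T))..(t - (t-T)), |u| ^ r :=
    intervalIntegral.integral_comp_sub_left (fun u => |u| ^ r) t
  have h4 : t - (t + T) = -T := by ring
  have h5 : t - (t - T) = T := by ring
  refine h1.trans (le_of_eq ?_)
  rw [h2, h3, h4, h5]

private lemma iter4_aux {μ : Measure ℝ} [SFinite μ] (F : (ℝ × ℝ) × ℝ × ℝ → ℝ)
    (hF : Integrable F ((μ.prod μ).prod (μ.prod μ))) :
    (∫ t₁, ∫ s₁, ∫ t₂, ∫ s₂, F ((t₁, s₁), (t₂, s₂)) ∂μ ∂μ ∂μ ∂μ)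
      = ∫ z, F z ∂((μ.prod μ).prod (μ.prod μ)) := by
  have h1 : Integrable (fun p => ∫ q, F (p, q) ∂(μ.prod μ)) (μ.prod μ) := hF.integral_prod_left
  have h2 : ∀ᵐ p ∂(μ.prod μ),
      (∫ q, F (p, q) ∂(μ.prod μ)) = ∫ t₂, ∫ s₂, F (p, (t₂, s₂)) ∂μ ∂μ := by
    filter_upwards [hF.prod_right_ae] with p hp
    exact integral_prod _ hp
  have h3 : Integrable (fun p : ℝ × ℝ => ∫ t₂, ∫ s₂, F (p, (t₂, s₂)) ∂μ ∂μ) (μ.prod μ) :=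
    h1.congr h2
  rw [integral_prod F hF, integral_congr_ae h2, integral_prod _ h3]

set_option maxHeartbeats 2000000 in
/-- Proposition 2.3, third inequality:
`|⟨φ,ψ⟩_{H^{⊗2}} − ⟨φ,ψ⟩_{H₁^{⊗2}}| ≤ ⟨φ,ψ⟩_{H₂^{⊗2}} + 2 C'_β |⟨Kφ, Kψ⟩_{H₁}|`. -/
theorem inner_H_tensor2_sub_inner_H1_tensor2_le
    (β : ℝ) (hβ : β ∈ Set.Ioo (1/2 : ℝ) 1)
    (Cβ Cβ' : ℝ) (hCβ : 0 < Cβ) (hCβ' : 0 ≤ Cβ')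
    (D : ℝ → ℝ → ℝ) (hD : Measurable (Function.uncurry D))
    (hDbound : ∀ t s : ℝ, 0 < t → 0 < s → t ≠ s →
      |D t s - Cβ * |t - s| ^ (2 * β - 2)| ≤ Cβ' * (t * s) ^ (β - 1))
    (T : ℝ) (hT : 0 < T)
    (φ ψ : ℝ → ℝ → ℝ)
    (hφ : Measurable (Function.uncurry φ)) (hψ : Measurable (Function.uncurry ψ))
    (hφsymm : ∀ t s : ℝ, φ t s = φ s t) (hψsymm : ∀ t s : ℝ, ψ t s = ψ s t)
    (M : ℝ) (hφM : ∀ t ∈ Set.Icc (0 : ℝ) T, ∀ s ∈ Set.Icc (0 : ℝ) T, |φ t s| ≤ M)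
    (hψM : ∀ t ∈ Set.Icc (0 : ℝ) T, ∀ s ∈ Set.Icc (0 : ℝ) T, |ψ t s| ≤ M) :
    |(∫ t₁ in (0:ℝ)..T, ∫ s₁ in (0:ℝ)..T, ∫ t₂ in (0:ℝ)..T, ∫ s₂ in (0:ℝ)..T,
        φ t₁ s₁ * ψ t₂ s₂ * D t₁ t₂ * D s₁ s₂)
      - Cβ ^ 2 * ∫ t₁ in (0:ℝ)..T, ∫ s₁ in (0:ℝ)..T, ∫ t₂ in (0:ℝ)..T, ∫ s₂ in (0:ℝ)..T,
        φ t₁ s₁ * ψ t₂ s₂ * |t₁ - t₂| ^ (2 * β - 2) * |s₁ - s₂| ^ (2 * β - 2)|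
    ≤ Cβ' ^ 2 * (∫ t₁ in (0:ℝ)..T, ∫ s₁ in (0:ℝ)..T, ∫ t₂ in (0:ℝ)..T, ∫ s₂ in (0:ℝ)..T,
        |φ t₁ s₁ * ψ t₂ s₂| * (t₁ * t₂) ^ (β - 1) * (s₁ * s₂) ^ (β - 1))
      + 2 * Cβ' * |Cβ * ∫ r₁ in (0:ℝ)..T, ∫ r₂ in (0:ℝ)..T,
          (∫ u in (0:ℝ)..T, |φ r₁ u| * u ^ (β - 1)) * (∫ u in (0:ℝ)..T, |ψ r₂ u| * u ^ (β - 1))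
            * |r₁ - r₂| ^ (2 * β - 2)| := by
  obtain ⟨hbl, hbu⟩ := hβ
  have hr : (-1:ℝ) < 2*β - 2 := by linarith
  have hb' : (-1:ℝ) < β - 1 := by linarith
  have hM0 : 0 ≤ M := (abs_nonneg _).trans (hφM 0 ⟨le_rfl, hT.le⟩ 0 ⟨le_rfl, hT.le⟩)
  have hsub : Set.Ioc (0:ℝ) T ⊆ Set.Icc 0 T := Set.Ioc_subset_Icc_self
  have h2eq : (2 * β - 2 : ℝ) = 2*β - 2 := rfl
  simp only [intervalIntegral.integral_of_le hT.le]
  set μ : Measure ℝ := volume.restrict (Set.Ioc 0 T) with hμ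
  haveI hfin : IsFiniteMeasure μ := by
    rw [hμ]; exact ⟨by rw [Measure.restrict_apply_univ]; exact measure_Ioc_lt_top⟩
  haveI hNA : NullSingletonClass μ := by rw [hμ]; infer_instance
  -- basic measurability
  have mabs : Measurable fun x : ℝ => |x| := continuous_abs.measurable
  have mB : Measurable fun p : ℝ × ℝ => kerB β p.1 p.2 := by
    unfold kerB
    exact ((mabs.comp (measurable_fst.sub measurable_snd)).pow measurable_const).add
      (((mabs.comp measurable_fst).pow measurable_const).mul
        ((mabs.comp measurable_snd).pow measurable_const))
  have mW : Measurable (kerW β) := by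
    unfold kerW
    exact (mB.comp ((measurable_fst.fst).prodMk (measurable_snd.fst))).mul
      (mB.comp ((measurable_fst.snd).prodMk (measurable_snd.snd)))
  -- one dimensional integrability
  have habsInt : Integrable (fun s : ℝ => |s| ^ (β-1)) μ := by
    rw [hμ]
    have := absRpowII hb' 0 T
    rwa [intervalIntegrable_iff, uIoc_of_le hT.le] at this
  have hkerInt : ∀ t : ℝ, Integrable (fun s => |t - s| ^ (2*β-2)) μ := by
    intro t; rw [hμ]
    have := kerII hr t 0 T
    rwa [intervalIntegrable_iff, uIoc_of_le hT.le] at this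
  have hB1Int : ∀ t : ℝ, Integrable (fun s => kerB β t s) μ := by
    intro t
    unfold kerB
    exact (hkerInt t).add (habsInt.const_mul _)
  have hJInt : Integrable (fun t : ℝ => ∫ s, |t - s| ^ (2*β-2) ∂μ) μ := by
    have hm : StronglyMeasurable fun t : ℝ => ∫ s, |t - s| ^ (2*β-2) ∂μ := by
      apply StronglyMeasurable.integral_prod_right
        (f := fun t s : ℝ => |t - s| ^ (2*β-2))
      exact ((mabs.comp (measurable_fst.sub measurable_snd)).pow measurable_const).stronglyMeasurable
    refine Integrable.mono' (integrable_const (∫ u in (-T)..T, |u| ^ (2*β-2)))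
      hm.aestronglyMeasurable ?_
    have hmem : ∀ᵐ t ∂μ, t ∈ Set.Ioc (0:ℝ) T := by
      rw [hμ]; exact ae_restrict_mem measurableSet_Ioc
    filter_upwards [hmem] with t ht
    rw [Real.norm_eq_abs,
      abs_of_nonneg (integral_nonneg fun s => Real.rpow_nonneg (abs_nonneg _) _), hμ]
    exact Jle hr hT ht
  have hb1Int : Integrable (fun t : ℝ => ∫ s, kerB β t s ∂μ) μ := by
    have heq : (fun t : ℝ => ∫ s, kerB β t s ∂μ)
        = fun t => (∫ s, |t - s| ^ (2*β-2) ∂μ) + |t| ^ (β-1) * ∫ s, |s| ^ (β-1) ∂μ := by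
      funext t
      unfold kerB
      rw [integral_add (hkerInt t) (habsInt.const_mul _), integral_const_mul]
    rw [heq]
    exact hJInt.add (habsInt.mul_const _)
  have hB0 : ∀ t u : ℝ, 0 ≤ kerB β t u := fun t u =>
    add_nonneg (Real.rpow_nonneg (abs_nonneg _) _)
      (mul_nonneg (Real.rpow_nonneg (abs_nonneg _) _) (Real.rpow_nonneg (abs_nonneg _) _))
  -- integrability of the dominating kernel W on the fourfold product
  have intW : Integrable (kerW β) ((μ.prod μ).prod (μ.prod μ)) := by
    refine (integrable_prod_iff mW.aestronglyMeasurable).2 ⟨?_, ?_⟩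
    · exact Filter.Eventually.of_forall fun p => (hB1Int p.1).mul_prod (hB1Int p.2)
    · have heq : (fun p : ℝ × ℝ => ∫ q, ‖kerW β (p, q)‖ ∂(μ.prod μ))
          = fun p => (∫ s, kerB β p.1 s ∂μ) * ∫ s, kerB β p.2 s ∂μ := by
        funext p
        have h1 : ∀ q : ℝ × ℝ, ‖kerW β (p, q)‖ = kerB β p.1 q.1 * kerB β p.2 q.2 := fun q => by
          unfold kerW
          rw [Real.norm_eq_abs, abs_of_nonneg (mul_nonneg (hB0 _ _) (hB0 _ _))]
        simp only [h1]
        exact integral_prod_mul (fun s => kerB β p.1 s) (fun s => kerB β p.2 s)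
      rw [heq]
      exact hb1Int.mul_prod hb1Int
  -- master integrability criterion
  have master : ∀ Θ : (ℝ × ℝ) × ℝ × ℝ → ℝ, Measurable Θ → ∀ c : ℝ,
      (∀ᵐ z ∂((μ.prod μ).prod (μ.prod μ)), |Θ z| ≤ c * kerW β z) →
      Integrable Θ ((μ.prod μ).prod (μ.prod μ)) := by
    intro Θ hm c hb
    refine (intW.const_mul c).mono' hm.aestronglyMeasurable ?_
    filter_upwards [hb] with z hz
    simpa [Real.norm_eq_abs] using hz
  -- a.e. facts
  have hmemS : ∀ᵐ z ∂((μ.prod μ).prod (μ.prod μ)),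
      (z.1.1 ∈ Set.Ioc (0:ℝ) T ∧ z.1.2 ∈ Set.Ioc (0:ℝ) T) ∧
      (z.2.1 ∈ Set.Ioc (0:ℝ) T ∧ z.2.2 ∈ Set.Ioc (0:ℝ) T) := by
    rw [hμ, Measure.prod_restrict, Measure.prod_restrict]
    filter_upwards [ae_restrict_mem ((measurableSet_Ioc.prod measurableSet_Ioc).prod
      (measurableSet_Ioc.prod measurableSet_Ioc))] with z hz
    exact hz
  have hzt : ∀ᵐ z ∂((μ.prod μ).prod (μ.prod μ)), z.1.1 ≠ z.2.1 := by
    have hms : MeasurableSet {z : (ℝ×ℝ)×ℝ×ℝ | z.1.1 = z.2.1} :=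
      measurableSet_eq_fun measurable_fst.fst measurable_snd.fst
    have h0 : ((μ.prod μ).prod (μ.prod μ)) {z : (ℝ×ℝ)×ℝ×ℝ | z.1.1 = z.2.1} = 0 := by
      rw [Measure.prod_apply hms]
      have h1 : ∀ p : ℝ × ℝ, (μ.prod μ) (Prod.mk p ⁻¹' {z : (ℝ×ℝ)×ℝ×ℝ | z.1.1 = z.2.1}) = 0 := by
        intro p
        have hset : (Prod.mk p ⁻¹' {z : (ℝ×ℝ)×ℝ×ℝ | z.1.1 = z.2.1})
            = ({p.1} : Set ℝ) ×ˢ (Set.univ : Set ℝ) := by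
          ext q
          simp only [Set.mem_preimage, Set.mem_setOf_eq, Set.mem_prod, Set.mem_singleton_iff,
            Set.mem_univ, and_true]
          exact eq_comm
        rw [hset, Measure.prod_prod]
        simp [measure_singleton]
      simp only [h1, lintegral_zero]
    have hsets : {z : (ℝ×ℝ)×ℝ×ℝ | ¬ z.1.1 ≠ z.2.1} = {z : (ℝ×ℝ)×ℝ×ℝ | z.1.1 = z.2.1} := by
      ext z; simp
    rw [ae_iff, hsets]
    exact h0
  have hzs : ∀ᵐ z ∂((μ.prod μ).prod (μ.prod μ)), z.1.2 ≠ z.2.2 := by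
    have hms : MeasurableSet {z : (ℝ×ℝ)×ℝ×ℝ | z.1.2 = z.2.2} :=
      measurableSet_eq_fun measurable_fst.snd measurable_snd.snd
    have h0 : ((μ.prod μ).prod (μ.prod μ)) {z : (ℝ×ℝ)×ℝ×ℝ | z.1.2 = z.2.2} = 0 := by
      rw [Measure.prod_apply hms]
      have h1 : ∀ p : ℝ × ℝ, (μ.prod μ) (Prod.mk p ⁻¹' {z : (ℝ×ℝ)×ℝ×ℝ | z.1.2 = z.2.2}) = 0 := by
        intro p
        have hset : (Prod.mk p ⁻¹' {z : (ℝ×ℝ)×ℝ×ℝ | z.1.2 = z.2.2})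
            = (Set.univ : Set ℝ) ×ˢ ({p.2} : Set ℝ) := by
          ext q
          simp only [Set.mem_preimage, Set.mem_setOf_eq, Set.mem_prod, Set.mem_singleton_iff,
            Set.mem_univ, true_and]
          exact eq_comm
        rw [hset, Measure.prod_prod]
        simp [measure_singleton]
      simp only [h1, lintegral_zero]
    have hsets : {z : (ℝ×ℝ)×ℝ×ℝ | ¬ z.1.2 ≠ z.2.2} = {z : (ℝ×ℝ)×ℝ×ℝ | z.1.2 = z.2.2} := by
      ext z; simp
    rw [ae_iff, hsets]
    exact h0
  -- pointwise bounds
  have hφle : ∀ t u : ℝ, t ∈ Set.Ioc (0:ℝ) T → u ∈ Set.Ioc (0:ℝ) T → |φ t u| ≤ M :=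
    fun t u ht hu => hφM t (hsub ht) u (hsub hu)
  have hψle : ∀ t u : ℝ, t ∈ Set.Ioc (0:ℝ) T → u ∈ Set.Ioc (0:ℝ) T → |ψ t u| ≤ M :=
    fun t u ht hu => hψM t (hsub ht) u (hsub hu)
  have hKle : ∀ t u : ℝ, |t - u| ^ (2*β-2) ≤ kerB β t u := fun t u =>
    le_add_of_nonneg_right
      (mul_nonneg (Real.rpow_nonneg (abs_nonneg _) _) (Real.rpow_nonneg (abs_nonneg _) _))
  have hPmul : ∀ t u : ℝ, t ∈ Set.Ioc (0:ℝ) T → u ∈ Set.Ioc (0:ℝ) T →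
      (t * u) ^ (β-1) = |t| ^ (β-1) * |u| ^ (β-1) := by
    intro t u ht hu
    rw [abs_of_pos ht.1, abs_of_pos hu.1, ← Real.mul_rpow ht.1.le hu.1.le]
  have hPle : ∀ t u : ℝ, t ∈ Set.Ioc (0:ℝ) T → u ∈ Set.Ioc (0:ℝ) T →
      (t * u) ^ (β-1) ≤ kerB β t u := by
    intro t u ht hu
    rw [hPmul t u ht hu]
    exact le_add_of_nonneg_left (Real.rpow_nonneg (abs_nonneg _) _)
  have hDle : ∀ t u : ℝ, t ∈ Set.Ioc (0:ℝ) T → u ∈ Set.Ioc (0:ℝ) T → t ≠ u →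
      |D t u| ≤ (Cβ + Cβ') * kerB β t u := by
    intro t u ht hu hne
    have h := hDbound t u ht.1 hu.1 hne
    have h3 := abs_sub_abs_le_abs_sub (D t u) (Cβ * |t - u| ^ (2*β-2))
    have h4 : |Cβ * |t - u| ^ (2*β-2)| = Cβ * |t - u| ^ (2*β-2) :=
      abs_of_nonneg (mul_nonneg hCβ.le (Real.rpow_nonneg (abs_nonneg _) _))
    have h5 := hPmul t u ht hu
    have hK0 : (0:ℝ) ≤ |t - u| ^ (2*β-2) := Real.rpow_nonneg (abs_nonneg _) _
    have hP0 : (0:ℝ) ≤ |t| ^ (β-1) * |u| ^ (β-1) :=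
      mul_nonneg (Real.rpow_nonneg (abs_nonneg _) _) (Real.rpow_nonneg (abs_nonneg _) _)
    unfold kerB
    nlinarith [mul_nonneg hCβ.le hP0, mul_nonneg hCβ' hK0]
  -- measurability of the integrands
  have mφz : Measurable fun z : (ℝ×ℝ)×ℝ×ℝ => φ z.1.1 z.1.2 := hφ.comp measurable_fst
  have mψz : Measurable fun z : (ℝ×ℝ)×ℝ×ℝ => ψ z.2.1 z.2.2 := hψ.comp measurable_snd
  have mD1 : Measurable fun z : (ℝ×ℝ)×ℝ×ℝ => D z.1.1 z.2.1 :=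
    hD.comp (measurable_fst.fst.prodMk measurable_snd.fst)
  have mD2 : Measurable fun z : (ℝ×ℝ)×ℝ×ℝ => D z.1.2 z.2.2 :=
    hD.comp (measurable_fst.snd.prodMk measurable_snd.snd)
  have mK1 : Measurable fun z : (ℝ×ℝ)×ℝ×ℝ => |z.1.1 - z.2.1| ^ (2*β-2) :=
    (mabs.comp (measurable_fst.fst.sub measurable_snd.fst)).pow measurable_const
  have mK2 : Measurable fun z : (ℝ×ℝ)×ℝ×ℝ => |z.1.2 - z.2.2| ^ (2*β-2) :=
    (mabs.comp (measurable_fst.snd.sub measurable_snd.snd)).pow measurable_const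
  have mF : Measurable (kerF D φ ψ) := by
    unfold kerF; exact ((mφz.mul mψz).mul mD1).mul mD2
  have mG : Measurable (kerG β φ ψ) := by
    unfold kerG; exact ((mφz.mul mψz).mul mK1).mul mK2
  have mH1 : Measurable (kerH1 β φ ψ) := by
    unfold kerH1
    exact ((mabs.comp (mφz.mul mψz)).mul
      ((measurable_fst.fst.mul measurable_snd.fst).pow measurable_const)).mul
      ((measurable_fst.snd.mul measurable_snd.snd).pow measurable_const)
  have mHa : Measurable (kerHa β φ ψ) := by
    unfold kerHa
    exact (((mabs.comp mφz).mul (mabs.comp mψz)).mul mK1).mul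
      ((measurable_fst.snd.pow measurable_const).mul (measurable_snd.snd.pow measurable_const))
  have mHb : Measurable (kerHb β φ ψ) := by
    unfold kerHb
    exact (((mabs.comp mφz).mul (mabs.comp mψz)).mul
      ((measurable_fst.fst.pow measurable_const).mul (measurable_snd.fst.pow measurable_const))).mul
      mK2
  -- a.e. bounds by the dominating kernel
  have hFb : ∀ᵐ z ∂((μ.prod μ).prod (μ.prod μ)),
      |kerF D φ ψ z| ≤ (M * M * ((Cβ+Cβ') * (Cβ+Cβ'))) * kerW β z := by
    filter_upwards [hmemS, hzt, hzs] with z hz hnt hns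
    obtain ⟨⟨h11, h12⟩, h21, h22⟩ := hz
    have b1 := hφle _ _ h11 h12
    have b2 := hψle _ _ h21 h22
    have b3 := hDle _ _ h11 h21 hnt
    have b4 := hDle _ _ h12 h22 hns
    have hBB1 : 0 ≤ (Cβ+Cβ') * kerB β z.1.1 z.2.1 := mul_nonneg (by linarith) (hB0 _ _)
    calc |kerF D φ ψ z|
        = |φ z.1.1 z.1.2| * |ψ z.2.1 z.2.2| * |D z.1.1 z.2.1| * |D z.1.2 z.2.2| := by
          unfold kerF; rw [abs_mul, abs_mul, abs_mul]
      _ ≤ M * M * ((Cβ+Cβ') * kerB β z.1.1 z.2.1) * ((Cβ+Cβ') * kerB β z.1.2 z.2.2) := by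
          refine mul_le_mul (mul_le_mul (mul_le_mul b1 b2 (abs_nonneg _) hM0) b3
            (abs_nonneg _) (mul_nonneg hM0 hM0)) b4 (abs_nonneg _) ?_
          exact mul_nonneg (mul_nonneg hM0 hM0) hBB1
      _ = (M * M * ((Cβ+Cβ') * (Cβ+Cβ'))) * kerW β z := by unfold kerW; ring
  have hGb : ∀ᵐ z ∂((μ.prod μ).prod (μ.prod μ)),
      |kerG β φ ψ z| ≤ (M * M) * kerW β z := by
    filter_upwards [hmemS] with z hz
    obtain ⟨⟨h11, h12⟩, h21, h22⟩ := hz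
    have b1 := hφle _ _ h11 h12
    have b2 := hψle _ _ h21 h22
    have b3 : |(|z.1.1 - z.2.1| ^ (2*β-2))| ≤ kerB β z.1.1 z.2.1 := by
      rw [abs_of_nonneg (Real.rpow_nonneg (abs_nonneg _) _)]; exact hKle _ _
    have b4 : |(|z.1.2 - z.2.2| ^ (2*β-2))| ≤ kerB β z.1.2 z.2.2 := by
      rw [abs_of_nonneg (Real.rpow_nonneg (abs_nonneg _) _)]; exact hKle _ _
    calc |kerG β φ ψ z|
        = |φ z.1.1 z.1.2| * |ψ z.2.1 z.2.2| * |(|z.1.1 - z.2.1| ^ (2*β-2))|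
            * |(|z.1.2 - z.2.2| ^ (2*β-2))| := by
          unfold kerG; rw [abs_mul, abs_mul, abs_mul]
      _ ≤ M * M * kerB β z.1.1 z.2.1 * kerB β z.1.2 z.2.2 := by
          refine mul_le_mul (mul_le_mul (mul_le_mul b1 b2 (abs_nonneg _) hM0) b3
            (abs_nonneg _) (mul_nonneg hM0 hM0)) b4 (abs_nonneg _) ?_
          exact mul_nonneg (mul_nonneg hM0 hM0) (hB0 _ _)
      _ = (M * M) * kerW β z := by unfold kerW; ring
  have hH1b : ∀ᵐ z ∂((μ.prod μ).prod (μ.prod μ)),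
      |kerH1 β φ ψ z| ≤ (M * M) * kerW β z := by
    filter_upwards [hmemS] with z hz
    obtain ⟨⟨h11, h12⟩, h21, h22⟩ := hz
    have b1 := hφle _ _ h11 h12
    have b2 := hψle _ _ h21 h22
    have hP1 : (0:ℝ) ≤ (z.1.1 * z.2.1) ^ (β-1) :=
      Real.rpow_nonneg (mul_nonneg h11.1.le h21.1.le) _
    have hP2 : (0:ℝ) ≤ (z.1.2 * z.2.2) ^ (β-1) :=
      Real.rpow_nonneg (mul_nonneg h12.1.le h22.1.le) _
    have hab : |φ z.1.1 z.1.2 * ψ z.2.1 z.2.2| ≤ M * M := by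
      rw [abs_mul]; exact mul_le_mul b1 b2 (abs_nonneg _) hM0
    calc |kerH1 β φ ψ z|
        = |φ z.1.1 z.1.2 * ψ z.2.1 z.2.2| * (z.1.1 * z.2.1) ^ (β-1)
            * (z.1.2 * z.2.2) ^ (β-1) := by
          unfold kerH1
          rw [abs_of_nonneg (mul_nonneg (mul_nonneg (abs_nonneg _) hP1) hP2)]
      _ ≤ M * M * kerB β z.1.1 z.2.1 * kerB β z.1.2 z.2.2 := by
          refine mul_le_mul (mul_le_mul hab (hPle _ _ h11 h21) hP1 (mul_nonneg hM0 hM0))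
            (hPle _ _ h12 h22) hP2 ?_
          exact mul_nonneg (mul_nonneg hM0 hM0) (hB0 _ _)
      _ = (M * M) * kerW β z := by unfold kerW; ring
  have hHab : ∀ᵐ z ∂((μ.prod μ).prod (μ.prod μ)),
      |kerHa β φ ψ z| ≤ (M * M) * kerW β z := by
    filter_upwards [hmemS] with z hz
    obtain ⟨⟨h11, h12⟩, h21, h22⟩ := hz
    have b1 := hφle _ _ h11 h12
    have b2 := hψle _ _ h21 h22
    have hK0 : (0:ℝ) ≤ |z.1.1 - z.2.1| ^ (2*β-2) := Real.rpow_nonneg (abs_nonneg _) _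
    have hP0 : (0:ℝ) ≤ z.1.2 ^ (β-1) * z.2.2 ^ (β-1) :=
      mul_nonneg (Real.rpow_nonneg h12.1.le _) (Real.rpow_nonneg h22.1.le _)
    have hsB : z.1.2 ^ (β-1) * z.2.2 ^ (β-1) ≤ kerB β z.1.2 z.2.2 := by
      unfold kerB
      rw [abs_of_pos h12.1, abs_of_pos h22.1]
      exact le_add_of_nonneg_left (Real.rpow_nonneg (abs_nonneg _) _)
    calc |kerHa β φ ψ z|
        = |φ z.1.1 z.1.2| * |ψ z.2.1 z.2.2| * |z.1.1 - z.2.1| ^ (2*β-2)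
            * (z.1.2 ^ (β-1) * z.2.2 ^ (β-1)) := by
          unfold kerHa
          rw [abs_of_nonneg (mul_nonneg (mul_nonneg
            (mul_nonneg (abs_nonneg _) (abs_nonneg _)) hK0) hP0)]
      _ ≤ M * M * kerB β z.1.1 z.2.1 * kerB β z.1.2 z.2.2 := by
          refine mul_le_mul (mul_le_mul (mul_le_mul b1 b2 (abs_nonneg _) hM0) (hKle _ _)
            hK0 (mul_nonneg hM0 hM0)) hsB hP0 ?_
          exact mul_nonneg (mul_nonneg hM0 hM0) (hB0 _ _)
      _ = (M * M) * kerW β z := by unfold kerW; ring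
  have hHbb : ∀ᵐ z ∂((μ.prod μ).prod (μ.prod μ)),
      |kerHb β φ ψ z| ≤ (M * M) * kerW β z := by
    filter_upwards [hmemS] with z hz
    obtain ⟨⟨h11, h12⟩, h21, h22⟩ := hz
    have b1 := hφle _ _ h11 h12
    have b2 := hψle _ _ h21 h22
    have hK0 : (0:ℝ) ≤ |z.1.2 - z.2.2| ^ (2*β-2) := Real.rpow_nonneg (abs_nonneg _) _
    have hP0 : (0:ℝ) ≤ z.1.1 ^ (β-1) * z.2.1 ^ (β-1) :=
      mul_nonneg (Real.rpow_nonneg h11.1.le _) (Real.rpow_nonneg h21.1.le _)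
    have htB : z.1.1 ^ (β-1) * z.2.1 ^ (β-1) ≤ kerB β z.1.1 z.2.1 := by
      unfold kerB
      rw [abs_of_pos h11.1, abs_of_pos h21.1]
      exact le_add_of_nonneg_left (Real.rpow_nonneg (abs_nonneg _) _)
    calc |kerHb β φ ψ z|
        = |φ z.1.1 z.1.2| * |ψ z.2.1 z.2.2| * (z.1.1 ^ (β-1) * z.2.1 ^ (β-1))
            * |z.1.2 - z.2.2| ^ (2*β-2) := by
          unfold kerHb
          rw [abs_of_nonneg (mul_nonneg (mul_nonneg
            (mul_nonneg (abs_nonneg _) (abs_nonneg _)) hP0) hK0)]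
      _ ≤ M * M * kerB β z.1.1 z.2.1 * kerB β z.1.2 z.2.2 := by
          refine mul_le_mul (mul_le_mul (mul_le_mul b1 b2 (abs_nonneg _) hM0) htB
            hP0 (mul_nonneg hM0 hM0)) (hKle _ _) hK0 ?_
          exact mul_nonneg (mul_nonneg hM0 hM0) (hB0 _ _)
      _ = (M * M) * kerW β z := by unfold kerW; ring
  -- integrabilities
  have hFint := master _ mF _ hFb
  have hGint := master _ mG _ hGb
  have hH1int := master _ mH1 _ hH1b
  have hHaint := master _ mHa _ hHab
  have hHbint := master _ mHb _ hHbb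
  -- key a.e. pointwise inequality
  have hkey : ∀ᵐ z ∂((μ.prod μ).prod (μ.prod μ)),
      |kerF D φ ψ z - Cβ^2 * kerG β φ ψ z|
        ≤ Cβ'^2 * kerH1 β φ ψ z + Cβ*Cβ'* kerHa β φ ψ z + Cβ*Cβ'* kerHb β φ ψ z := by
    filter_upwards [hmemS, hzt, hzs] with z hz hnt hns
    obtain ⟨⟨h11, h12⟩, h21, h22⟩ := hz
    have hE1 := hDbound z.1.1 z.2.1 h11.1 h21.1 hnt
    have hE2 := hDbound z.1.2 z.2.2 h12.1 h22.1 hns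
    have hsplit : (z.1.2 * z.2.2) ^ (β-1) = z.1.2 ^ (β-1) * z.2.2 ^ (β-1) :=
      Real.mul_rpow h12.1.le h22.1.le
    have hsplit' : (z.1.1 * z.2.1) ^ (β-1) = z.1.1 ^ (β-1) * z.2.1 ^ (β-1) :=
      Real.mul_rpow h11.1.le h21.1.le
    have hK1 : (0:ℝ) ≤ |z.1.1 - z.2.1| ^ (2*β-2) := Real.rpow_nonneg (abs_nonneg _) _
    have hK2 : (0:ℝ) ≤ |z.1.2 - z.2.2| ^ (2*β-2) := Real.rpow_nonneg (abs_nonneg _) _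
    have hP1 : (0:ℝ) ≤ (z.1.1 * z.2.1) ^ (β-1) :=
      Real.rpow_nonneg (mul_nonneg h11.1.le h21.1.le) _
    have decomp : kerF D φ ψ z - Cβ^2 * kerG β φ ψ z
        = (φ z.1.1 z.1.2 * ψ z.2.1 z.2.2)
            * ((D z.1.1 z.2.1 - Cβ * |z.1.1 - z.2.1| ^ (2*β-2))
              * (D z.1.2 z.2.2 - Cβ * |z.1.2 - z.2.2| ^ (2*β-2)))
          + Cβ * ((φ z.1.1 z.1.2 * ψ z.2.1 z.2.2)
            * (|z.1.1 - z.2.1| ^ (2*β-2)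
              * (D z.1.2 z.2.2 - Cβ * |z.1.2 - z.2.2| ^ (2*β-2))))
          + Cβ * ((φ z.1.1 z.1.2 * ψ z.2.1 z.2.2)
            * ((D z.1.1 z.2.1 - Cβ * |z.1.1 - z.2.1| ^ (2*β-2))
              * |z.1.2 - z.2.2| ^ (2*β-2))) := by
      unfold kerF kerG; ring
    have T1 : |(φ z.1.1 z.1.2 * ψ z.2.1 z.2.2)
        * ((D z.1.1 z.2.1 - Cβ * |z.1.1 - z.2.1| ^ (2*β-2))
          * (D z.1.2 z.2.2 - Cβ * |z.1.2 - z.2.2| ^ (2*β-2)))|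
        ≤ Cβ'^2 * kerH1 β φ ψ z := by
      calc |(φ z.1.1 z.1.2 * ψ z.2.1 z.2.2)
          * ((D z.1.1 z.2.1 - Cβ * |z.1.1 - z.2.1| ^ (2*β-2))
            * (D z.1.2 z.2.2 - Cβ * |z.1.2 - z.2.2| ^ (2*β-2)))|
          = |φ z.1.1 z.1.2| * |ψ z.2.1 z.2.2|
            * (|D z.1.1 z.2.1 - Cβ * |z.1.1 - z.2.1| ^ (2*β-2)|
              * |D z.1.2 z.2.2 - Cβ * |z.1.2 - z.2.2| ^ (2*β-2)|) := by
            rw [abs_mul, abs_mul, abs_mul]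
        _ ≤ |φ z.1.1 z.1.2| * |ψ z.2.1 z.2.2|
            * ((Cβ' * (z.1.1 * z.2.1) ^ (β-1)) * (Cβ' * (z.1.2 * z.2.2) ^ (β-1))) :=
            mul_le_mul_of_nonneg_left
              (mul_le_mul hE1 hE2 (abs_nonneg _) (mul_nonneg hCβ' hP1))
              (mul_nonneg (abs_nonneg _) (abs_nonneg _))
        _ = Cβ'^2 * kerH1 β φ ψ z := by unfold kerH1; rw [abs_mul]; ring
    have T2 : |Cβ * ((φ z.1.1 z.1.2 * ψ z.2.1 z.2.2)
        * (|z.1.1 - z.2.1| ^ (2*β-2)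
          * (D z.1.2 z.2.2 - Cβ * |z.1.2 - z.2.2| ^ (2*β-2))))|
        ≤ Cβ * Cβ' * kerHa β φ ψ z := by
      calc |Cβ * ((φ z.1.1 z.1.2 * ψ z.2.1 z.2.2)
          * (|z.1.1 - z.2.1| ^ (2*β-2)
            * (D z.1.2 z.2.2 - Cβ * |z.1.2 - z.2.2| ^ (2*β-2))))|
          = Cβ * ((|φ z.1.1 z.1.2| * |ψ z.2.1 z.2.2|)
            * (|z.1.1 - z.2.1| ^ (2*β-2)
              * |D z.1.2 z.2.2 - Cβ * |z.1.2 - z.2.2| ^ (2*β-2)|)) := by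
            rw [abs_mul, abs_mul, abs_mul, abs_mul, abs_of_pos hCβ, abs_of_nonneg hK1]
        _ ≤ Cβ * ((|φ z.1.1 z.1.2| * |ψ z.2.1 z.2.2|)
            * (|z.1.1 - z.2.1| ^ (2*β-2) * (Cβ' * (z.1.2 * z.2.2) ^ (β-1)))) := by
            refine mul_le_mul_of_nonneg_left (mul_le_mul_of_nonneg_left
              (mul_le_mul_of_nonneg_left hE2 hK1) ?_) hCβ.le
            exact mul_nonneg (abs_nonneg _) (abs_nonneg _)
        _ = Cβ * Cβ' * kerHa β φ ψ z := by unfold kerHa; rw [hsplit]; ring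
    have T3 : |Cβ * ((φ z.1.1 z.1.2 * ψ z.2.1 z.2.2)
        * ((D z.1.1 z.2.1 - Cβ * |z.1.1 - z.2.1| ^ (2*β-2))
          * |z.1.2 - z.2.2| ^ (2*β-2)))|
        ≤ Cβ * Cβ' * kerHb β φ ψ z := by
      calc |Cβ * ((φ z.1.1 z.1.2 * ψ z.2.1 z.2.2)
          * ((D z.1.1 z.2.1 - Cβ * |z.1.1 - z.2.1| ^ (2*β-2))
            * |z.1.2 - z.2.2| ^ (2*β-2)))|
          = Cβ * ((|φ z.1.1 z.1.2| * |ψ z.2.1 z.2.2|)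
            * (|D z.1.1 z.2.1 - Cβ * |z.1.1 - z.2.1| ^ (2*β-2)|
              * |z.1.2 - z.2.2| ^ (2*β-2))) := by
            rw [abs_mul, abs_mul, abs_mul, abs_mul, abs_of_pos hCβ, abs_of_nonneg hK2]
        _ ≤ Cβ * ((|φ z.1.1 z.1.2| * |ψ z.2.1 z.2.2|)
            * ((Cβ' * (z.1.1 * z.2.1) ^ (β-1)) * |z.1.2 - z.2.2| ^ (2*β-2))) := by
            refine mul_le_mul_of_nonneg_left (mul_le_mul_of_nonneg_left
              (mul_le_mul_of_nonneg_right hE1 hK2) ?_) hCβ.le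
            exact mul_nonneg (abs_nonneg _) (abs_nonneg _)
        _ = Cβ * Cβ' * kerHb β φ ψ z := by unfold kerHb; rw [hsplit']; ring
    rw [decomp]
    have habs := (abs_add_le (((φ z.1.1 z.1.2 * ψ z.2.1 z.2.2)
            * ((D z.1.1 z.2.1 - Cβ * |z.1.1 - z.2.1| ^ (2*β-2))
              * (D z.1.2 z.2.2 - Cβ * |z.1.2 - z.2.2| ^ (2*β-2))))
          + Cβ * ((φ z.1.1 z.1.2 * ψ z.2.1 z.2.2)
            * (|z.1.1 - z.2.1| ^ (2*β-2)
              * (D z.1.2 z.2.2 - Cβ * |z.1.2 - z.2.2| ^ (2*β-2)))))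
        (Cβ * ((φ z.1.1 z.1.2 * ψ z.2.1 z.2.2)
            * ((D z.1.1 z.2.1 - Cβ * |z.1.1 - z.2.1| ^ (2*β-2))
              * |z.1.2 - z.2.2| ^ (2*β-2)))))
    have habs2 := abs_add_le ((φ z.1.1 z.1.2 * ψ z.2.1 z.2.2)
            * ((D z.1.1 z.2.1 - Cβ * |z.1.1 - z.2.1| ^ (2*β-2))
              * (D z.1.2 z.2.2 - Cβ * |z.1.2 - z.2.2| ^ (2*β-2))))
        (Cβ * ((φ z.1.1 z.1.2 * ψ z.2.1 z.2.2)
            * (|z.1.1 - z.2.1| ^ (2*β-2)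
              * (D z.1.2 z.2.2 - Cβ * |z.1.2 - z.2.2| ^ (2*β-2)))))
    linarith
  -- the equalities between iterated and product integrals
  have eF : (∫ t₁, ∫ s₁, ∫ t₂, ∫ s₂, φ t₁ s₁ * ψ t₂ s₂ * D t₁ t₂ * D s₁ s₂ ∂μ ∂μ ∂μ ∂μ)
      = ∫ z, kerF D φ ψ z ∂((μ.prod μ).prod (μ.prod μ)) := iter4_aux _ hFint
  have eG : (∫ t₁, ∫ s₁, ∫ t₂, ∫ s₂,
        φ t₁ s₁ * ψ t₂ s₂ * |t₁ - t₂| ^ (2*β-2) * |s₁ - s₂| ^ (2*β-2) ∂μ ∂μ ∂μ ∂μ)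
      = ∫ z, kerG β φ ψ z ∂((μ.prod μ).prod (μ.prod μ)) := iter4_aux _ hGint
  have eH1 : (∫ t₁, ∫ s₁, ∫ t₂, ∫ s₂,
        |φ t₁ s₁ * ψ t₂ s₂| * (t₁ * t₂) ^ (β-1) * (s₁ * s₂) ^ (β-1) ∂μ ∂μ ∂μ ∂μ)
      = ∫ z, kerH1 β φ ψ z ∂((μ.prod μ).prod (μ.prod μ)) := iter4_aux _ hH1int
  -- the swap identity
  have hswap : (∫ z, kerHb β φ ψ z ∂((μ.prod μ).prod (μ.prod μ)))
      = ∫ z, kerHa β φ ψ z ∂((μ.prod μ).prod (μ.prod μ)) := by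
    have hmp : MeasurePreserving (Prod.map (Prod.swap : ℝ×ℝ → ℝ×ℝ) (Prod.swap : ℝ×ℝ → ℝ×ℝ))
        ((μ.prod μ).prod (μ.prod μ)) ((μ.prod μ).prod (μ.prod μ)) :=
      (Measure.measurePreserving_swap).prod (Measure.measurePreserving_swap)
    have hemb : MeasurableEmbedding
        (Prod.map (Prod.swap : ℝ×ℝ → ℝ×ℝ) (Prod.swap : ℝ×ℝ → ℝ×ℝ)) :=
      (MeasurableEquiv.prodCongr MeasurableEquiv.prodComm MeasurableEquiv.prodComm).measurableEmbedding
    have h2 := hmp.integral_comp hemb (kerHa β φ ψ)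
    rw [← h2]
    refine integral_congr_ae (Filter.Eventually.of_forall fun z => ?_)
    show kerHb β φ ψ z = kerHa β φ ψ (Prod.map Prod.swap Prod.swap z)
    unfold kerHa kerHb
    simp only [Prod.map_fst, Prod.map_snd, Prod.fst_swap, Prod.snd_swap]
    rw [hφsymm z.1.1 z.1.2, hψsymm z.2.1 z.2.2]
    ring
  -- the Ha integral equals the double integral X
  have eHa2 : (∫ t₁, ∫ s₁, ∫ t₂, ∫ s₂,
        |φ t₁ s₁| * |ψ t₂ s₂| * |t₁ - t₂| ^ (2*β-2) * (s₁ ^ (β-1) * s₂ ^ (β-1)) ∂μ ∂μ ∂μ ∂μ)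
      = ∫ r₁, ∫ r₂, (∫ u, |φ r₁ u| * u ^ (β-1) ∂μ) * (∫ u, |ψ r₂ u| * u ^ (β-1) ∂μ)
          * |r₁ - r₂| ^ (2*β-2) ∂μ ∂μ := by
    refine integral_congr_ae (Filter.Eventually.of_forall fun t₁ => ?_)
    have hC : ∀ s₁ : ℝ, (∫ t₂, ∫ s₂,
          |φ t₁ s₁| * |ψ t₂ s₂| * |t₁ - t₂| ^ (2*β-2) * (s₁ ^ (β-1) * s₂ ^ (β-1)) ∂μ ∂μ)
        = (|φ t₁ s₁| * s₁ ^ (β-1))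
            * ∫ t₂, (∫ u, |ψ t₂ u| * u ^ (β-1) ∂μ) * |t₁ - t₂| ^ (2*β-2) ∂μ := by
      intro s₁
      rw [← integral_const_mul]
      refine integral_congr_ae (Filter.Eventually.of_forall fun t₂ => ?_)
      simp only []
      rw [show (|φ t₁ s₁| * s₁ ^ (β-1))
            * ((∫ u, |ψ t₂ u| * u ^ (β-1) ∂μ) * |t₁ - t₂| ^ (2*β-2))
          = (|φ t₁ s₁| * s₁ ^ (β-1) * |t₁ - t₂| ^ (2*β-2))
            * ∫ u, |ψ t₂ u| * u ^ (β-1) ∂μ from by ring]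
      rw [← integral_const_mul]
      refine integral_congr_ae (Filter.Eventually.of_forall fun s₂ => ?_)
      simp only []
      ring
    simp only [hC]
    rw [integral_mul_const, ← integral_const_mul]
    refine integral_congr_ae (Filter.Eventually.of_forall fun t₂ => ?_)
    simp only []
    ring
  have eHa : (∫ z, kerHa β φ ψ z ∂((μ.prod μ).prod (μ.prod μ)))
      = ∫ r₁, ∫ r₂, (∫ u, |φ r₁ u| * u ^ (β-1) ∂μ) * (∫ u, |ψ r₂ u| * u ^ (β-1) ∂μ)
          * |r₁ - r₂| ^ (2*β-2) ∂μ ∂μ :=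
    (iter4_aux (kerHa β φ ψ) hHaint).symm.trans eHa2
  -- positivity of X
  have hKφ0 : ∀ rr : ℝ, 0 ≤ ∫ u, |φ rr u| * u ^ (β-1) ∂μ := by
    intro rr; rw [hμ]
    exact setIntegral_nonneg measurableSet_Ioc
      fun u hu => mul_nonneg (abs_nonneg _) (Real.rpow_nonneg hu.1.le _)
  have hKψ0 : ∀ rr : ℝ, 0 ≤ ∫ u, |ψ rr u| * u ^ (β-1) ∂μ := by
    intro rr; rw [hμ]
    exact setIntegral_nonneg measurableSet_Ioc
      fun u hu => mul_nonneg (abs_nonneg _) (Real.rpow_nonneg hu.1.le _)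
  have hX0 : 0 ≤ ∫ r₁, ∫ r₂, (∫ u, |φ r₁ u| * u ^ (β-1) ∂μ) * (∫ u, |ψ r₂ u| * u ^ (β-1) ∂μ)
      * |r₁ - r₂| ^ (2*β-2) ∂μ ∂μ :=
    integral_nonneg fun r₁ => integral_nonneg fun r₂ =>
      mul_nonneg (mul_nonneg (hKφ0 r₁) (hKψ0 r₂)) (Real.rpow_nonneg (abs_nonneg _) _)
  have hXabs : |Cβ * ∫ r₁, ∫ r₂, (∫ u, |φ r₁ u| * u ^ (β-1) ∂μ)
        * (∫ u, |ψ r₂ u| * u ^ (β-1) ∂μ) * |r₁ - r₂| ^ (2*β-2) ∂μ ∂μ|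
      = Cβ * ∫ r₁, ∫ r₂, (∫ u, |φ r₁ u| * u ^ (β-1) ∂μ)
        * (∫ u, |ψ r₂ u| * u ^ (β-1) ∂μ) * |r₁ - r₂| ^ (2*β-2) ∂μ ∂μ :=
    abs_of_nonneg (mul_nonneg hCβ.le hX0)
  -- packaged integrabilities with nice types
  have hGp : Integrable (fun z => Cβ^2 * kerG β φ ψ z) ((μ.prod μ).prod (μ.prod μ)) :=
    hGint.const_mul _
  have hH1p : Integrable (fun z => Cβ'^2 * kerH1 β φ ψ z) ((μ.prod μ).prod (μ.prod μ)) :=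
    hH1int.const_mul _
  have hHap : Integrable (fun z => Cβ*Cβ'* kerHa β φ ψ z) ((μ.prod μ).prod (μ.prod μ)) :=
    hHaint.const_mul _
  have hHbp : Integrable (fun z => Cβ*Cβ'* kerHb β φ ψ z) ((μ.prod μ).prod (μ.prod μ)) :=
    hHbint.const_mul _
  have hABp : Integrable (fun z => Cβ'^2 * kerH1 β φ ψ z + Cβ*Cβ'* kerHa β φ ψ z)
      ((μ.prod μ).prod (μ.prod μ)) := by exact hH1p.add hHap
  have hsumInt : Integrable
      (fun z => Cβ'^2 * kerH1 β φ ψ z + Cβ*Cβ'* kerHa β φ ψ z + Cβ*Cβ'* kerHb β φ ψ z)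
      ((μ.prod μ).prod (μ.prod μ)) := by exact hABp.add hHbp
  have habsFG : Integrable (fun z => |kerF D φ ψ z - Cβ^2 * kerG β φ ψ z|)
      ((μ.prod μ).prod (μ.prod μ)) := by exact (hFint.sub hGp).abs
  -- put everything together
  rw [eF, eG, eH1, hXabs]
  calc |(∫ z, kerF D φ ψ z ∂((μ.prod μ).prod (μ.prod μ)))
      - Cβ ^ 2 * ∫ z, kerG β φ ψ z ∂((μ.prod μ).prod (μ.prod μ))|
      = |∫ z, (kerF D φ ψ z - Cβ ^ 2 * kerG β φ ψ z) ∂((μ.prod μ).prod (μ.prod μ))| := by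
        rw [← integral_const_mul (Cβ ^ 2) (kerG β φ ψ),
          ← integral_sub hFint (hGint.const_mul (Cβ ^ 2))]
    _ ≤ ∫ z, |kerF D φ ψ z - Cβ ^ 2 * kerG β φ ψ z| ∂((μ.prod μ).prod (μ.prod μ)) := by
        simpa [Real.norm_eq_abs] using norm_integral_le_integral_norm
          (μ := (μ.prod μ).prod (μ.prod μ))
          (fun z => kerF D φ ψ z - Cβ ^ 2 * kerG β φ ψ z)
    _ ≤ ∫ z, (Cβ'^2 * kerH1 β φ ψ z + Cβ*Cβ'* kerHa β φ ψ z + Cβ*Cβ'* kerHb β φ ψ z)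
          ∂((μ.prod μ).prod (μ.prod μ)) :=
        integral_mono_ae habsFG hsumInt hkey
    _ = Cβ'^2 * (∫ z, kerH1 β φ ψ z ∂((μ.prod μ).prod (μ.prod μ)))
          + Cβ*Cβ'*(∫ z, kerHa β φ ψ z ∂((μ.prod μ).prod (μ.prod μ)))
          + Cβ*Cβ'*(∫ z, kerHb β φ ψ z ∂((μ.prod μ).prod (μ.prod μ))) := by
        rw [integral_add hABp hHbp, integral_add hH1p hHap,
          integral_const_mul, integral_const_mul, integral_const_mul]
    _ = Cβ' ^ 2 * (∫ z, kerH1 β φ ψ z ∂((μ.prod μ).prod (μ.prod μ)))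
          + 2 * Cβ' * (Cβ * ∫ r₁, ∫ r₂, (∫ u, |φ r₁ u| * u ^ (β-1) ∂μ)
            * (∫ u, |ψ r₂ u| * u ^ (β-1) ∂μ) * |r₁ - r₂| ^ (2*β-2) ∂μ ∂μ) := by
        rw [hswap, eHa]; ring
end

section
/- Let k > 0. There exists a constant C, depending only on k, β, C_β, C'_β and not on T, such that for every T > 0, |∫₀^T ∫₀^T e^{−k(u+v)} D(u,v) du dv| ≤ C. Equivalently, with m_T(u) := e^{−ku} 1_{[0,T]}(u), the quantity ∥m_T∥²_H — which equals the second moment E[M_T²] of the Wiener integral M_T = ∫₀^T e^{−ks} dG_s — is bounded uniformly in T. -/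
open MeasureTheory

open Set Real ENNReal in
/-- Lemma 3.4: the second moment `E[M_T²] = ‖m_T‖²_H` of the Wiener integral
`M_T = ∫₀^T e^{−ks} dG_s` is bounded uniformly in `T`. -/
theorem second_moment_MT_uniformly_bounded
    (β : ℝ) (hβ : β ∈ Set.Ioo (1/2 : ℝ) 1)
    (Cβ Cβ' : ℝ) (hCβ : 0 < Cβ) (hCβ' : 0 ≤ Cβ')
    (D : ℝ → ℝ → ℝ) (hD : Measurable (Function.uncurry D))
    (hDbound : ∀ t s : ℝ, 0 < t → 0 < s → t ≠ s →
      |D t s - Cβ * |t - s| ^ (2 * β - 2)| ≤ Cβ' * (t * s) ^ (β - 1))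
    (k : ℝ) (hk : 0 < k) :
    ∃ C : ℝ, ∀ T : ℝ, 0 < T →
      |∫ u in (0:ℝ)..T, ∫ v in (0:ℝ)..T, Real.exp (-k * (u + v)) * D u v| ≤ C := by
  obtain ⟨hβ1, hβ2⟩ := hβ
  set p : ℝ := 2 * β - 2 with hpdef
  have hp1 : (-1 : ℝ) < p := by rw [hpdef]; linarith
  have hp0 : p ≤ 0 := by rw [hpdef]; linarith
  -- interval integrability of |w| ^ p on [-1, 1]
  have hpos : IntervalIntegrable (fun w : ℝ => |w| ^ p) volume 0 1 := by
    have h01 : IntervalIntegrable (fun w : ℝ => w ^ p) volume 0 1 :=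
      intervalIntegral.intervalIntegrable_rpow' hp1
    rw [intervalIntegrable_iff_integrableOn_Ioc_of_le zero_le_one] at h01 ⊢
    exact h01.congr_fun (fun w hw => by rw [abs_of_pos hw.1]) measurableSet_Ioc
  have hIA : IntervalIntegrable (fun w : ℝ => |w| ^ p) volume (-1) 1 := by
    have hneg : IntervalIntegrable (fun w : ℝ => |w| ^ p) volume (-1) 0 := by
      have := (hpos.comp_sub_left 0).symm
      simpa using this
    exact hneg.trans hpos
  set A1 : ℝ := ∫ w in (-1 : ℝ)..(1 : ℝ), |w| ^ p with hA1def
  -- per-u translation facts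
  have hIu : ∀ u : ℝ, IntervalIntegrable (fun v => |u - v| ^ p) volume (u - 1) (u + 1) := by
    intro u
    have := (hIA.comp_sub_left u).symm
    simpa [sub_neg_eq_add] using this
  have hlintA : ∀ u : ℝ,
      (∫⁻ v in Ioc (u - 1) (u + 1), ENNReal.ofReal (|u - v| ^ p)) = ENNReal.ofReal A1 := by
    intro u
    have hint : IntegrableOn (fun v => |u - v| ^ p) (Ioc (u - 1) (u + 1)) :=
      (intervalIntegrable_iff_integrableOn_Ioc_of_le (by linarith)).1 (hIu u)
    rw [← ofReal_integral_eq_lintegral_ofReal hint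
      (ae_of_all _ fun v => rpow_nonneg (abs_nonneg _) _)]
    congr 1
    rw [← intervalIntegral.integral_of_le (by linarith : u - 1 ≤ u + 1)]
    rw [intervalIntegral.integral_comp_sub_left (fun w => |w| ^ p) u]
    have e1 : u - (u + 1) = -1 := by ring
    have e2 : u - (u - 1) = 1 := by ring
    rw [e1, e2]
  -- the two Ioi-integrals
  set eE : ℝ≥0∞ := ∫⁻ x in Ioi (0 : ℝ), ENNReal.ofReal (Real.exp (-k * x)) with heEdef
  have hEint : IntegrableOn (fun x : ℝ => Real.exp (-k * x)) (Ioi 0) :=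
    exp_neg_integrableOn_Ioi 0 hk
  have heEfin : eE ≠ ⊤ := by
    rw [heEdef, ← ofReal_integral_eq_lintegral_ofReal hEint
      (ae_of_all _ fun x => (Real.exp_pos _).le)]
    exact ENNReal.ofReal_ne_top
  set eB : ℝ≥0∞ := ∫⁻ x in Ioi (0 : ℝ), ENNReal.ofReal (Real.exp (-k * x) * x ^ (β - 1))
    with heBdef
  have hBint : IntegrableOn (fun x : ℝ => Real.exp (-k * x) * x ^ (β - 1)) (Ioi 0) := by
    have h := integrableOn_rpow_mul_exp_neg_mul_rpow
      (by linarith : (-1 : ℝ) < β - 1) (zero_lt_one : (0:ℝ) < 1) hk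
    refine h.congr_fun (fun x hx => ?_) measurableSet_Ioi
    dsimp only; rw [Real.rpow_one]; ring
  have heBfin : eB ≠ ⊤ := by
    rw [heBdef, ← ofReal_integral_eq_lintegral_ofReal hBint
      ((ae_restrict_iff' measurableSet_Ioi).2 (ae_of_all _ fun x hx => by
        have : (0:ℝ) < x := hx
        positivity))]
    exact ENNReal.ofReal_ne_top
  set eA : ℝ≥0∞ := ENNReal.ofReal A1 + eE with heAdef
  have heAfin : eA ≠ ⊤ := ENNReal.add_ne_top.2 ⟨ENNReal.ofReal_ne_top, heEfin⟩
  -- measurability helpers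
  have hmeasG1 : ∀ u : ℝ,
      Measurable fun v : ℝ => ENNReal.ofReal (Real.exp (-k * v) * |u - v| ^ p) := by
    intro u
    apply ENNReal.measurable_ofReal.comp
    exact ((Real.measurable_exp.comp (measurable_const.mul measurable_id)).mul
      (((measurable_const.sub measurable_id).abs).pow measurable_const))
  have hmeasG2 :
      Measurable fun v : ℝ => ENNReal.ofReal (Real.exp (-k * v) * v ^ (β - 1)) := by
    apply ENNReal.measurable_ofReal.comp
    exact ((Real.measurable_exp.comp (measurable_const.mul measurable_id)).mul
      (measurable_id.pow measurable_const))
  -- inner bound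
  have inner_bound : ∀ T : ℝ, 0 < T → ∀ u ∈ Ioc (0:ℝ) T,
      (∫⁻ v in Ioc (0:ℝ) T, (‖Real.exp (-k * (u + v)) * D u v‖₊ : ℝ≥0∞))
        ≤ ENNReal.ofReal (Real.exp (-k * u)) *
            (ENNReal.ofReal Cβ * eA + ENNReal.ofReal (Cβ' * u ^ (β - 1)) * eB) := by
    intro T hT u hu
    have hu0 : 0 < u := hu.1
    have hcu : 0 ≤ Cβ' * u ^ (β - 1) := mul_nonneg hCβ' (rpow_nonneg hu0.le _)
    have hae : ∀ᵐ v ∂(volume.restrict (Ioc (0:ℝ) T)),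
        (‖Real.exp (-k * (u + v)) * D u v‖₊ : ℝ≥0∞)
          ≤ ENNReal.ofReal (Real.exp (-k * u)) *
              (ENNReal.ofReal Cβ * ENNReal.ofReal (Real.exp (-k * v) * |u - v| ^ p)
                + ENNReal.ofReal (Cβ' * u ^ (β - 1)) *
                    ENNReal.ofReal (Real.exp (-k * v) * v ^ (β - 1))) := by
      have hne : ∀ᵐ v : ℝ, v ≠ u := by
        refine ae_iff.2 ?_
        have : {v : ℝ | ¬v ≠ u} = {u} := by ext v; simp [eq_comm]
        rw [this]
        exact measure_singleton u
      filter_upwards [ae_restrict_of_ae hne, ae_restrict_mem measurableSet_Ioc] with v hvne hv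
      have hv0 : 0 < v := hv.1
      have hD' : |D u v| ≤ Cβ * |u - v| ^ p + Cβ' * (u * v) ^ (β - 1) := by
        have h := hDbound u v hu0 hv0 (Ne.symm hvne)
        have hnn : 0 ≤ Cβ * |u - v| ^ p := mul_nonneg hCβ.le (rpow_nonneg (abs_nonneg _) _)
        have h2 : |D u v| - Cβ * |u - v| ^ p ≤ |D u v - Cβ * |u - v| ^ p| := by
          have h3 := abs_sub_abs_le_abs_sub (D u v) (Cβ * |u - v| ^ p)
          rw [abs_of_nonneg hnn] at h3
          exact h3
        linarith
      have hreal : |Real.exp (-k * (u + v)) * D u v|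
          ≤ Real.exp (-k * u) * (Cβ * (Real.exp (-k * v) * |u - v| ^ p)
              + (Cβ' * u ^ (β - 1)) * (Real.exp (-k * v) * v ^ (β - 1))) := by
        rw [abs_mul, abs_of_pos (Real.exp_pos _)]
        have hexp : Real.exp (-k * (u + v)) = Real.exp (-k * u) * Real.exp (-k * v) := by
          rw [← Real.exp_add]; ring_nf
        have hmul : (u * v) ^ (β - 1) = u ^ (β - 1) * v ^ (β - 1) :=
          Real.mul_rpow hu0.le hv0.le
        calc Real.exp (-k * (u + v)) * |D u v|
            ≤ Real.exp (-k * (u + v)) * (Cβ * |u - v| ^ p + Cβ' * (u * v) ^ (β - 1)) :=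
              mul_le_mul_of_nonneg_left hD' (Real.exp_pos _).le
          _ = _ := by rw [hexp, hmul]; ring
      calc (‖Real.exp (-k * (u + v)) * D u v‖₊ : ℝ≥0∞)
          = ENNReal.ofReal |Real.exp (-k * (u + v)) * D u v| :=
            Real.enorm_eq_ofReal_abs _
        _ ≤ ENNReal.ofReal (Real.exp (-k * u) * (Cβ * (Real.exp (-k * v) * |u - v| ^ p)
              + (Cβ' * u ^ (β - 1)) * (Real.exp (-k * v) * v ^ (β - 1)))) :=
            ENNReal.ofReal_le_ofReal hreal
        _ = _ := by
            rw [ENNReal.ofReal_mul (Real.exp_pos _).le,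
              ENNReal.ofReal_add
                (mul_nonneg hCβ.le (mul_nonneg (Real.exp_pos _).le
                  (rpow_nonneg (abs_nonneg _) _)))
                (mul_nonneg hcu (mul_nonneg (Real.exp_pos _).le (rpow_nonneg hv0.le _))),
              ENNReal.ofReal_mul hCβ.le, ENNReal.ofReal_mul hcu]
    have hG1 : (∫⁻ v in Ioc (0:ℝ) T, ENNReal.ofReal (Real.exp (-k * v) * |u - v| ^ p)) ≤ eA := by
      have hpt : ∀ v ∈ Ioc (0:ℝ) T,
          ENNReal.ofReal (Real.exp (-k * v) * |u - v| ^ p)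
            ≤ (Ioc (u - 1) (u + 1)).indicator
                (fun v => ENNReal.ofReal (|u - v| ^ p)) v
              + ENNReal.ofReal (Real.exp (-k * v)) := by
        intro v hv
        have hv0 : 0 < v := hv.1
        have hexple : Real.exp (-k * v) ≤ 1 :=
          Real.exp_le_one_iff.2 (by nlinarith)
        by_cases hmem : v ∈ Ioc (u - 1) (u + 1)
        · rw [Set.indicator_of_mem hmem]
          refine le_trans (ENNReal.ofReal_le_ofReal ?_) le_self_add
          exact mul_le_of_le_one_left (rpow_nonneg (abs_nonneg _) _) hexple
        · rw [Set.indicator_of_notMem hmem, zero_add]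
          apply ENNReal.ofReal_le_ofReal
          have h1 : 1 ≤ |u - v| := by
            rw [Set.mem_Ioc, not_and_or, not_lt, not_le] at hmem
            rcases hmem with h | h
            · rw [abs_of_nonneg (by linarith)]; linarith
            · rw [abs_of_nonpos (by linarith)]; linarith
          have h2 : |u - v| ^ p ≤ 1 := Real.rpow_le_one_of_one_le_of_nonpos h1 hp0
          calc Real.exp (-k * v) * |u - v| ^ p ≤ Real.exp (-k * v) * 1 :=
                mul_le_mul_of_nonneg_left h2 (Real.exp_pos _).le
            _ = Real.exp (-k * v) := mul_one _
      have hmeasind : Measurable ((Ioc (u - 1) (u + 1)).indicator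
          fun v => ENNReal.ofReal (|u - v| ^ p)) := by
        apply Measurable.indicator _ measurableSet_Ioc
        exact ENNReal.measurable_ofReal.comp
          (((measurable_const.sub measurable_id).abs).pow measurable_const)
      calc (∫⁻ v in Ioc (0:ℝ) T, ENNReal.ofReal (Real.exp (-k * v) * |u - v| ^ p))
          ≤ ∫⁻ v in Ioc (0:ℝ) T, ((Ioc (u - 1) (u + 1)).indicator
                (fun v => ENNReal.ofReal (|u - v| ^ p)) v
              + ENNReal.ofReal (Real.exp (-k * v))) :=
            lintegral_mono_ae ((ae_restrict_iff' measurableSet_Ioc).2 (ae_of_all _ hpt))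
        _ = (∫⁻ v in Ioc (0:ℝ) T, (Ioc (u - 1) (u + 1)).indicator
                (fun v => ENNReal.ofReal (|u - v| ^ p)) v)
              + ∫⁻ v in Ioc (0:ℝ) T, ENNReal.ofReal (Real.exp (-k * v)) :=
            lintegral_add_left hmeasind _
        _ ≤ (∫⁻ v, (Ioc (u - 1) (u + 1)).indicator
                (fun v => ENNReal.ofReal (|u - v| ^ p)) v) + eE := by
            gcongr
            · exact Measure.restrict_le_self
            · exact lintegral_mono_set Ioc_subset_Ioi_self
        _ = eA := by
            rw [lintegral_indicator measurableSet_Ioc, hlintA u, heAdef]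
    have hG2 : (∫⁻ v in Ioc (0:ℝ) T, ENNReal.ofReal (Real.exp (-k * v) * v ^ (β - 1))) ≤ eB :=
      lintegral_mono_set Ioc_subset_Ioi_self
    calc (∫⁻ v in Ioc (0:ℝ) T, (‖Real.exp (-k * (u + v)) * D u v‖₊ : ℝ≥0∞))
        ≤ ∫⁻ v in Ioc (0:ℝ) T,
            ENNReal.ofReal (Real.exp (-k * u)) *
              (ENNReal.ofReal Cβ * ENNReal.ofReal (Real.exp (-k * v) * |u - v| ^ p)
                + ENNReal.ofReal (Cβ' * u ^ (β - 1)) *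
                    ENNReal.ofReal (Real.exp (-k * v) * v ^ (β - 1))) :=
          lintegral_mono_ae hae
      _ = ENNReal.ofReal (Real.exp (-k * u)) *
            (ENNReal.ofReal Cβ *
                (∫⁻ v in Ioc (0:ℝ) T, ENNReal.ofReal (Real.exp (-k * v) * |u - v| ^ p))
              + ENNReal.ofReal (Cβ' * u ^ (β - 1)) *
                  (∫⁻ v in Ioc (0:ℝ) T,
                    ENNReal.ofReal (Real.exp (-k * v) * v ^ (β - 1)))) := by
          rw [lintegral_const_mul' _ _ ENNReal.ofReal_ne_top,
            lintegral_add_left ((hmeasG1 u).const_mul _),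
            lintegral_const_mul' _ _ ENNReal.ofReal_ne_top,
            lintegral_const_mul' _ _ ENNReal.ofReal_ne_top]
      _ ≤ _ := by gcongr
  -- the uniform constant
  set L : ℝ≥0∞ := ENNReal.ofReal Cβ * eA * eE + ENNReal.ofReal Cβ' * eB * eB with hLdef
  have hLfin : L ≠ ⊤ := by
    rw [hLdef]
    exact ENNReal.add_ne_top.2
      ⟨ENNReal.mul_ne_top (ENNReal.mul_ne_top ENNReal.ofReal_ne_top heAfin) heEfin,
        ENNReal.mul_ne_top (ENNReal.mul_ne_top ENNReal.ofReal_ne_top heBfin) heBfin⟩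
  refine ⟨L.toReal, fun T hT => ?_⟩
  rw [intervalIntegral.integral_of_le hT.le]
  simp only [intervalIntegral.integral_of_le hT.le]
  set F : ℝ → ℝ := fun u => ∫ v in Ioc (0:ℝ) T, Real.exp (-k * (u + v)) * D u v with hFdef
  have key : (‖∫ u in Ioc (0:ℝ) T, F u‖₊ : ℝ≥0∞) ≤ L := by
    calc (‖∫ u in Ioc (0:ℝ) T, F u‖₊ : ℝ≥0∞)
        ≤ ∫⁻ u in Ioc (0:ℝ) T, (‖F u‖₊ : ℝ≥0∞) := enorm_integral_le_lintegral_enorm _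
      _ ≤ ∫⁻ u in Ioc (0:ℝ) T,
            (ENNReal.ofReal Cβ * eA * ENNReal.ofReal (Real.exp (-k * u))
              + ENNReal.ofReal Cβ' * eB *
                  ENNReal.ofReal (Real.exp (-k * u) * u ^ (β - 1))) := by
          refine lintegral_mono_ae ((ae_restrict_iff' measurableSet_Ioc).2
            (ae_of_all _ fun u hu => ?_))
          have hu0 : 0 < u := hu.1
          calc (‖F u‖₊ : ℝ≥0∞)
              ≤ ∫⁻ v in Ioc (0:ℝ) T, (‖Real.exp (-k * (u + v)) * D u v‖₊ : ℝ≥0∞) :=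
                enorm_integral_le_lintegral_enorm _
            _ ≤ ENNReal.ofReal (Real.exp (-k * u)) *
                  (ENNReal.ofReal Cβ * eA + ENNReal.ofReal (Cβ' * u ^ (β - 1)) * eB) :=
                inner_bound T hT u hu
            _ = _ := by
                rw [ENNReal.ofReal_mul hCβ', ENNReal.ofReal_mul (Real.exp_pos _).le]
                ring
      _ = ENNReal.ofReal Cβ * eA *
              (∫⁻ u in Ioc (0:ℝ) T, ENNReal.ofReal (Real.exp (-k * u)))
            + ENNReal.ofReal Cβ' * eB *
                (∫⁻ u in Ioc (0:ℝ) T,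
                  ENNReal.ofReal (Real.exp (-k * u) * u ^ (β - 1))) := by
          have hmeasE : Measurable fun u : ℝ => ENNReal.ofReal (Real.exp (-k * u)) :=
            Measurable.ennreal_ofReal ((measurable_const.mul measurable_id).exp)
          rw [lintegral_add_left (hmeasE.const_mul _),
            lintegral_const_mul' _ _ (ENNReal.mul_ne_top ENNReal.ofReal_ne_top heAfin),
            lintegral_const_mul' _ _ (ENNReal.mul_ne_top ENNReal.ofReal_ne_top heBfin)]
      _ ≤ L := by
          rw [hLdef]
          gcongr
          · exact lintegral_mono_set Ioc_subset_Ioi_self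
          · exact lintegral_mono_set Ioc_subset_Ioi_self
  have habs := ENNReal.toReal_mono hLfin key
  simpa [Real.norm_eq_abs] using habs
end

section
/- Let k > 0. There exists a constant C, depending only on k, β, C_β, C'_β and not on T, such that for every T > 0, |∫₀^T ∫₀^T e^{−k(T−u)} e^{−k(T−v)} D(u,v) du dv| ≤ C. Equivalently, with k_T(s) := e^{−k(T−s)} 1_{[0,T]}(s), the quantity ∥k_T∥²_H — which equals the variance E[Z_T²] of the Wiener integral Z_T = ∫₀^T e^{−k(T−s)} dG_s — is bounded uniformly in T. -/
open MeasureTheory Set intervalIntegral Real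

private lemma int_exp_neg' (k a b : ℝ) (hk : k ≠ 0) :
    ∫ x in a..b, Real.exp (-k * x) = (Real.exp (-k*a) - Real.exp (-k*b))/k := by
  have h := intervalIntegral.integral_comp_mul_left (a := a) (b := b) Real.exp
    (neg_ne_zero.mpr hk)
  rw [h, integral_exp, smul_eq_mul, inv_neg, div_eq_mul_inv]
  ring

private lemma int_exp_sub' (k T a b : ℝ) (hk : k ≠ 0) :
    ∫ x in a..b, Real.exp (-k * (T - x))
      = (Real.exp (-k*(T-b)) - Real.exp (-k*(T-a)))/k := by
  rw [intervalIntegral.integral_comp_sub_left (fun x => Real.exp (-k * x)) T,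
    int_exp_neg' k _ _ hk]

private lemma expIntble' (g : ℝ → ℝ) (hg : Continuous g) {c : ℝ} (hc : -1 < c) (a b : ℝ) :
    IntervalIntegrable (fun x => g x * x ^ c) MeasureTheory.volume a b :=
  (intervalIntegrable_rpow' hc).continuousOn_mul hg.continuousOn

private lemma contExpNeg' (k : ℝ) : Continuous (fun x : ℝ => Real.exp (-k * x)) :=
  Real.continuous_exp.comp (by continuity)

private lemma contExpSub' (k T : ℝ) : Continuous (fun x : ℝ => Real.exp (-k * (T - x))) :=
  Real.continuous_exp.comp (by continuity)

private lemma exp_mul_le' (k z : ℝ) (hk : 0 < k) :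
    Real.exp (-k * z) * z ≤ 1/k := by
  have h1 : k * z + 1 ≤ Real.exp (k * z) := Real.add_one_le_exp _
  have h2 : Real.exp (-k * z) = (Real.exp (k * z))⁻¹ := by
    rw [← Real.exp_neg]; ring_nf
  have h3 : 0 < Real.exp (k * z) := Real.exp_pos _
  rw [h2, inv_mul_le_iff₀ h3, mul_one_div, le_div_iff₀ hk]
  nlinarith

private lemma S2' {c k : ℝ} (hc : -1 < c) (hc0 : c ≤ 0) (hk : 0 < k) {S : ℝ} (hS : 0 ≤ S) :
    ∫ x in (0:ℝ)..S, Real.exp (-k * x) * x ^ c ≤ 1/(c+1) + 1/k := by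
  have hc1 : 0 < c + 1 := by linarith
  have hint := expIntble' _ (contExpNeg' k) hc
  have key : ∀ a b : ℝ, 0 ≤ a → a ≤ b → b ≤ 1 →
      ∫ x in a..b, Real.exp (-k * x) * x ^ c ≤ 1/(c+1) := by
    intro a b ha hab hb1
    have h1 : ∫ x in a..b, Real.exp (-k * x) * x ^ c ≤ ∫ x in a..b, x ^ c := by
      apply intervalIntegral.integral_mono_on hab (hint a b) (intervalIntegrable_rpow' hc)
      intro x hx
      have hx0 : 0 ≤ x := ha.trans hx.1
      have hrp : 0 ≤ x ^ c := Real.rpow_nonneg hx0 c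
      have he : Real.exp (-k * x) ≤ 1 := Real.exp_le_one_iff.mpr (by nlinarith)
      nlinarith
    rw [integral_rpow (Or.inl hc)] at h1
    have hble : b ^ (c+1) ≤ 1 := Real.rpow_le_one (ha.trans hab) hb1 hc1.le
    have hage : 0 ≤ a ^ (c+1) := Real.rpow_nonneg ha _
    calc _ ≤ (b ^ (c+1) - a ^ (c+1))/(c+1) := h1
      _ ≤ 1/(c+1) := by gcongr <;> linarith
  by_cases hS1 : S ≤ 1
  · have h0 : (0:ℝ) ≤ 1/k := by positivity
    linarith [key 0 S le_rfl hS hS1]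
  · push_neg at hS1
    rw [← intervalIntegral.integral_add_adjacent_intervals (hint 0 1) (hint 1 S)]
    have hA := key 0 1 le_rfl zero_le_one le_rfl
    have hB : ∫ x in (1:ℝ)..S, Real.exp (-k * x) * x ^ c ≤ 1/k := by
      have h1 : ∫ x in (1:ℝ)..S, Real.exp (-k * x) * x ^ c
          ≤ ∫ x in (1:ℝ)..S, Real.exp (-k * x) := by
        apply intervalIntegral.integral_mono_on hS1.le (hint 1 S)
          ((contExpNeg' k).intervalIntegrable 1 S)
        intro x hx
        have hx1 : (1:ℝ) ≤ x := hx.1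
        have : x ^ c ≤ 1 := Real.rpow_le_one_of_one_le_of_nonpos hx1 hc0
        nlinarith [Real.exp_pos (-k * x)]
      rw [int_exp_neg' k 1 S hk.ne'] at h1
      have h2 : Real.exp (-k*1) ≤ 1 := Real.exp_le_one_iff.mpr (by nlinarith)
      have h3 : 0 < Real.exp (-k*S) := Real.exp_pos _
      calc _ ≤ (Real.exp (-k*1) - Real.exp (-k*S))/k := h1
        _ ≤ 1/k := by gcongr <;> linarith
    linarith

private lemma S3' {c k : ℝ} (hc : -1 < c) (hc0 : c ≤ 0) (hk : 0 < k) {T : ℝ} (hT : 0 < T) :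
    ∫ x in (0:ℝ)..T, Real.exp (-k * (T - x)) * x ^ c
      ≤ 2/(c+1) + 1/k + (1/k)/(c+1) := by
  have hc1 : 0 < c + 1 := by linarith
  have hint := expIntble' _ (contExpSub' k T) hc
  have hk1 : (0:ℝ) ≤ 1/k := by positivity
  have hkc : (0:ℝ) ≤ (1/k)/(c+1) := by positivity
  by_cases hT2 : T ≤ 2
  · have h1 : ∫ x in (0:ℝ)..T, Real.exp (-k * (T - x)) * x ^ c
        ≤ ∫ x in (0:ℝ)..T, x ^ c := by
      apply intervalIntegral.integral_mono_on hT.le (hint 0 T) (intervalIntegrable_rpow' hc)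
      intro x hx
      have hrp : 0 ≤ x ^ c := Real.rpow_nonneg hx.1 c
      have he : Real.exp (-k * (T - x)) ≤ 1 :=
        Real.exp_le_one_iff.mpr (by nlinarith [hx.2])
      nlinarith [Real.exp_pos (-k * (T - x))]
    rw [integral_rpow (Or.inl hc)] at h1
    have h2 : T ^ (c+1) ≤ 2 := by
      calc T ^ (c+1) ≤ 2 ^ (c+1) := Real.rpow_le_rpow hT.le hT2 hc1.le
        _ ≤ 2 ^ (1:ℝ) := Real.rpow_le_rpow_of_exponent_le one_le_two (by linarith)
        _ = 2 := Real.rpow_one 2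
    have h0 : (0:ℝ) ^ (c+1) = 0 := Real.zero_rpow hc1.ne'
    rw [h0] at h1
    calc _ ≤ (T ^ (c+1) - 0)/(c+1) := h1
      _ ≤ 2/(c+1) := by gcongr; linarith
      _ ≤ _ := by linarith
  · push_neg at hT2
    have hhalf : (1:ℝ) ≤ T/2 := by linarith
    have hhpos : (0:ℝ) < T/2 := by linarith
    rw [← intervalIntegral.integral_add_adjacent_intervals (hint 0 (T/2)) (hint (T/2) T)]
    have hA : ∫ x in (0:ℝ)..(T/2), Real.exp (-k * (T - x)) * x ^ c ≤ (1/k)/(c+1) := by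
      have h1 : ∫ x in (0:ℝ)..(T/2), Real.exp (-k * (T - x)) * x ^ c
          ≤ ∫ x in (0:ℝ)..(T/2), Real.exp (-k * (T/2)) * x ^ c := by
        apply intervalIntegral.integral_mono_on hhpos.le (hint 0 (T/2))
          ((intervalIntegrable_rpow' hc).const_mul _)
        intro x hx
        have hrp : 0 ≤ x ^ c := Real.rpow_nonneg hx.1 c
        have he : Real.exp (-k * (T - x)) ≤ Real.exp (-k * (T/2)) := by
          apply Real.exp_le_exp.mpr; nlinarith [hx.2]
        nlinarith
      rw [intervalIntegral.integral_const_mul, integral_rpow (Or.inl hc),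
        Real.zero_rpow hc1.ne'] at h1
      have h2 : (T/2) ^ (c+1) ≤ T/2 := by
        calc (T/2) ^ (c+1) ≤ (T/2) ^ (1:ℝ) :=
              Real.rpow_le_rpow_of_exponent_le hhalf (by linarith)
          _ = T/2 := Real.rpow_one _
      have h3 : Real.exp (-k * (T/2)) * (T/2) ≤ 1/k := exp_mul_le' k (T/2) hk
      have h4 : 0 < Real.exp (-k * (T/2)) := Real.exp_pos _
      calc _ ≤ Real.exp (-k * (T/2)) * (((T/2) ^ (c+1) - 0)/(c+1)) := h1
        _ = (Real.exp (-k * (T/2)) * (T/2) ^ (c+1))/(c+1) := by ring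
        _ ≤ (1/k)/(c+1) := by gcongr ?_ / ?_ <;> nlinarith
    have hB : ∫ x in (T/2)..T, Real.exp (-k * (T - x)) * x ^ c ≤ 1/k := by
      have h1 : ∫ x in (T/2)..T, Real.exp (-k * (T - x)) * x ^ c
          ≤ ∫ x in (T/2)..T, Real.exp (-k * (T - x)) := by
        apply intervalIntegral.integral_mono_on (by linarith) (hint (T/2) T)
          ((contExpSub' k T).intervalIntegrable _ _)
        intro x hx
        have hx1 : (1:ℝ) ≤ x := hhalf.trans hx.1
        have : x ^ c ≤ 1 := Real.rpow_le_one_of_one_le_of_nonpos hx1 hc0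
        nlinarith [Real.exp_pos (-k * (T - x))]
      rw [int_exp_sub' k T _ _ hk.ne'] at h1
      have h2 : Real.exp (-k*(T-T)) ≤ 1 := Real.exp_le_one_iff.mpr (by nlinarith)
      have h3 : 0 < Real.exp (-k*(T-T/2)) := Real.exp_pos _
      calc _ ≤ (Real.exp (-k*(T-T)) - Real.exp (-k*(T-T/2)))/k := h1
        _ ≤ 1/k := by gcongr; linarith
    have h2c : (0:ℝ) ≤ 2/(c+1) := div_nonneg (by norm_num) hc1.le
    linarith

private lemma S4' {c k : ℝ} (hc : 0 < c) (hc1 : c ≤ 1) (hk : 0 < k) {T : ℝ} (hT : 0 ≤ T) :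
    ∫ x in (0:ℝ)..T, Real.exp (-k * x) * x ^ c ≤ 1/k + 4/k^2 := by
  have hint := expIntble' _ (contExpNeg' k) (by linarith : (-1:ℝ) < c)
  have hmaj : IntervalIntegrable
      (fun x => Real.exp (-k * x) + (2/k) * Real.exp (-(k/2) * x))
      MeasureTheory.volume 0 T := by
    apply Continuous.intervalIntegrable
    continuity
  have h1 : ∫ x in (0:ℝ)..T, Real.exp (-k * x) * x ^ c
      ≤ ∫ x in (0:ℝ)..T, (Real.exp (-k * x) + (2/k) * Real.exp (-(k/2) * x)) := by
    apply intervalIntegral.integral_mono_on hT (hint 0 T) hmaj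
    intro x hx
    have hx0 : 0 ≤ x := hx.1
    have hrp : x ^ c ≤ 1 + x := by
      by_cases hx1 : x ≤ 1
      · have := Real.rpow_le_one hx0 hx1 hc.le; linarith
      · push_neg at hx1
        have : x ^ c ≤ x ^ (1:ℝ) := Real.rpow_le_rpow_of_exponent_le hx1.le hc1
        rw [Real.rpow_one] at this; linarith
    have hepos : 0 < Real.exp (-k * x) := Real.exp_pos _
    have hsplit : Real.exp (-k * x) = Real.exp (-(k/2) * x) * Real.exp (-(k/2) * x) := by
      rw [← Real.exp_add]; ring_nf
    have hml : Real.exp (-(k/2) * x) * x ≤ 1/(k/2) := exp_mul_le' (k/2) x (by linarith)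
    have he2 : Real.exp (-(k/2) * x) ≤ 1 := Real.exp_le_one_iff.mpr (by nlinarith)
    have he2p : 0 < Real.exp (-(k/2) * x) := Real.exp_pos _
    have hxx : Real.exp (-k * x) * x ≤ (2/k) * Real.exp (-(k/2) * x) := by
      rw [hsplit]
      have hstep : Real.exp (-(k/2) * x) * (Real.exp (-(k/2) * x) * x)
          ≤ Real.exp (-(k/2) * x) * (1/(k/2)) := by nlinarith
      calc Real.exp (-(k/2) * x) * Real.exp (-(k/2) * x) * x
          = Real.exp (-(k/2) * x) * (Real.exp (-(k/2) * x) * x) := by ring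
        _ ≤ Real.exp (-(k/2) * x) * (1/(k/2)) := hstep
        _ = (2/k) * Real.exp (-(k/2) * x) := by
            rw [show (1:ℝ)/(k/2) = 2/k by field_simp]; ring
    nlinarith
  rw [intervalIntegral.integral_add ((contExpNeg' k).intervalIntegrable 0 T)
    (((contExpNeg' (k/2)).intervalIntegrable 0 T).const_mul _),
    int_exp_neg' k 0 T hk.ne', intervalIntegral.integral_const_mul,
    int_exp_neg' (k/2) 0 T (by positivity : (k/2) ≠ 0)] at h1
  have e0 : Real.exp (-k*0) = 1 := by norm_num
  have e0' : Real.exp (-(k/2)*0) = 1 := by norm_num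
  rw [e0, e0'] at h1
  have b1 : (1 - Real.exp (-k*T))/k ≤ 1/k := by
    gcongr <;> linarith [Real.exp_pos (-k*T)]
  have b2 : (1 - Real.exp (-(k/2)*T))/(k/2) ≤ 1/(k/2) := by
    gcongr <;> linarith [Real.exp_pos (-(k/2)*T)]
  have b3 : (2/k) * ((1 - Real.exp (-(k/2)*T))/(k/2)) ≤ (2/k) * (1/(k/2)) :=
    mul_le_mul_of_nonneg_left b2 (by positivity)
  have b4 : (2/k) * ((1:ℝ)/(k/2)) = 4/k^2 := by field_simp; ring
  linarith

private lemma II_congr' {f g : ℝ → ℝ} {a b : ℝ}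
    (h : IntervalIntegrable f MeasureTheory.volume a b)
    (heq : Set.EqOn g f (Set.uIoc a b)) :
    IntervalIntegrable g MeasureTheory.volume a b := by
  rw [intervalIntegrable_iff] at h ⊢
  exact h.congr_fun (fun x hx => (heq hx).symm) measurableSet_uIoc

private lemma intble_abs_rpow' {r : ℝ} (hr : -1 < r) (u a b : ℝ) :
    IntervalIntegrable (fun v => |u - v| ^ r) MeasureTheory.volume a b := by
  have h1 : ∀ c : ℝ, c ≤ u → IntervalIntegrable (fun v => |u - v| ^ r)
      MeasureTheory.volume c u := by
    intro c hc
    have base := (intervalIntegrable_rpow' hr (a := u - c) (b := u - u)).comp_sub_left u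
    simp only [sub_sub_cancel, sub_self, sub_zero] at base
    apply II_congr' base
    intro v hv
    rw [Set.uIoc_of_le hc] at hv
    show |u - v| ^ r = (u - v) ^ r
    rw [abs_of_nonneg (by linarith [hv.2] : (0:ℝ) ≤ u - v)]
  have h2 : ∀ d : ℝ, u ≤ d → IntervalIntegrable (fun v => |u - v| ^ r)
      MeasureTheory.volume u d := by
    intro d hd
    have base := (intervalIntegrable_rpow' hr (a := u - u) (b := d - u)).comp_sub_right u
    simp only [sub_self, zero_add, sub_add_cancel] at base
    apply II_congr' base
    intro v hv
    rw [Set.uIoc_of_le hd] at hv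
    show |u - v| ^ r = (v - u) ^ r
    rw [abs_sub_comm, abs_of_nonneg (by linarith [hv.1.le] : (0:ℝ) ≤ v - u)]
  have ha : IntervalIntegrable (fun v => |u - v| ^ r) MeasureTheory.volume a u := by
    rcases le_total a u with h | h
    · exact h1 a h
    · exact (h2 a h).symm
  have hb : IntervalIntegrable (fun v => |u - v| ^ r) MeasureTheory.volume u b := by
    rcases le_total u b with h | h
    · exact h2 b h
    · exact (h1 b h).symm
  exact ha.trans hb

/-- The variance `E[Z_T²] = ‖k_T‖²_H` of the Wiener integral
`Z_T = ∫₀^T e^{−k(T−s)} dG_s` is bounded uniformly in `T`. -/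
theorem variance_ZT_uniformly_bounded
    (β : ℝ) (hβ : β ∈ Set.Ioo (1/2 : ℝ) 1)
    (Cβ Cβ' : ℝ) (hCβ : 0 < Cβ) (hCβ' : 0 ≤ Cβ')
    (D : ℝ → ℝ → ℝ) (hD : Measurable (Function.uncurry D))
    (hDbound : ∀ t s : ℝ, 0 < t → 0 < s → t ≠ s →
      |D t s - Cβ * |t - s| ^ (2 * β - 2)| ≤ Cβ' * (t * s) ^ (β - 1))
    (k : ℝ) (hk : 0 < k) :
    ∃ C : ℝ, ∀ T : ℝ, 0 < T →
      |∫ u in (0:ℝ)..T, ∫ v in (0:ℝ)..T,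
        Real.exp (-k * (T - u)) * Real.exp (-k * (T - v)) * D u v| ≤ C := by
  obtain ⟨hβ1, hβ2⟩ := hβ
  have hγ : -1 < 2*β - 2 := by linarith
  have hγ0 : 2*β - 2 ≤ 0 := by linarith
  have hγ1 : (0:ℝ) < 2*β - 2 + 1 := by linarith
  have hδ : -1 < β - 1 := by linarith
  have hδ0 : β - 1 ≤ 0 := by linarith
  set K₁ : ℝ := 1/(2*β-2+1) + 1/k with hK₁
  set K₂ : ℝ := 1/k + 4/k^2 with hK₂
  set M : ℝ := 2/(β-1+1) + 1/k + (1/k)/(β-1+1) with hM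
  have hK₁0 : 0 ≤ K₁ :=
    add_nonneg (one_div_nonneg.mpr hγ1.le) (one_div_nonneg.mpr hk.le)
  have hM0 : 0 ≤ M := by
    have h1 : (0:ℝ) ≤ 2/(β-1+1) := div_nonneg (by norm_num) (by linarith)
    have h2 : (0:ℝ) ≤ 1/k := one_div_nonneg.mpr hk.le
    have h3 : (0:ℝ) ≤ (1/k)/(β-1+1) := div_nonneg h2 (by linarith)
    exact add_nonneg (add_nonneg h1 h2) h3
  refine ⟨Cβ*K₁*(1/k) + (Cβ/(2*β-2+1))*K₂ + (Cβ'*M)*M, fun T hT => ?_⟩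
  have hEc : Continuous (fun x : ℝ => Real.exp (-k * (T - x))) := contExpSub' k T
  have hE1 : ∀ x : ℝ, x ≤ T → Real.exp (-k * (T - x)) ≤ 1 := fun x hx =>
    Real.exp_le_one_iff.mpr (by nlinarith)
  have hEpos : ∀ x : ℝ, 0 < Real.exp (-k * (T - x)) := fun x => Real.exp_pos _
  have hIδ : ∀ a b : ℝ, IntervalIntegrable
      (fun v => Real.exp (-k*(T-v)) * v ^ (β-1)) volume a b :=
    expIntble' _ hEc hδ
  have hIabs : ∀ u a b : ℝ, IntervalIntegrable
      (fun v => Real.exp (-k*(T-v)) * |u - v| ^ (2*β-2)) volume a b := fun u a b =>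
    (intble_abs_rpow' hγ u a b).continuousOn_mul hEc.continuousOn
  set h : ℝ → ℝ := fun u => Cβ*K₁ * Real.exp (-k*(T-u))
    + (Cβ/(2*β-2+1)) * (Real.exp (-k*(T-u)) * (T-u)^(2*β-2+1))
    + (Cβ'*M) * (Real.exp (-k*(T-u)) * u^(β-1)) with hh
  -- inner bound
  have inner : ∀ u ∈ Set.Ioc (0:ℝ) T,
      |∫ v in (0:ℝ)..T, Real.exp (-k*(T-u)) * Real.exp (-k*(T-v)) * D u v| ≤ h u := by
    intro u hu
    obtain ⟨hu0, huT⟩ := hu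
    have hbndint : IntervalIntegrable (fun v =>
        (Cβ * Real.exp (-k*(T-u))) * (Real.exp (-k*(T-v)) * |u - v| ^ (2*β-2))
        + (Cβ' * (Real.exp (-k*(T-u)) * u^(β-1))) * (Real.exp (-k*(T-v)) * v^(β-1)))
        volume 0 T := ((hIabs u 0 T).const_mul _).add ((hIδ 0 T).const_mul _)
    have hstep1 : |∫ v in (0:ℝ)..T, Real.exp (-k*(T-u)) * Real.exp (-k*(T-v)) * D u v|
        ≤ |∫ v in (0:ℝ)..T,
          ((Cβ * Real.exp (-k*(T-u))) * (Real.exp (-k*(T-v)) * |u - v| ^ (2*β-2))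
          + (Cβ' * (Real.exp (-k*(T-u)) * u^(β-1))) * (Real.exp (-k*(T-v)) * v^(β-1)))| := by
      have hae : ∀ᵐ (v : ℝ) ∂(volume.restrict (Set.uIoc (0:ℝ) T)),
          ‖Real.exp (-k*(T-u)) * Real.exp (-k*(T-v)) * D u v‖ ≤
          (Cβ * Real.exp (-k*(T-u))) * (Real.exp (-k*(T-v)) * |u - v| ^ (2*β-2))
          + (Cβ' * (Real.exp (-k*(T-u)) * u^(β-1))) * (Real.exp (-k*(T-v)) * v^(β-1)) := ?_
      · have hres := intervalIntegral.norm_integral_le_abs_of_norm_le hae hbndint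
        rwa [Real.norm_eq_abs] at hres
      have hne : ∀ᵐ (v : ℝ) ∂(volume.restrict (Set.uIoc (0:ℝ) T)), v ≠ u := by
        apply ae_restrict_of_ae
        refine ae_iff.mpr ?_
        simp only [ne_eq, not_not, Set.setOf_eq_eq_singleton]
        exact Real.volume_singleton
      filter_upwards [ae_restrict_mem measurableSet_uIoc, hne] with v hv hvne
      rw [Set.uIoc_of_le hT.le] at hv
      obtain ⟨hv0, hvT⟩ := hv
      have hDb := hDbound u v hu0 hv0 (Ne.symm hvne)
      have habsD : |D u v| ≤ Cβ * |u-v| ^ (2*β-2) + Cβ' * (u*v) ^ (β-1) := by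
        have h1 : |D u v| ≤ |D u v - Cβ * |u-v| ^ (2*β-2)| + |Cβ * |u-v| ^ (2*β-2)| := by
          calc |D u v| = |(D u v - Cβ * |u-v| ^ (2*β-2)) + Cβ * |u-v| ^ (2*β-2)| := by
                rw [sub_add_cancel]
            _ ≤ _ := abs_add_le _ _
        have h2 : |Cβ * |u-v| ^ (2*β-2)| = Cβ * |u-v| ^ (2*β-2) :=
          abs_of_nonneg (mul_nonneg hCβ.le (Real.rpow_nonneg (abs_nonneg _) _))
        linarith
      have hmulr : (u*v) ^ (β-1) = u^(β-1) * v^(β-1) := Real.mul_rpow hu0.le hv0.le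
      rw [hmulr] at habsD
      rw [Real.norm_eq_abs, abs_mul, abs_mul, abs_of_pos (hEpos u), abs_of_pos (hEpos v)]
      calc Real.exp (-k*(T-u)) * Real.exp (-k*(T-v)) * |D u v|
          ≤ Real.exp (-k*(T-u)) * Real.exp (-k*(T-v))
            * (Cβ * |u-v| ^ (2*β-2) + Cβ' * (u^(β-1) * v^(β-1))) := by
            apply mul_le_mul_of_nonneg_left habsD (by positivity)
        _ = _ := by ring
    have hstep2 : |∫ v in (0:ℝ)..T,
        ((Cβ * Real.exp (-k*(T-u))) * (Real.exp (-k*(T-v)) * |u - v| ^ (2*β-2))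
        + (Cβ' * (Real.exp (-k*(T-u)) * u^(β-1))) * (Real.exp (-k*(T-v)) * v^(β-1)))|
        = ∫ v in (0:ℝ)..T,
        ((Cβ * Real.exp (-k*(T-u))) * (Real.exp (-k*(T-v)) * |u - v| ^ (2*β-2))
        + (Cβ' * (Real.exp (-k*(T-u)) * u^(β-1))) * (Real.exp (-k*(T-v)) * v^(β-1))) := by
      apply abs_of_nonneg
      apply intervalIntegral.integral_nonneg hT.le
      intro v hv
      refine add_nonneg (mul_nonneg (mul_nonneg hCβ.le (hEpos u).le)
        (mul_nonneg (hEpos v).le (Real.rpow_nonneg (abs_nonneg _) _)))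
        (mul_nonneg (mul_nonneg hCβ' (mul_nonneg (hEpos u).le
          (Real.rpow_nonneg hu0.le _)))
        (mul_nonneg (hEpos v).le (Real.rpow_nonneg hv.1 _)))
    have hsplit3 : ∫ v in (0:ℝ)..T,
        ((Cβ * Real.exp (-k*(T-u))) * (Real.exp (-k*(T-v)) * |u - v| ^ (2*β-2))
        + (Cβ' * (Real.exp (-k*(T-u)) * u^(β-1))) * (Real.exp (-k*(T-v)) * v^(β-1)))
        = (Cβ * Real.exp (-k*(T-u)))
            * (∫ v in (0:ℝ)..T, Real.exp (-k*(T-v)) * |u - v| ^ (2*β-2))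
        + (Cβ' * (Real.exp (-k*(T-u)) * u^(β-1)))
            * (∫ v in (0:ℝ)..T, Real.exp (-k*(T-v)) * v^(β-1)) := by
      rw [intervalIntegral.integral_add ((hIabs u 0 T).const_mul _) ((hIδ 0 T).const_mul _),
        intervalIntegral.integral_const_mul, intervalIntegral.integral_const_mul]
    have hI2 : ∫ v in (0:ℝ)..T, Real.exp (-k*(T-v)) * v^(β-1) ≤ M := S3' hδ hδ0 hk hT
    have hI1 : ∫ v in (0:ℝ)..T, Real.exp (-k*(T-v)) * |u - v| ^ (2*β-2)
        ≤ K₁ + (T-u)^(2*β-2+1)/(2*β-2+1) := by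
      rw [← intervalIntegral.integral_add_adjacent_intervals (hIabs u 0 u) (hIabs u u T)]
      have hA : ∫ v in (0:ℝ)..u, Real.exp (-k*(T-v)) * |u - v| ^ (2*β-2) ≤ K₁ := by
        have hcongr : ∫ v in (0:ℝ)..u, Real.exp (-k*(T-v)) * |u - v| ^ (2*β-2)
            = ∫ v in (0:ℝ)..u, Real.exp (-k*(T-v)) * (u - v) ^ (2*β-2) := by
          apply intervalIntegral.integral_congr
          intro v hv
          rw [Set.uIcc_of_le hu0.le] at hv
          show Real.exp (-k*(T-v)) * |u - v| ^ (2*β-2)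
            = Real.exp (-k*(T-v)) * (u - v) ^ (2*β-2)
          rw [abs_of_nonneg (by linarith [hv.2] : (0:ℝ) ≤ u - v)]
        rw [hcongr]
        have hFint : IntervalIntegrable
            (fun v => Real.exp (-k*(u - v)) * (u - v) ^ (2*β-2)) volume 0 u := by
          have := (expIntble' _ (contExpNeg' k) hγ u 0).comp_sub_left u
          simpa using this
        have hGint : IntervalIntegrable
            (fun v => Real.exp (-k*(T-v)) * (u - v) ^ (2*β-2)) volume 0 u := by
          apply II_congr' (hIabs u 0 u)
          intro v hv
          rw [Set.uIoc_of_le hu0.le] at hv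
          show Real.exp (-k*(T-v)) * (u - v) ^ (2*β-2)
            = Real.exp (-k*(T-v)) * |u - v| ^ (2*β-2)
          rw [abs_of_nonneg (by linarith [hv.2] : (0:ℝ) ≤ u - v)]
        have hmono : ∫ v in (0:ℝ)..u, Real.exp (-k*(T-v)) * (u - v) ^ (2*β-2)
            ≤ ∫ v in (0:ℝ)..u, Real.exp (-k*(u - v)) * (u - v) ^ (2*β-2) := by
          apply intervalIntegral.integral_mono_on hu0.le hGint hFint
          intro v hv
          have hle : Real.exp (-k*(T-v)) ≤ Real.exp (-k*(u-v)) :=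
            Real.exp_le_exp.mpr (by nlinarith [hv.1, hv.2])
          exact mul_le_mul_of_nonneg_right hle
            (Real.rpow_nonneg (by linarith [hv.2]) _)
        have hsubeq : ∫ v in (0:ℝ)..u, Real.exp (-k*(u - v)) * (u - v) ^ (2*β-2)
            = ∫ x in (0:ℝ)..u, Real.exp (-k*x) * x ^ (2*β-2) := by
          have := intervalIntegral.integral_comp_sub_left (a := 0) (b := u)
            (fun x => Real.exp (-k*x) * x ^ (2*β-2)) u
          simpa using this
        calc _ ≤ _ := hmono
          _ = _ := hsubeq
          _ ≤ K₁ := S2' hγ hγ0 hk hu0.le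
      have hB : ∫ v in u..T, Real.exp (-k*(T-v)) * |u - v| ^ (2*β-2)
          ≤ (T-u)^(2*β-2+1)/(2*β-2+1) := by
        have hcongr : ∫ v in u..T, Real.exp (-k*(T-v)) * |u - v| ^ (2*β-2)
            = ∫ v in u..T, Real.exp (-k*(T-v)) * (v - u) ^ (2*β-2) := by
          apply intervalIntegral.integral_congr
          intro v hv
          rw [Set.uIcc_of_le huT] at hv
          show Real.exp (-k*(T-v)) * |u - v| ^ (2*β-2)
            = Real.exp (-k*(T-v)) * (v - u) ^ (2*β-2)
          rw [abs_sub_comm, abs_of_nonneg (by linarith [hv.1] : (0:ℝ) ≤ v - u)]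
        have hrint : IntervalIntegrable (fun v => (v - u) ^ (2*β-2)) volume u T := by
          have := (intervalIntegrable_rpow' hγ (a := 0) (b := T - u)).comp_sub_right u
          simpa using this
        have hGint : IntervalIntegrable
            (fun v => Real.exp (-k*(T-v)) * (v - u) ^ (2*β-2)) volume u T := by
          apply II_congr' (hIabs u u T)
          intro v hv
          rw [Set.uIoc_of_le huT] at hv
          show Real.exp (-k*(T-v)) * (v - u) ^ (2*β-2)
            = Real.exp (-k*(T-v)) * |u - v| ^ (2*β-2)
          rw [abs_sub_comm, abs_of_nonneg (by linarith [hv.1.le] : (0:ℝ) ≤ v - u)]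
        have hmono : ∫ v in u..T, Real.exp (-k*(T-v)) * (v - u) ^ (2*β-2)
            ≤ ∫ v in u..T, (v - u) ^ (2*β-2) := by
          apply intervalIntegral.integral_mono_on huT hGint hrint
          intro v hv
          have h1 := hE1 v hv.2
          have h2 : 0 ≤ (v - u) ^ (2*β-2) := Real.rpow_nonneg (by linarith [hv.1]) _
          nlinarith [hEpos v]
        have hsubeq : ∫ v in u..T, (v - u) ^ (2*β-2)
            = (T-u)^(2*β-2+1)/(2*β-2+1) := by
          rw [intervalIntegral.integral_comp_sub_right (fun x => x ^ (2*β-2)) u, sub_self,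
            integral_rpow (Or.inl hγ), Real.zero_rpow (by linarith : 2*β-2+1 ≠ 0)]
          ring
        rw [hcongr]
        exact hmono.trans_eq hsubeq
      exact add_le_add hA hB
    have hc₁0 : 0 ≤ Cβ * Real.exp (-k*(T-u)) := mul_nonneg hCβ.le (hEpos u).le
    have hc₂0 : 0 ≤ Cβ' * (Real.exp (-k*(T-u)) * u^(β-1)) :=
      mul_nonneg hCβ' (mul_nonneg (hEpos u).le (Real.rpow_nonneg hu0.le _))
    calc |∫ v in (0:ℝ)..T, Real.exp (-k*(T-u)) * Real.exp (-k*(T-v)) * D u v|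
        ≤ _ := hstep1.trans_eq hstep2
      _ = _ := hsplit3
      _ ≤ (Cβ * Real.exp (-k*(T-u))) * (K₁ + (T-u)^(2*β-2+1)/(2*β-2+1))
          + (Cβ' * (Real.exp (-k*(T-u)) * u^(β-1))) * M :=
        add_le_add (mul_le_mul_of_nonneg_left hI1 hc₁0)
          (mul_le_mul_of_nonneg_left hI2 hc₂0)
      _ = h u := by rw [hh]; ring
  -- outer bound
  have hhint : IntervalIntegrable h volume 0 T := by
    rw [hh]
    refine IntervalIntegrable.add (IntervalIntegrable.add ?_ ?_) ?_
    · exact (hEc.intervalIntegrable 0 T).const_mul _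
    · refine (Continuous.intervalIntegrable ?_ 0 T).const_mul _
      exact hEc.mul ((continuous_const.sub continuous_id).rpow_const
        (fun x => Or.inr hγ1.le))
    · exact (hIδ 0 T).const_mul _
  have houter : |∫ u in (0:ℝ)..T, ∫ v in (0:ℝ)..T,
      Real.exp (-k * (T - u)) * Real.exp (-k * (T - v)) * D u v|
      ≤ |∫ u in (0:ℝ)..T, h u| := by
    have hae2 : ∀ᵐ (u : ℝ) ∂(volume.restrict (Set.uIoc (0:ℝ) T)),
        ‖∫ v in (0:ℝ)..T,
          Real.exp (-k * (T - u)) * Real.exp (-k * (T - v)) * D u v‖ ≤ h u := by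
      filter_upwards [ae_restrict_mem measurableSet_uIoc] with u hu
      rw [Set.uIoc_of_le hT.le] at hu
      rw [Real.norm_eq_abs]
      exact inner u hu
    have hres := intervalIntegral.norm_integral_le_abs_of_norm_le hae2 hhint
    rwa [Real.norm_eq_abs] at hres
  have hnn : 0 ≤ ∫ u in (0:ℝ)..T, h u := by
    apply intervalIntegral.integral_nonneg hT.le
    intro u hu
    rw [hh]
    refine add_nonneg (add_nonneg ?_ ?_) ?_
    · exact mul_nonneg (mul_nonneg hCβ.le hK₁0) (hEpos u).le
    · exact mul_nonneg (div_nonneg hCβ.le hγ1.le)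
        (mul_nonneg (hEpos u).le (Real.rpow_nonneg (by linarith [hu.2]) _))
    · exact mul_nonneg (mul_nonneg hCβ' hM0)
        (mul_nonneg (hEpos u).le (Real.rpow_nonneg hu.1 _))
  have hcont2 : Continuous (fun u : ℝ => Real.exp (-k*(T-u)) * (T-u)^(2*β-2+1)) :=
    hEc.mul ((continuous_const.sub continuous_id).rpow_const (fun x => Or.inr hγ1.le))
  have hsum : ∫ u in (0:ℝ)..T, h u
      = Cβ*K₁ * (∫ u in (0:ℝ)..T, Real.exp (-k*(T-u)))
      + (Cβ/(2*β-2+1)) * (∫ u in (0:ℝ)..T, Real.exp (-k*(T-u)) * (T-u)^(2*β-2+1))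
      + (Cβ'*M) * (∫ u in (0:ℝ)..T, Real.exp (-k*(T-u)) * u^(β-1)) := by
    rw [hh]
    rw [intervalIntegral.integral_add
        (IntervalIntegrable.add ((hEc.intervalIntegrable 0 T).const_mul _)
          ((hcont2.intervalIntegrable 0 T).const_mul _))
        ((hIδ 0 T).const_mul _),
      intervalIntegral.integral_add ((hEc.intervalIntegrable 0 T).const_mul _)
        ((hcont2.intervalIntegrable 0 T).const_mul _),
      intervalIntegral.integral_const_mul, intervalIntegral.integral_const_mul,
      intervalIntegral.integral_const_mul]
  have hb1 : ∫ u in (0:ℝ)..T, Real.exp (-k*(T-u)) ≤ 1/k := by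
    rw [int_exp_sub' k T 0 T hk.ne']
    have h1 : Real.exp (-k*(T-T)) = 1 := by simp
    have h2 : 0 < Real.exp (-k*(T-0)) := Real.exp_pos _
    rw [h1]
    gcongr
    linarith
  have hb2 : ∫ u in (0:ℝ)..T, Real.exp (-k*(T-u)) * (T-u)^(2*β-2+1) ≤ K₂ := by
    have heq := intervalIntegral.integral_comp_sub_left (a := 0) (b := T)
      (fun x => Real.exp (-k*x) * x ^ (2*β-2+1)) T
    simp only [sub_self, sub_zero] at heq
    rw [heq]
    exact S4' hγ1 (by linarith) hk hT.le
  have hb3 : ∫ u in (0:ℝ)..T, Real.exp (-k*(T-u)) * u^(β-1) ≤ M := S3' hδ hδ0 hk hT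
  calc |∫ u in (0:ℝ)..T, ∫ v in (0:ℝ)..T,
      Real.exp (-k * (T - u)) * Real.exp (-k * (T - v)) * D u v|
      ≤ |∫ u in (0:ℝ)..T, h u| := houter
    _ = ∫ u in (0:ℝ)..T, h u := abs_of_nonneg hnn
    _ = _ := hsum
    _ ≤ Cβ*K₁*(1/k) + (Cβ/(2*β-2+1))*K₂ + (Cβ'*M)*M := by
      refine add_le_add (add_le_add ?_ ?_) ?_
      · exact mul_le_mul_of_nonneg_left hb1 (mul_nonneg hCβ.le hK₁0)
      · exact mul_le_mul_of_nonneg_left hb2 (div_nonneg hCβ.le hγ1.le)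
      · exact mul_le_mul_of_nonneg_left hb3 (mul_nonneg hCβ' hM0)
end

section
/- Let k > 0. Define l_T(s) := (1/k)(1 − e^{−k(T−s)}) and n_T(s) := (1/(2k))(e^{−k(2T−s)} − 1) for s ∈ [0,T]. There exists a constant C, depending only on k, β, C_β, C'_β, such that for all T ≥ 1, |∥l_T∥²_H| ≤ C T^{2β} and |∥n_T∥²_H| ≤ C T^{2β}. -/
open MeasureTheory

private lemma abs_rpow_helper {β T t : ℝ} (hβ1 : 1/2 < β) (hβ2 : β < 1)
    (ht : t ∈ Set.Ioc (0:ℝ) T) :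
    IntegrableOn (fun s => |t - s| ^ (2*β-2)) (Set.Ioc 0 T) ∧
      ∫ s in Set.Ioc (0:ℝ) T, |t - s| ^ (2*β-2) ≤ 2 * T ^ (2*β-1) / (2*β-1) := by
  obtain ⟨ht0, htT⟩ := ht
  have hT0 : (0:ℝ) < T := lt_of_lt_of_le ht0 htT
  have hε : (-1:ℝ) < 2*β-2 := by linarith
  have hb1 : (0:ℝ) < 2*β-1 := by linarith
  have i1' : IntervalIntegrable (fun x : ℝ => (t - x) ^ (2*β-2)) volume 0 t := by
    have h := (intervalIntegral.intervalIntegrable_rpow' (a := 0) (b := t) hε).comp_sub_left t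
    simpa using h.symm
  have eq1 : Set.EqOn (fun x : ℝ => (t - x) ^ (2*β-2)) (fun s => |t - s| ^ (2*β-2))
      (Set.Ioc 0 t) := by
    intro s hs
    simp only
    rw [abs_of_nonneg (by linarith [hs.2] : (0:ℝ) ≤ t - s)]
  have i1 : IntegrableOn (fun s => |t - s| ^ (2*β-2)) (Set.Ioc 0 t) := by
    exact ((intervalIntegrable_iff_integrableOn_Ioc_of_le ht0.le).1 i1').congr_fun eq1
      measurableSet_Ioc
  have i2' : IntervalIntegrable (fun x : ℝ => (x - t) ^ (2*β-2)) volume t T := by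
    have h := (intervalIntegral.intervalIntegrable_rpow' (a := 0) (b := T - t) hε).comp_sub_right t
    simpa using h
  have eq2 : Set.EqOn (fun x : ℝ => (x - t) ^ (2*β-2)) (fun s => |t - s| ^ (2*β-2))
      (Set.Ioc t T) := by
    intro s hs
    simp only
    rw [abs_of_nonpos (by linarith [hs.1] : t - s ≤ 0), neg_sub]
  have i2 : IntegrableOn (fun s => |t - s| ^ (2*β-2)) (Set.Ioc t T) := by
    exact ((intervalIntegrable_iff_integrableOn_Ioc_of_le htT).1 i2').congr_fun eq2
      measurableSet_Ioc
  have hunion : IntegrableOn (fun s => |t - s| ^ (2*β-2)) (Set.Ioc 0 T) := by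
    rw [← Set.Ioc_union_Ioc_eq_Ioc ht0.le htT]; exact i1.union i2
  refine ⟨hunion, ?_⟩
  have e1 : ∫ s in Set.Ioc (0:ℝ) t, |t - s| ^ (2*β-2) = t ^ (2*β-1) / (2*β-1) := by
    rw [← setIntegral_congr_fun measurableSet_Ioc eq1,
      ← intervalIntegral.integral_of_le ht0.le,
      intervalIntegral.integral_comp_sub_left (fun x : ℝ => x ^ (2*β-2)) t]
    simp only [sub_self, sub_zero]
    rw [integral_rpow (Or.inl hε), Real.zero_rpow (by linarith : 2*β-2+1 ≠ 0), sub_zero,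
      show 2*β-2+1 = 2*β-1 by ring]
  have e2 : ∫ s in Set.Ioc t T, |t - s| ^ (2*β-2) = (T - t) ^ (2*β-1) / (2*β-1) := by
    rw [← setIntegral_congr_fun measurableSet_Ioc eq2,
      ← intervalIntegral.integral_of_le htT,
      intervalIntegral.integral_comp_sub_right (fun x : ℝ => x ^ (2*β-2)) t]
    simp only [sub_self]
    rw [integral_rpow (Or.inl hε), Real.zero_rpow (by linarith : 2*β-2+1 ≠ 0), sub_zero,
      show 2*β-2+1 = 2*β-1 by ring]
  have esplit : ∫ s in Set.Ioc (0:ℝ) T, |t - s| ^ (2*β-2)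
      = (∫ s in Set.Ioc (0:ℝ) t, |t - s| ^ (2*β-2)) + ∫ s in Set.Ioc t T, |t - s| ^ (2*β-2) := by
    rw [← Set.Ioc_union_Ioc_eq_Ioc ht0.le htT,
      setIntegral_union (Set.Ioc_disjoint_Ioc_of_le le_rfl) measurableSet_Ioc i1 i2]
  rw [esplit, e1, e2]
  have h1 : t ^ (2*β-1) ≤ T ^ (2*β-1) := Real.rpow_le_rpow ht0.le htT hb1.le
  have h2 : (T - t) ^ (2*β-1) ≤ T ^ (2*β-1) :=
    Real.rpow_le_rpow (by linarith) (by linarith) hb1.le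
  rw [← add_div]
  rw [div_le_div_iff₀ hb1 hb1]
  nlinarith [h1, h2]

private lemma key_bound {β Cβ Cβ' : ℝ} (hβ1 : 1/2 < β) (hβ2 : β < 1)
    (hCβ : 0 < Cβ) (hCβ' : 0 ≤ Cβ') {D : ℝ → ℝ → ℝ}
    (hDb : ∀ t s : ℝ, 0 < t → 0 < s → t ≠ s →
      |D t s| ≤ Cβ * |t - s| ^ (2*β-2) + Cβ' * (t*s) ^ (β-1))
    {T : ℝ} (hT : 1 ≤ T) {M : ℝ} (hM : 0 ≤ M) {w : ℝ → ℝ}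
    (hw : ∀ s ∈ Set.Ioc (0:ℝ) T, |w s| ≤ M) :
    |∫ r₁ in Set.Ioc (0:ℝ) T, ∫ r₂ in Set.Ioc (0:ℝ) T, w r₁ * w r₂ * D r₁ r₂|
      ≤ M^2 * (2*Cβ/(2*β-1) + Cβ'/β^2) * T ^ (2*β) := by
  have hT0 : (0:ℝ) < T := lt_of_lt_of_le one_pos hT
  have hb0 : (0:ℝ) < β := by linarith
  have hb1 : (0:ℝ) < 2*β-1 := by linarith
  have hδ : (-1:ℝ) < β-1 := by linarith
  have hpow_int : IntegrableOn (fun s : ℝ => s ^ (β-1)) (Set.Ioc 0 T) := by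
    rw [← intervalIntegrable_iff_integrableOn_Ioc_of_le hT0.le]
    exact intervalIntegral.intervalIntegrable_rpow' hδ
  have hpow_val : ∫ s in Set.Ioc (0:ℝ) T, s ^ (β-1) = T ^ β / β := by
    rw [← intervalIntegral.integral_of_le hT0.le, integral_rpow (Or.inl hδ),
      Real.zero_rpow (by linarith : β-1+1 ≠ 0), sub_zero, show β-1+1 = β by ring]
  set A : ℝ := 2 * T ^ (2*β-1) / (2*β-1) with hA
  set B : ℝ := T ^ β / β with hB
  have hB0 : 0 ≤ B := div_nonneg (Real.rpow_nonneg hT0.le _) hb0.le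
  -- inner bound
  have inner_bound : ∀ r₁ ∈ Set.Ioc (0:ℝ) T,
      |∫ r₂ in Set.Ioc (0:ℝ) T, w r₁ * w r₂ * D r₁ r₂|
        ≤ M^2 * (Cβ * A + Cβ' * r₁ ^ (β-1) * B) := by
    intro r₁ hr₁
    obtain ⟨habs_int, habs_le⟩ := abs_rpow_helper hβ1 hβ2 hr₁
    have hr1pow : 0 ≤ r₁ ^ (β-1) := Real.rpow_nonneg hr₁.1.le _
    have hbint1 : Integrable (fun r₂ : ℝ => M^2 * Cβ * |r₁ - r₂| ^ (2*β-2))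
        (volume.restrict (Set.Ioc (0:ℝ) T)) := habs_int.const_mul _
    have hbint2 : Integrable (fun r₂ : ℝ => M^2 * Cβ' * r₁ ^ (β-1) * r₂ ^ (β-1))
        (volume.restrict (Set.Ioc (0:ℝ) T)) := hpow_int.const_mul _
    have hbint : Integrable
        (fun r₂ : ℝ => M^2 * Cβ * |r₁ - r₂| ^ (2*β-2) + M^2 * Cβ' * r₁ ^ (β-1) * r₂ ^ (β-1))
        (volume.restrict (Set.Ioc (0:ℝ) T)) := hbint1.add hbint2
    have step1 : |∫ r₂ in Set.Ioc (0:ℝ) T, w r₁ * w r₂ * D r₁ r₂|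
        ≤ ∫ r₂ in Set.Ioc (0:ℝ) T, |w r₁ * w r₂ * D r₁ r₂| := by
      have h := norm_integral_le_integral_norm (μ := volume.restrict (Set.Ioc (0:ℝ) T))
        (fun r₂ => w r₁ * w r₂ * D r₁ r₂)
      simp only [Real.norm_eq_abs] at h
      exact h
    have hne : ∀ᵐ r₂ ∂(volume.restrict (Set.Ioc (0:ℝ) T)), r₂ ≠ r₁ := by
      refine ae_restrict_of_ae ?_
      rw [ae_iff]
      simpa using measure_singleton (μ := (volume : Measure ℝ)) r₁
    have step2 : ∫ r₂ in Set.Ioc (0:ℝ) T, |w r₁ * w r₂ * D r₁ r₂|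
        ≤ ∫ r₂ in Set.Ioc (0:ℝ) T,
            (M^2 * Cβ * |r₁ - r₂| ^ (2*β-2) + M^2 * Cβ' * r₁ ^ (β-1) * r₂ ^ (β-1)) := by
      refine integral_mono_of_nonneg (Filter.Eventually.of_forall fun r₂ => abs_nonneg _)
        hbint ?_
      filter_upwards [hne, ae_restrict_mem measurableSet_Ioc] with r₂ hner hr₂
      have hw1 := hw r₁ hr₁
      have hw2 := hw r₂ hr₂
      have hDle := hDb r₁ r₂ hr₁.1 hr₂.1 (Ne.symm hner)
      have hmul : (r₁ * r₂) ^ (β-1) = r₁ ^ (β-1) * r₂ ^ (β-1) :=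
        Real.mul_rpow hr₁.1.le hr₂.1.le
      calc |w r₁ * w r₂ * D r₁ r₂| = |w r₁| * |w r₂| * |D r₁ r₂| := by
            rw [abs_mul, abs_mul]
        _ ≤ M * M * |D r₁ r₂| :=
            mul_le_mul (mul_le_mul hw1 hw2 (abs_nonneg _) hM) le_rfl (abs_nonneg _)
              (by positivity)
        _ ≤ M * M * (Cβ * |r₁ - r₂| ^ (2*β-2) + Cβ' * (r₁*r₂) ^ (β-1)) :=
            mul_le_mul_of_nonneg_left hDle (by positivity)
        _ = M^2 * Cβ * |r₁ - r₂| ^ (2*β-2) + M^2 * Cβ' * r₁ ^ (β-1) * r₂ ^ (β-1) := by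
            rw [hmul]; ring
    have step3 : ∫ r₂ in Set.Ioc (0:ℝ) T,
          (M^2 * Cβ * |r₁ - r₂| ^ (2*β-2) + M^2 * Cβ' * r₁ ^ (β-1) * r₂ ^ (β-1))
        ≤ M^2 * (Cβ * A + Cβ' * r₁ ^ (β-1) * B) := by
      rw [integral_add hbint1 hbint2, integral_const_mul, integral_const_mul, hpow_val]
      have h1 : M^2 * Cβ * (∫ r₂ in Set.Ioc (0:ℝ) T, |r₁ - r₂| ^ (2*β-2)) ≤ M^2 * Cβ * A :=
        mul_le_mul_of_nonneg_left habs_le (by positivity)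
      have h2 : M^2 * (Cβ * A + Cβ' * r₁ ^ (β-1) * B)
          = M^2 * Cβ * A + M^2 * Cβ' * r₁ ^ (β-1) * B := by ring
      linarith
    exact (step1.trans step2).trans step3
  -- outer integral
  have G_int2 : IntegrableOn (fun r₁ : ℝ => Cβ' * r₁ ^ (β-1) * B) (Set.Ioc 0 T) := by
    have := (hpow_int.const_mul Cβ').mul_const B
    simpa [IntegrableOn, mul_assoc, mul_comm, mul_left_comm] using this
  have G_int : Integrable (fun r₁ : ℝ => M^2 * (Cβ * A + Cβ' * r₁ ^ (β-1) * B))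
      (volume.restrict (Set.Ioc (0:ℝ) T)) := by
    refine Integrable.const_mul ?_ _
    exact (integrableOn_const measure_Ioc_lt_top.ne).add G_int2
  have outer1 : |∫ r₁ in Set.Ioc (0:ℝ) T, ∫ r₂ in Set.Ioc (0:ℝ) T, w r₁ * w r₂ * D r₁ r₂|
      ≤ ∫ r₁ in Set.Ioc (0:ℝ) T, |∫ r₂ in Set.Ioc (0:ℝ) T, w r₁ * w r₂ * D r₁ r₂| := by
    have h := norm_integral_le_integral_norm (μ := volume.restrict (Set.Ioc (0:ℝ) T))
      (fun r₁ => ∫ r₂ in Set.Ioc (0:ℝ) T, w r₁ * w r₂ * D r₁ r₂)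
    simp only [Real.norm_eq_abs] at h
    exact h
  have outer2 : ∫ r₁ in Set.Ioc (0:ℝ) T, |∫ r₂ in Set.Ioc (0:ℝ) T, w r₁ * w r₂ * D r₁ r₂|
      ≤ ∫ r₁ in Set.Ioc (0:ℝ) T, M^2 * (Cβ * A + Cβ' * r₁ ^ (β-1) * B) := by
    refine integral_mono_of_nonneg (Filter.Eventually.of_forall fun r₁ => abs_nonneg _)
      G_int ?_
    exact (ae_restrict_iff' measurableSet_Ioc).2 (Filter.Eventually.of_forall inner_bound)
  have Gval : ∫ r₁ in Set.Ioc (0:ℝ) T, M^2 * (Cβ * A + Cβ' * r₁ ^ (β-1) * B)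
      = M^2 * (Cβ * A * T + Cβ' * B * B) := by
    rw [integral_const_mul,
      integral_add (integrableOn_const measure_Ioc_lt_top.ne : IntegrableOn (fun _ : ℝ => Cβ * A) (Set.Ioc (0:ℝ) T) volume) G_int2,
      setIntegral_const]
    have hmeas : ((volume : Measure ℝ) (Set.Ioc (0:ℝ) T)).toReal = T := by
      simp [Real.volume_Ioc, hT0.le]
    have h2 : ∫ r₁ in Set.Ioc (0:ℝ) T, Cβ' * r₁ ^ (β-1) * B = Cβ' * B * B := by
      have : (fun r₁ : ℝ => Cβ' * r₁ ^ (β-1) * B) = fun r₁ : ℝ => (Cβ' * B) * r₁ ^ (β-1) := by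
        funext r₁; ring
      rw [this, integral_const_mul, hpow_val]
    rw [measureReal_def, hmeas, h2]
    simp only [smul_eq_mul]
    ring
  have hTT : T ^ (2*β-1) * T = T ^ (2*β) := by
    have h := Real.rpow_add_one hT0.ne' (2*β-1)
    rw [show 2*β-1+1 = 2*β by ring] at h
    exact h.symm
  have hTB : T ^ β * T ^ β = T ^ (2*β) := by
    rw [← Real.rpow_add hT0, show β + β = 2*β by ring]
  have final : M^2 * (Cβ * A * T + Cβ' * B * B)
      = M^2 * (2*Cβ/(2*β-1) + Cβ'/β^2) * T ^ (2*β) := by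
    calc M^2 * (Cβ * A * T + Cβ' * B * B)
        = M^2 * (Cβ * (2/(2*β-1)) * (T ^ (2*β-1) * T)
            + Cβ' * (1/β^2) * (T ^ β * T ^ β)) := by
          rw [hA, hB]; field_simp
      _ = M^2 * (2*Cβ/(2*β-1) + Cβ'/β^2) * T ^ (2*β) := by
          rw [hTT, hTB]; ring
  calc |∫ r₁ in Set.Ioc (0:ℝ) T, ∫ r₂ in Set.Ioc (0:ℝ) T, w r₁ * w r₂ * D r₁ r₂|
      ≤ ∫ r₁ in Set.Ioc (0:ℝ) T, M^2 * (Cβ * A + Cβ' * r₁ ^ (β-1) * B) :=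
        outer1.trans outer2
    _ = M^2 * (Cβ * A * T + Cβ' * B * B) := Gval
    _ = M^2 * (2*Cβ/(2*β-1) + Cβ'/β^2) * T ^ (2*β) := final

/-- Bound (4.10): `|‖l_T‖²_H| ≤ C T^{2β}` and `|‖n_T‖²_H| ≤ C T^{2β}` for all `T ≥ 1`,
where `l_T(s) = (1/k)(1 − e^{−k(T−s)})` and `n_T(s) = (1/(2k))(e^{−k(2T−s)} − 1)`. -/
theorem lT_nT_norm_H_bound
    (β : ℝ) (hβ : β ∈ Set.Ioo (1/2 : ℝ) 1)
    (Cβ Cβ' : ℝ) (hCβ : 0 < Cβ) (hCβ' : 0 ≤ Cβ')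
    (D : ℝ → ℝ → ℝ) (hD : Measurable (Function.uncurry D))
    (hDbound : ∀ t s : ℝ, 0 < t → 0 < s → t ≠ s →
      |D t s - Cβ * |t - s| ^ (2 * β - 2)| ≤ Cβ' * (t * s) ^ (β - 1))
    (k : ℝ) (hk : 0 < k) :
    ∃ C : ℝ, ∀ T : ℝ, 1 ≤ T →
      (|∫ r₁ in (0:ℝ)..T, ∫ r₂ in (0:ℝ)..T,
          ((1/k) * (1 - Real.exp (-k * (T - r₁)))) * ((1/k) * (1 - Real.exp (-k * (T - r₂))))
            * D r₁ r₂| ≤ C * T ^ (2 * β))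
      ∧ (|∫ r₁ in (0:ℝ)..T, ∫ r₂ in (0:ℝ)..T,
          ((1/(2*k)) * (Real.exp (-k * (2*T - r₁)) - 1)) * ((1/(2*k)) * (Real.exp (-k * (2*T - r₂)) - 1))
            * D r₁ r₂| ≤ C * T ^ (2 * β)) := by
  obtain ⟨hβ1, hβ2⟩ := hβ
  have hDb : ∀ t s : ℝ, 0 < t → 0 < s → t ≠ s →
      |D t s| ≤ Cβ * |t - s| ^ (2*β-2) + Cβ' * (t*s) ^ (β-1) := by
    intro t s ht hs hts
    have h := hDbound t s ht hs hts
    have h0 : 0 ≤ Cβ * |t - s| ^ (2*β-2) := by positivity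
    calc |D t s| = |(D t s - Cβ * |t - s| ^ (2*β-2)) + Cβ * |t - s| ^ (2*β-2)| := by ring_nf
      _ ≤ |D t s - Cβ * |t - s| ^ (2*β-2)| + |Cβ * |t - s| ^ (2*β-2)| := abs_add_le _ _
      _ ≤ Cβ' * (t*s) ^ (β-1) + Cβ * |t - s| ^ (2*β-2) := by
          rw [abs_of_nonneg h0]; exact add_le_add_left h _
      _ = Cβ * |t - s| ^ (2*β-2) + Cβ' * (t*s) ^ (β-1) := by ring
  have hM : (0:ℝ) ≤ 1/k := by positivity
  refine ⟨(1/k)^2 * (2*Cβ/(2*β-1) + Cβ'/β^2), fun T hT => ?_⟩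
  have hT0 : (0:ℝ) ≤ T := by linarith
  constructor
  · have hw : ∀ s ∈ Set.Ioc (0:ℝ) T,
        |(1/k) * (1 - Real.exp (-k * (T - s)))| ≤ 1/k := by
      intro s hs
      have hexp_pos : 0 < Real.exp (-k * (T - s)) := Real.exp_pos _
      have hexp_le : Real.exp (-k * (T - s)) ≤ 1 := by
        rw [← Real.exp_zero]
        apply Real.exp_le_exp.2
        nlinarith [hs.2]
      rw [abs_mul, abs_of_nonneg hM, abs_of_nonneg (by linarith : (0:ℝ) ≤ 1 - Real.exp (-k * (T - s)))]
      calc (1/k) * (1 - Real.exp (-k * (T - s))) ≤ (1/k) * 1 :=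
            mul_le_mul_of_nonneg_left (by linarith) hM
        _ = 1/k := mul_one _
    simp only [intervalIntegral.integral_of_le hT0]
    exact key_bound hβ1 hβ2 hCβ hCβ' hDb hT hM hw
  · have hw : ∀ s ∈ Set.Ioc (0:ℝ) T,
        |(1/(2*k)) * (Real.exp (-k * (2*T - s)) - 1)| ≤ 1/k := by
      intro s hs
      have hexp_pos : 0 < Real.exp (-k * (2*T - s)) := Real.exp_pos _
      have hexp_le : Real.exp (-k * (2*T - s)) ≤ 1 := by
        rw [← Real.exp_zero]
        apply Real.exp_le_exp.2
        nlinarith [hs.2]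
      have hM2 : (0:ℝ) ≤ 1/(2*k) := by positivity
      rw [abs_mul, abs_of_nonneg hM2,
        abs_of_nonpos (by linarith : Real.exp (-k * (2*T - s)) - 1 ≤ 0)]
      have hle : -(Real.exp (-k * (2*T - s)) - 1) ≤ 1 := by linarith
      calc (1/(2*k)) * -(Real.exp (-k * (2*T - s)) - 1) ≤ (1/(2*k)) * 1 :=
            mul_le_mul_of_nonneg_left hle hM2
        _ ≤ 1/k := by rw [mul_one]; rw [div_le_div_iff₀ (by positivity) hk]; nlinarith
    simp only [intervalIntegral.integral_of_le hT0]
    exact key_bound hβ1 hβ2 hCβ hCβ' hDb hT hM hw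
end
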